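/- arXiv:2005.09517 — 7 statements merged into one kernel-verified Lean document; each statement's English description precedes it below -/
import Mathlib

section
/- Consider the first-order linear difference equation x_{n+1} = a·x_n + b_n for n ≥ 1 with given initial value x_1. If |a| < 1 and b_n = b·n^γ for some real b and some γ > -1, then x_n = b_{n-1}/(1-a) - (γ·a·b_{n-1}/(n·(1-a)^2))·(1+o(1)) as n → ∞; equivalently, x_n - b·(n-1)^γ/(1-a) = -(γ·a·b·(n-1)^γ/(n·(1-a)^2))·(1+o(1)) as n → ∞. -/
open Filter Asymptotics

/-- If `|u|` satisfies a contraction-type recursion with vanishing error, `u → 0`. -/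
private lemma contract_tendsto_zero {q : ℝ} (hq0 : 0 ≤ q) (hq1 : q < 1)
    {u ε : ℕ → ℝ} (hε : Tendsto ε atTop (nhds 0))
    (h : ∀ᶠ n in atTop, |u (n + 1)| ≤ q * |u n| + ε n) :
    Tendsto u atTop (nhds 0) := by
  rw [NormedAddCommGroup.tendsto_nhds_zero]
  intro ε₀ hε₀
  have hδ : (0:ℝ) < ε₀ * (1 - q) / 2 := by
    have : 0 < 1 - q := by linarith
    positivity
  have hεδ : ∀ᶠ n in atTop, ε n < ε₀ * (1 - q) / 2 := hε.eventually_lt_const hδ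
  obtain ⟨N, hN⟩ := eventually_atTop.mp (h.and hεδ)
  have key : ∀ k, |u (N + k)| ≤ q ^ k * |u N| + ε₀ / 2 := by
    intro k
    induction k with
    | zero => simp; positivity
    | succ k ih =>
      have h1 := (hN (N + k) (Nat.le_add_right _ _)).1
      have h2 := (hN (N + k) (Nat.le_add_right _ _)).2
      have habs : (0:ℝ) ≤ |u N| := abs_nonneg _
      have hqk : (0:ℝ) ≤ q ^ k := pow_nonneg hq0 k
      have heq : N + (k + 1) = (N + k) + 1 := by omega
      rw [heq]
      calc |u ((N + k) + 1)| ≤ q * |u (N + k)| + ε (N + k) := h1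
        _ ≤ q * (q ^ k * |u N| + ε₀ / 2) + ε₀ * (1 - q) / 2 := by
            have := mul_le_mul_of_nonneg_left ih hq0
            linarith
        _ ≤ q ^ (k + 1) * |u N| + ε₀ / 2 := by
            have : q ^ (k + 1) = q * q ^ k := by ring
            nlinarith
  have hpow : Tendsto (fun k => q ^ k * |u N|) atTop (nhds 0) := by
    simpa using (tendsto_pow_atTop_nhds_zero_of_lt_one hq0 hq1).mul_const |u N|
  have hpow' : ∀ᶠ k in atTop, q ^ k * |u N| < ε₀ / 2 :=
    hpow.eventually_lt_const (by linarith)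
  obtain ⟨K, hK⟩ := eventually_atTop.mp hpow'
  filter_upwards [eventually_ge_atTop (N + K)] with n hn
  have hnk : n = N + (n - N) := by omega
  have hk : K ≤ n - N := by omega
  rw [Real.norm_eq_abs, hnk]
  calc |u (N + (n - N))| ≤ q ^ (n - N) * |u N| + ε₀ / 2 := key _
    _ < ε₀ / 2 + ε₀ / 2 := by linarith [hK _ hk]
    _ = ε₀ := by ring

/-- Proposition 2.1(ii): if `x_{n+1} = a * x_n + b_n` for `n ≥ 1`, with `|a| < 1` and
`b_n = b * n^γ` for some `γ > -1`, then
`x_n = b_{n-1}/(1-a) - (γ a b_{n-1} / (n (1-a)^2)) (1 + o(1))` as `n → ∞`,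
i.e. `x_n - b (n-1)^γ/(1-a) + γ a b (n-1)^γ/(n (1-a)^2) = o((n-1)^γ / n)`. -/
theorem difference_equation_asymptotics
    (a b γ : ℝ) (ha : |a| < 1) (hγ : γ > -1)
    (bseq : ℕ → ℝ) (hb : ∀ n : ℕ, 1 ≤ n → bseq n = b * (n : ℝ) ^ γ)
    (x : ℕ → ℝ)
    (hrec : ∀ n : ℕ, 1 ≤ n → x (n + 1) = a * x n + bseq n) :
    (fun n : ℕ => x n - b * ((n : ℝ) - 1) ^ γ / (1 - a)
        + γ * a * b * ((n : ℝ) - 1) ^ γ / ((n : ℝ) * (1 - a) ^ 2))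
      =o[atTop] fun n : ℕ => ((n : ℝ) - 1) ^ γ / (n : ℝ) := by
  obtain ⟨ha', ha''⟩ := abs_lt.mp ha
  have ha1 : (0:ℝ) < 1 - a := by linarith
  have ha1' : (1:ℝ) - a ≠ 0 := ne_of_gt ha1
  set f : ℕ → ℝ := fun n =>
    b * ((n : ℝ) - 1) ^ γ / (1 - a) - γ * a * b * ((n : ℝ) - 1) ^ γ / ((n : ℝ) * (1 - a) ^ 2)
    with hf
  set w : ℕ → ℝ := fun n => ((n : ℝ) - 1) ^ γ / (n : ℝ) with hw
  set y : ℕ → ℝ := fun n => x n - f n with hy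
  set r : ℕ → ℝ := fun n => a * f n + b * (n : ℝ) ^ γ - f (n + 1) with hr
  have hrecy : ∀ n : ℕ, 1 ≤ n → y (n + 1) = a * y n + r n := by
    intro n hn
    simp only [hy, hr]
    rw [hrec n hn, hb n hn]
    ring
  have hwpos : ∀ n : ℕ, 2 ≤ n → 0 < w n := by
    intro n hn
    have h2 : (2:ℝ) ≤ (n:ℝ) := by exact_mod_cast hn
    have h1 : (0:ℝ) < (n:ℝ) - 1 := by linarith
    have h0 : (0:ℝ) < (n:ℝ) := by linarith
    exact div_pos (Real.rpow_pos_of_pos h1 γ) h0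
  -- real-variable limits
  have Rlim1 : Tendsto (fun t : ℝ => (t - 1) / t) atTop (nhds 1) := by
    have h : Tendsto (fun t : ℝ => 1 - t⁻¹) atTop (nhds 1) := by
      simpa using (tendsto_const_nhds (x := (1:ℝ))).sub tendsto_inv_atTop_zero
    refine h.congr' ?_
    filter_upwards [eventually_gt_atTop (0:ℝ)] with t ht
    field_simp
  have Rlim1' : Tendsto (fun t : ℝ => ((t - 1) / t) ^ γ) atTop (nhds 1) := by
    have hc := (Real.continuousAt_rpow_const 1 γ (Or.inl one_ne_zero)).tendsto
    have h := hc.comp Rlim1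
    simpa [Function.comp_def, Real.one_rpow] using h
  have Rlim2 : Tendsto (fun t : ℝ => (t + 1) / t) atTop (nhds 1) := by
    have h : Tendsto (fun t : ℝ => 1 + t⁻¹) atTop (nhds 1) := by
      simpa using (tendsto_const_nhds (x := (1:ℝ))).add tendsto_inv_atTop_zero
    refine h.congr' ?_
    filter_upwards [eventually_gt_atTop (0:ℝ)] with t ht
    field_simp
  have Rlim3 : Tendsto (fun t : ℝ => t * (1 - ((t - 1) / t) ^ γ)) atTop (nhds γ) := by
    have hd : HasDerivAt (fun x : ℝ => x ^ γ) γ 1 := by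
      simpa using Real.hasDerivAt_rpow_const (x := 1) (p := γ) (Or.inl one_ne_zero)
    have hslope := hasDerivAt_iff_tendsto_slope.mp hd
    have hto : Tendsto (fun t : ℝ => (t - 1) / t) atTop (nhdsWithin 1 {(1:ℝ)}ᶜ) := by
      rw [tendsto_nhdsWithin_iff]
      refine ⟨Rlim1, ?_⟩
      filter_upwards [eventually_gt_atTop (0:ℝ)] with t ht
      simp only [Set.mem_compl_iff, Set.mem_singleton_iff]
      intro hcon
      rw [div_eq_one_iff_eq (ne_of_gt ht)] at hcon
      linarith
    have hcomp := hslope.comp hto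
    refine hcomp.congr' ?_
    filter_upwards [eventually_gt_atTop (0:ℝ)] with t ht
    have ht' : t ≠ 0 := ne_of_gt ht
    have hne : (t - 1) / t - 1 = -(1 / t) := by field_simp; ring
    simp only [Function.comp, slope_def_field, Real.one_rpow, hne]
    rw [div_neg, div_div_eq_mul_div]
    ring
  set G : ℝ → ℝ := fun t =>
    -(a * b / (1 - a)) * ((t + 1) * (1 - ((t - 1) / t) ^ γ)) + γ * a * b / (1 - a) ^ 2
      - γ * a ^ 2 * b / (1 - a) ^ 2 * (((t - 1) / t) ^ γ * ((t + 1) / t)) with hG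
  have RlimG : Tendsto G atTop (nhds 0) := by
    have h31 : Tendsto (fun t : ℝ => (t + 1) * (1 - ((t - 1) / t) ^ γ)) atTop (nhds γ) := by
      have h := Rlim3.add ((tendsto_const_nhds (x := (1:ℝ))).sub Rlim1')
      have h0 : γ + (1 - 1) = γ := by ring
      rw [h0] at h
      exact h.congr (fun t => by ring)
    have hA := (h31.const_mul (-(a * b / (1 - a)))).add_const (γ * a * b / (1 - a) ^ 2)
    have hB := (Rlim1'.mul Rlim2).const_mul (γ * a ^ 2 * b / (1 - a) ^ 2)
    have h := hA.sub hB
    have hval : -(a * b / (1 - a)) * γ + γ * a * b / (1 - a) ^ 2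
        - γ * a ^ 2 * b / (1 - a) ^ 2 * (1 * 1) = 0 := by
      field_simp
      ring
    rw [hval] at h
    exact h
  -- translation from ℕ to ℝ
  have hcastw : ∀ n : ℕ, 2 ≤ n → w (n + 1) = ((n:ℝ)) ^ γ / ((n:ℝ) + 1) := by
    intro n hn
    simp only [hw]
    push_cast
    ring_nf
  have hstep : ∀ n : ℕ, 2 ≤ n →
      (((n:ℝ) - 1) / (n:ℝ)) ^ γ * (n:ℝ) ^ γ = ((n:ℝ) - 1) ^ γ := by
    intro n hn
    have h2 : (2:ℝ) ≤ (n:ℝ) := by exact_mod_cast hn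
    have h1 : (0:ℝ) ≤ (n:ℝ) - 1 := by linarith
    have h0 : (0:ℝ) ≤ (n:ℝ) := by linarith
    rw [Real.div_rpow h1 h0]
    have hp : (0:ℝ) < (n:ℝ) ^ γ := Real.rpow_pos_of_pos (by linarith) γ
    field_simp
  -- κ limit
  have hκ : Tendsto (fun n : ℕ => w n / w (n + 1)) atTop (nhds 1) := by
    have hreal : Tendsto (fun t : ℝ => ((t - 1) / t) ^ γ * ((t + 1) / t)) atTop (nhds 1) := by
      have h := Rlim1'.mul Rlim2
      rw [show (1:ℝ) * 1 = 1 by ring] at h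
      exact h
    have hcomp := hreal.comp (tendsto_natCast_atTop_atTop (R := ℝ))
    refine hcomp.congr' ?_
    filter_upwards [eventually_ge_atTop 2] with n hn
    have h2 : (2:ℝ) ≤ (n:ℝ) := by exact_mod_cast hn
    have h0 : (n:ℝ) ≠ 0 := by linarith
    have h0' : (n:ℝ) + 1 ≠ 0 := by linarith
    have hp : (0:ℝ) < (n:ℝ) ^ γ := Real.rpow_pos_of_pos (by linarith) γ
    rw [hcastw n hn]
    simp only [Function.comp, hw]
    rw [← hstep n hn]
    field_simp
  -- ρ limit
  have hρ : Tendsto (fun n : ℕ => r n / w (n + 1)) atTop (nhds 0) := by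
    have hcomp := RlimG.comp (tendsto_natCast_atTop_atTop (R := ℝ))
    refine hcomp.congr' ?_
    filter_upwards [eventually_ge_atTop 2] with n hn
    have h2 : (2:ℝ) ≤ (n:ℝ) := by exact_mod_cast hn
    have h0 : (n:ℝ) ≠ 0 := by linarith
    have h0' : (n:ℝ) + 1 ≠ 0 := by linarith
    have hp : (0:ℝ) < (n:ℝ) ^ γ := Real.rpow_pos_of_pos (by linarith) γ
    have hf1 : f (n + 1) = b * (n:ℝ) ^ γ / (1 - a)
        - γ * a * b * (n:ℝ) ^ γ / (((n:ℝ) + 1) * (1 - a) ^ 2) := by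
      simp only [hf]
      push_cast
      ring_nf
    simp only [Function.comp, hr]
    rw [hf1, hcastw n hn]
    simp only [hf, hG]
    rw [← hstep n hn]
    field_simp
    ring
  -- recursion for u := y / w
  set u : ℕ → ℝ := fun n => y n / w n with hu
  have hurec : ∀ n : ℕ, 2 ≤ n →
      u (n + 1) = a * (w n / w (n + 1)) * u n + r n / w (n + 1) := by
    intro n hn
    have hwn : w n ≠ 0 := (hwpos n hn).ne'
    have hwn1 : w (n + 1) ≠ 0 := (hwpos (n + 1) (by omega)).ne'
    simp only [hu]
    rw [hrecy n (by omega)]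
    field_simp
  set q : ℝ := (1 + |a|) / 2 with hqdef
  have hq0 : 0 ≤ q := by positivity
  have hq1 : q < 1 := by rw [hqdef]; linarith
  have haq : |a| < q := by rw [hqdef]; linarith
  have hqev : ∀ᶠ n : ℕ in atTop, |a| * |w n / w (n + 1)| < q := by
    have h : Tendsto (fun n : ℕ => |a| * |w n / w (n + 1)|) atTop (nhds (|a| * |1|)) :=
      (hκ.abs).const_mul |a|
    refine h.eventually_lt_const ?_
    simpa using haq
  have hineq : ∀ᶠ n : ℕ in atTop, |u (n + 1)| ≤ q * |u n| + |r n / w (n + 1)| := by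
    filter_upwards [eventually_ge_atTop 2, hqev] with n hn hqn
    rw [hurec n hn]
    calc |a * (w n / w (n + 1)) * u n + r n / w (n + 1)|
        ≤ |a * (w n / w (n + 1)) * u n| + |r n / w (n + 1)| := abs_add_le _ _
      _ = |a| * |w n / w (n + 1)| * |u n| + |r n / w (n + 1)| := by
          rw [abs_mul, abs_mul]
      _ ≤ q * |u n| + |r n / w (n + 1)| := by
          have := mul_le_mul_of_nonneg_right hqn.le (abs_nonneg (u n))
          linarith
  have hρ0 : Tendsto (fun n : ℕ => |r n / w (n + 1)|) atTop (nhds 0) := by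
    simpa using hρ.abs
  have hu0 : Tendsto u atTop (nhds 0) := contract_tendsto_zero hq0 hq1 hρ0 hineq
  have hcond : ∀ᶠ n : ℕ in atTop, w n = 0 → y n = 0 := by
    filter_upwards [eventually_ge_atTop 2] with n hn h0
    exact absurd h0 (hwpos n hn).ne'
  have hyw : y =o[atTop] w := (isLittleO_iff_tendsto' hcond).mpr hu0
  exact hyw.congr (fun n => by simp only [hy, hf]; ring) (fun n => rfl)
end

section
/- For every n ≥ 0, the expected number of nonzero steps satisfies E[N*_{n+1}] = Γ(n+2-r)/(Γ(1-r)·Γ(n+1)). -/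
open MeasureTheory Filter

/-- For the ERW with delays and full memory, the expected number of nonzero steps
satisfies `E[N*_{n+1}] = Γ(n+2-r) / (Γ(1-r) Γ(n+1))` for every `n ≥ 0`. -/
theorem expected_nonzero_steps
    {Ω : Type*} [m0 : MeasurableSpace Ω] (μ : Measure Ω) [IsProbabilityMeasure μ]
    (𝓕 : Filtration ℕ m0) (r : ℝ) (hr0 : 0 < r) (hr1 : r < 1)
    (Istar : ℕ → Ω → ℝ)
    (h01 : ∀ n : ℕ, 1 ≤ n → ∀ ω, Istar n ω = 0 ∨ Istar n ω = 1)
    (hadapt : ∀ n : ℕ, 1 ≤ n → StronglyMeasurable[𝓕 n] (Istar n))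
    (hint : ∀ n : ℕ, 1 ≤ n → Integrable (Istar n) μ)
    (Nstar : ℕ → Ω → ℝ)
    (hN : ∀ n ω, Nstar n ω = ∑ k ∈ Finset.Icc 1 n, Istar k ω)
    (hI1 : ∫ ω, Istar 1 ω ∂μ = 1 - r)
    (hcond : ∀ n : ℕ, 1 ≤ n →
      (μ[Istar (n + 1)|𝓕 n]) =ᵐ[μ] fun ω => ((1 - r) / (n : ℝ)) * Nstar n ω) :
    ∀ n : ℕ, ∫ ω, Nstar (n + 1) ω ∂μ =
      Real.Gamma ((n : ℝ) + 2 - r) / (Real.Gamma (1 - r) * Real.Gamma ((n : ℝ) + 1)) := by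
  have hG : Real.Gamma (1 - r) ≠ 0 := (Real.Gamma_pos_of_pos (by linarith)).ne'
  intro n
  induction n with
  | zero =>
    have h1 : ∫ ω, Nstar 1 ω ∂μ = 1 - r := by
      rw [show (fun ω => Nstar 1 ω) = Istar 1 from funext fun ω => by
        simp [hN 1 ω]]
      exact hI1
    rw [h1]
    have h2 : ((0 : ℕ) : ℝ) + 2 - r = (1 - r) + 1 := by push_cast; ring
    rw [h2, Real.Gamma_add_one (by linarith), show ((0:ℕ):ℝ) + 1 = 1 by norm_num,
      Real.Gamma_one]
    field_simp
  | succ n ih =>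
    have hsplit : ∀ ω, Nstar (n + 2) ω = Nstar (n + 1) ω + Istar (n + 2) ω := by
      intro ω
      rw [hN, hN]
      exact Finset.sum_Icc_succ_top (by omega) _
    have hNint : Integrable (Nstar (n + 1)) μ := by
      have : Nstar (n + 1) = fun ω => ∑ k ∈ Finset.Icc 1 (n + 1), Istar k ω :=
        funext (hN (n + 1))
      rw [this]
      exact integrable_finset_sum _ fun k hk => hint k (Finset.mem_Icc.mp hk).1
    have hIexp : ∫ ω, Istar (n + 2) ω ∂μ
        = ((1 - r) / ((n : ℝ) + 1)) * ∫ ω, Nstar (n + 1) ω ∂μ := by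
      have h1 : ∫ ω, Istar (n + 2) ω ∂μ
          = ∫ ω, (μ[Istar (n + 2)|𝓕 (n + 1)]) ω ∂μ :=
        (integral_condExp (𝓕.le (n + 1))).symm
      rw [h1, integral_congr_ae (hcond (n + 1) (by omega))]
      push_cast
      rw [integral_const_mul]
    have hInt : ∫ ω, Nstar (n + 2) ω ∂μ
        = ∫ ω, Nstar (n + 1) ω ∂μ + ∫ ω, Istar (n + 2) ω ∂μ := by
      rw [← integral_add hNint (hint (n + 2) (by omega))]
      exact integral_congr_ae (Eventually.of_forall fun ω => hsplit ω)
    rw [hInt, hIexp, ih]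
    have hpos1 : (0 : ℝ) < (n : ℝ) + 2 - r := by
      have : (0:ℝ) ≤ (n:ℝ) := Nat.cast_nonneg n
      linarith
    have hpos2 : (0 : ℝ) < (n : ℝ) + 1 := by positivity
    have hG2 : Real.Gamma ((n : ℝ) + 1) ≠ 0 :=
      (Real.Gamma_pos_of_pos hpos2).ne'
    have e1 : ((n + 1 : ℕ) : ℝ) + 2 - r = ((n : ℝ) + 2 - r) + 1 := by push_cast; ring
    have e2 : ((n + 1 : ℕ) : ℝ) + 1 = ((n : ℝ) + 1) + 1 := by push_cast; ring
    rw [e1, e2, Real.Gamma_add_one hpos1.ne', Real.Gamma_add_one hpos2.ne']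
    field_simp
    ring
end

section
/- As n → ∞, E[N*_{n+1}] = n^{1-r}/Γ(1-r) + n^{-r}·(1-r)(2-r)/(2·Γ(1-r)) + O(n^{-r-1}). -/
open MeasureTheory Filter Asymptotics


open Real

lemma hasDeriv_one_add_rpow (q t : ℝ) (ht : 0 ≤ t) :
    HasDerivAt (fun t : ℝ => (1 + t) ^ q) (q * (1 + t) ^ (q - 1)) t := by
  have h1 : HasDerivAt (fun t : ℝ => 1 + t) 1 t := (hasDerivAt_id t).const_add 1
  have := h1.rpow_const (p := q) (Or.inl (by positivity))
  simpa [mul_comm] using this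

lemma erw_rpow_lin (q : ℝ) {h : ℝ} (h0 : 0 ≤ h) (h1 : h ≤ 1) :
    |(1 + h) ^ q - 1| ≤ (|q| * 2 ^ |q - 1|) * h := by
  have key : ∀ t ∈ Set.Icc (0:ℝ) 1, ‖q * (1 + t) ^ (q - 1)‖ ≤ |q| * 2 ^ |q - 1| := by
    intro t ht
    rw [Real.norm_eq_abs, abs_mul]
    refine mul_le_mul_of_nonneg_left ?_ (abs_nonneg q)
    rw [abs_of_nonneg (rpow_nonneg (by linarith [ht.1]) _)]
    calc (1 + t) ^ (q - 1) ≤ (1 + t) ^ |q - 1| :=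
          rpow_le_rpow_of_exponent_le (by linarith [ht.1]) (le_abs_self _)
      _ ≤ 2 ^ |q - 1| := rpow_le_rpow (by linarith [ht.1]) (by linarith [ht.2]) (abs_nonneg _)
  have mvt := (convex_Icc (0:ℝ) 1).norm_image_sub_le_of_norm_hasDerivWithin_le
    (f := fun t : ℝ => (1 + t) ^ q) (f' := fun t : ℝ => q * (1 + t) ^ (q - 1))
    (fun t ht => (hasDeriv_one_add_rpow q t ht.1).hasDerivWithinAt)
    key (Set.mem_Icc.2 ⟨le_refl 0, zero_le_one⟩) (Set.mem_Icc.2 ⟨h0, h1⟩)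
  simpa [Real.norm_eq_abs, abs_of_nonneg h0] using mvt

lemma erw_rpow_quad (q : ℝ) {h : ℝ} (h0 : 0 ≤ h) (h1 : h ≤ 1) :
    |(1 + h) ^ q - 1 - q * h| ≤ (|q| * (|q - 1| * 2 ^ |q - 2|)) * h ^ 2 := by
  set C : ℝ := |q - 1| * 2 ^ |q - 2| with hC
  have hCnn : 0 ≤ C := by positivity
  have key : ∀ t ∈ Set.Icc (0:ℝ) h, ‖q * (1 + t) ^ (q - 1) - q‖ ≤ |q| * C * h := by
    intro t ht
    have := erw_rpow_lin (q - 1) ht.1 (le_trans ht.2 h1)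
    have h2 : |q * (1 + t) ^ (q - 1) - q| = |q| * |(1 + t) ^ (q - 1) - 1| := by
      rw [← abs_mul]; ring_nf
    rw [Real.norm_eq_abs, h2]
    calc |q| * |(1 + t) ^ (q - 1) - 1| ≤ |q| * ((|q - 1| * 2 ^ |q - 1 - 1|) * t) :=
          mul_le_mul_of_nonneg_left this (abs_nonneg q)
      _ ≤ |q| * (C * h) := by
          have : q - 1 - 1 = q - 2 := by ring
          rw [this]
          exact mul_le_mul_of_nonneg_left
            (mul_le_mul_of_nonneg_left ht.2 hCnn) (abs_nonneg q)
      _ = |q| * C * h := by ring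
  have mvt := (convex_Icc (0:ℝ) h).norm_image_sub_le_of_norm_hasDerivWithin_le
    (f := fun t : ℝ => (1 + t) ^ q - 1 - q * t)
    (f' := fun t : ℝ => q * (1 + t) ^ (q - 1) - q)
    (fun t ht => by
      exact ((((hasDeriv_one_add_rpow q t ht.1).sub_const 1).sub
        ((hasDerivAt_id t).const_mul q)).congr_deriv (by ring)).hasDerivWithinAt)
    key (Set.mem_Icc.2 ⟨le_refl 0, h0⟩) (Set.mem_Icc.2 ⟨h0, le_refl h⟩)
  simp only [Real.norm_eq_abs, add_zero, mul_zero, sub_zero, Real.one_rpow,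
    abs_of_nonneg h0] at mvt
  have : |(1 + h) ^ q - 1 - 1 + 1 - q * h| = |(1 + h) ^ q - 1 - q * h| := by ring_nf
  calc |(1 + h) ^ q - 1 - q * h| ≤ |q| * C * h * h := by
        simpa [sub_sub] using mvt
    _ = |q| * C * h ^ 2 := by ring

lemma erw_rpow_cubic (q : ℝ) {h : ℝ} (h0 : 0 ≤ h) (h1 : h ≤ 1) :
    |(1 + h) ^ q - 1 - q * h - q * (q - 1) / 2 * h ^ 2|
      ≤ (|q| * (|q - 1| * (|q - 2| * 2 ^ |q - 3|))) * h ^ 3 := by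
  set C : ℝ := |q - 1| * (|q - 2| * 2 ^ |q - 3|) with hC
  have hCnn : 0 ≤ C := by positivity
  have key : ∀ t ∈ Set.Icc (0:ℝ) h,
      ‖q * (1 + t) ^ (q - 1) - q - q * (q - 1) * t‖ ≤ |q| * C * h ^ 2 := by
    intro t ht
    have := erw_rpow_quad (q - 1) ht.1 (le_trans ht.2 h1)
    have h2 : |q * (1 + t) ^ (q - 1) - q - q * (q - 1) * t|
        = |q| * |(1 + t) ^ (q - 1) - 1 - (q - 1) * t| := by
      rw [← abs_mul]; ring_nf
    rw [Real.norm_eq_abs, h2]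
    calc |q| * |(1 + t) ^ (q - 1) - 1 - (q - 1) * t|
        ≤ |q| * ((|q - 1| * (|q - 1 - 1| * 2 ^ |q - 1 - 2|)) * t ^ 2) :=
          mul_le_mul_of_nonneg_left this (abs_nonneg q)
      _ ≤ |q| * (C * h ^ 2) := by
          have e1 : q - 1 - 1 = q - 2 := by ring
          have e2 : q - 1 - 2 = q - 3 := by ring
          rw [e1, e2]
          refine mul_le_mul_of_nonneg_left ?_ (abs_nonneg q)
          refine mul_le_mul_of_nonneg_left ?_ hCnn
          exact pow_le_pow_left₀ ht.1 ht.2 2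
      _ = |q| * C * h ^ 2 := by ring
  have mvt := (convex_Icc (0:ℝ) h).norm_image_sub_le_of_norm_hasDerivWithin_le
    (f := fun t : ℝ => (1 + t) ^ q - 1 - q * t - q * (q - 1) / 2 * t ^ 2)
    (f' := fun t : ℝ => q * (1 + t) ^ (q - 1) - q - q * (q - 1) * t)
    (fun t ht => by
      have d1 := ((hasDeriv_one_add_rpow q t ht.1).sub_const 1).sub
        ((hasDerivAt_id t).const_mul q)
      have d2 : HasDerivAt (fun t : ℝ => q * (q - 1) / 2 * t ^ 2) (q * (q - 1) * t) t := by
        have := (hasDerivAt_pow 2 t).const_mul (q * (q - 1) / 2)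
        simpa using this.congr_deriv (by ring)
      exact ((d1.sub d2).congr_deriv (by ring)).hasDerivWithinAt)
    key (Set.mem_Icc.2 ⟨le_refl 0, h0⟩) (Set.mem_Icc.2 ⟨h0, le_refl h⟩)
  simp only [Real.norm_eq_abs, add_zero, mul_zero, sub_zero, Real.one_rpow,
    ne_eq, OfNat.ofNat_ne_zero, not_false_eq_true, zero_pow, abs_of_nonneg h0] at mvt
  calc |(1 + h) ^ q - 1 - q * h - q * (q - 1) / 2 * h ^ 2| ≤ |q| * C * h ^ 2 * h := by
        simpa [sub_sub] using mvt
    _ = |q| * C * h ^ 3 := by ring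
-- appended part, tested together with base
noncomputable def erwC2 (q : ℝ) : ℝ := |q| * (|q - 1| * 2 ^ |q - 2|)
noncomputable def erwC3 (q : ℝ) : ℝ := |q| * (|q - 1| * (|q - 2| * 2 ^ |q - 3|))
noncomputable def erwCpsi (s : ℝ) : ℝ := erwC3 (s + 1) + s * (s + 1) / 2 * erwC2 s

lemma erwC2_nonneg (q : ℝ) : 0 ≤ erwC2 q := by unfold erwC2; positivity
lemma erwC3_nonneg (q : ℝ) : 0 ≤ erwC3 q := by unfold erwC3; positivity
lemma erwCpsi_nonneg {s : ℝ} (hs : 0 ≤ s) : 0 ≤ erwCpsi s := by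
  unfold erwCpsi
  have := erwC3_nonneg (s + 1); have := erwC2_nonneg s
  positivity

lemma erw_psi_bound {s : ℝ} (hs : 0 < s) {h : ℝ} (h0 : 0 ≤ h) (h1 : h ≤ 1) :
    |(1 + h) ^ (s + 1) + s * (s + 1) / 2 * h * (1 + h) ^ s
      - 1 - (1 + s) * h - s * (s + 1) / 2 * h - s * (s + 1) / 2 * (1 + s) * h ^ 2|
      ≤ erwCpsi s * h ^ 3 := by
  set K : ℝ := s * (s + 1) / 2 with hK
  have hKnn : 0 ≤ K := by positivity
  have R1 := erw_rpow_cubic (s + 1) h0 h1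
  have R2 := erw_rpow_quad s h0 h1
  have decomp : (1 + h) ^ (s + 1) + K * h * (1 + h) ^ s
      - 1 - (1 + s) * h - K * h - K * (1 + s) * h ^ 2
      = ((1 + h) ^ (s + 1) - 1 - (s + 1) * h - (s + 1) * ((s + 1) - 1) / 2 * h ^ 2)
        + K * h * ((1 + h) ^ s - 1 - s * h) := by ring
  rw [decomp]
  calc |((1 + h) ^ (s + 1) - 1 - (s + 1) * h - (s + 1) * ((s + 1) - 1) / 2 * h ^ 2)
        + K * h * ((1 + h) ^ s - 1 - s * h)|
      ≤ |(1 + h) ^ (s + 1) - 1 - (s + 1) * h - (s + 1) * ((s + 1) - 1) / 2 * h ^ 2|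
        + K * h * |(1 + h) ^ s - 1 - s * h| := by
        refine (abs_add_le _ _).trans ?_
        gcongr
        rw [abs_mul, abs_of_nonneg (by positivity : (0:ℝ) ≤ K * h)]
    _ ≤ erwC3 (s + 1) * h ^ 3 + K * h * (erwC2 s * h ^ 2) := by
        gcongr
        · exact R1
        · exact R2
    _ = erwCpsi s * h ^ 3 := by unfold erwCpsi erwC2 erwC3; ring

open Real in
lemma erw_gautschi_upper {s : ℝ} (hs : 0 < s) (hs1 : s < 1) {x : ℝ} (hx : 0 < x) :
    Gamma (x + s) ≤ Gamma x * x ^ s := by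
  have key := Gamma_mul_add_mul_le_rpow_Gamma_mul_rpow_Gamma hx (by linarith : (0:ℝ) < x + 1)
    (by linarith : (0:ℝ) < 1 - s) hs (by ring)
  have harg : (1 - s) * x + s * (x + 1) = x + s := by ring
  rw [harg, Gamma_add_one hx.ne'] at key
  have hG : 0 < Gamma x := Gamma_pos_of_pos hx
  calc Gamma (x + s) ≤ Gamma x ^ (1 - s) * (x * Gamma x) ^ s := key
    _ = Gamma x * x ^ s := by
        rw [mul_rpow hx.le hG.le]
        have e : Gamma x ^ (1 - s) * Gamma x ^ s = Gamma x := by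
          rw [← rpow_add hG]; norm_num
        calc Gamma x ^ (1 - s) * (x ^ s * Gamma x ^ s)
            = Gamma x ^ (1 - s) * Gamma x ^ s * x ^ s := by ring
          _ = Gamma x * x ^ s := by rw [e]

open Real in
lemma erw_gautschi_lower {s : ℝ} (hs : 0 < s) (hs1 : s < 1) {y : ℝ} (hy : 1 ≤ y) :
    Gamma y * (y + s - 1) ^ s ≤ Gamma (y + s) := by
  have h1 : (0:ℝ) < y + s - 1 := by linarith
  have key := Gamma_mul_add_mul_le_rpow_Gamma_mul_rpow_Gamma h1
    (by linarith : (0:ℝ) < y + s) hs (by linarith : (0:ℝ) < 1 - s) (by ring)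
  have harg : s * (y + s - 1) + (1 - s) * (y + s) = y := by ring
  rw [harg] at key
  have hGys : 0 < Gamma (y + s - 1) := Gamma_pos_of_pos h1
  have h2 : Gamma (y + s) = Gamma (y + s - 1) * (y + s - 1) := by
    have := Gamma_add_one h1.ne'
    rw [show y + s - 1 + 1 = y + s by ring] at this
    rw [this]; ring
  have e : Gamma (y + s - 1) ^ s * Gamma (y + s) ^ (1 - s) * (y + s - 1) ^ s
      = Gamma (y + s) := by
    rw [h2, mul_rpow hGys.le h1.le]
    calc Gamma (y+s-1) ^ s * (Gamma (y+s-1) ^ (1-s) * (y+s-1) ^ (1-s)) * (y+s-1) ^ s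
        = Gamma (y+s-1) ^ s * Gamma (y+s-1) ^ (1-s) * ((y+s-1) ^ (1-s) * (y+s-1) ^ s) := by
          ring
      _ = Gamma (y+s-1) * (y+s-1) := by
          rw [← rpow_add hGys, ← rpow_add h1]; norm_num
  calc Gamma y * (y + s - 1) ^ s
      ≤ Gamma (y + s - 1) ^ s * Gamma (y + s) ^ (1 - s) * (y + s - 1) ^ s :=
        mul_le_mul_of_nonneg_right key (rpow_nonneg h1.le s)
    _ = Gamma (y + s) := e
noncomputable def erwG (s : ℝ) (n : ℕ) : ℝ :=
  Real.Gamma ((n:ℝ) + 1 + s) / Real.Gamma ((n:ℝ) + 1)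
noncomputable def erwT (s : ℝ) (n : ℕ) : ℝ :=
  (n:ℝ) ^ s + s * (s + 1) / 2 * (n:ℝ) ^ (s - 1)
noncomputable def erwW (s : ℝ) (n : ℕ) : ℝ := erwT s n / erwG s n

open Real

lemma erwG_pos {s : ℝ} (hs : 0 < s) (n : ℕ) : 0 < erwG s n := by
  unfold erwG
  have h1 : (0:ℝ) < (n:ℝ) + 1 + s := by positivity
  have h2 : (0:ℝ) < (n:ℝ) + 1 := by positivity
  exact div_pos (Gamma_pos_of_pos h1) (Gamma_pos_of_pos h2)

lemma erwT_pos {s : ℝ} (hs : 0 < s) {n : ℕ} (hn : 1 ≤ n) : 0 < erwT s n := by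
  unfold erwT
  have hx : (0:ℝ) < (n:ℝ) := by exact_mod_cast hn
  have := rpow_pos_of_pos hx s
  have := rpow_pos_of_pos hx (s - 1)
  positivity

lemma erwG_lb {s : ℝ} (hs : 0 < s) (hs1 : s < 1) {n : ℕ} (hn : 1 ≤ n) :
    (n:ℝ) ^ s ≤ erwG s n := by
  have hx : (1:ℝ) ≤ (n:ℝ) := by exact_mod_cast hn
  have hy : (1:ℝ) ≤ (n:ℝ) + 1 := by linarith
  have key := erw_gautschi_lower hs hs1 hy
  have harg : (n:ℝ) + 1 + s - 1 = (n:ℝ) + s := by ring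
  rw [harg] at key
  have h2 : (n:ℝ) ^ s ≤ ((n:ℝ) + s) ^ s :=
    rpow_le_rpow (by linarith) (by linarith) hs.le
  have hGpos := Gamma_pos_of_pos (show (0:ℝ) < (n:ℝ) + 1 by linarith)
  rw [erwG, le_div_iff₀ hGpos]
  calc (n:ℝ) ^ s * Gamma ((n:ℝ) + 1) ≤ ((n:ℝ) + s) ^ s * Gamma ((n:ℝ) + 1) :=
        mul_le_mul_of_nonneg_right h2 hGpos.le
    _ ≤ Gamma ((n:ℝ) + 1 + s) := by rw [mul_comm]; exact key

lemma erwG_ub {s : ℝ} (hs : 0 < s) (hs1 : s < 1) (n : ℕ) :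
    erwG s n ≤ ((n:ℝ) + 1) ^ s := by
  have hx : (0:ℝ) < (n:ℝ) + 1 := by positivity
  have key := erw_gautschi_upper hs hs1 hx
  have hGpos := Gamma_pos_of_pos hx
  rw [erwG, div_le_iff₀ hGpos]
  rw [mul_comm]; exact key

lemma erwG_rec {s : ℝ} (hs : 0 < s) (n : ℕ) :
    erwG s (n + 1) = erwG s n * (((n:ℝ) + 1 + s) / ((n:ℝ) + 1)) := by
  have h1 : (0:ℝ) < (n:ℝ) + 1 + s := by positivity
  have h2 : (0:ℝ) < (n:ℝ) + 1 := by positivity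
  have e1 : Gamma (((n:ℕ):ℝ) + 1 + 1 + s) = ((n:ℝ) + 1 + s) * Gamma ((n:ℝ) + 1 + s) := by
    rw [show ((n:ℕ):ℝ) + 1 + 1 + s = ((n:ℝ) + 1 + s) + 1 by ring, Gamma_add_one h1.ne']
  have e2 : Gamma (((n:ℕ):ℝ) + 1 + 1) = ((n:ℝ) + 1) * Gamma ((n:ℝ) + 1) := by
    rw [show ((n:ℕ):ℝ) + 1 + 1 = ((n:ℝ) + 1) + 1 by ring, Gamma_add_one h2.ne']
  have hGa := Gamma_pos_of_pos h1
  have hGb := Gamma_pos_of_pos h2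
  unfold erwG
  push_cast
  rw [e1, e2]
  field_simp

lemma erw_phi_bound {s : ℝ} (hs : 0 < s) {n : ℕ} (hn : 1 ≤ n) :
    |erwT s (n + 1) * ((n:ℝ) + 1) - erwT s n * ((n:ℝ) + 1 + s)|
      ≤ erwCpsi s * (n:ℝ) ^ (s - 2) := by
  set x : ℝ := (n:ℝ) with hxdef
  have hx1 : (1:ℝ) ≤ x := by rw [hxdef]; exact_mod_cast hn
  have hx0 : (0:ℝ) < x := by linarith
  have hx10 : (0:ℝ) < x + 1 := by linarith
  have h0 : (0:ℝ) ≤ 1 / x := by positivity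
  have h1 : 1 / x ≤ 1 := by rw [div_le_one hx0]; linarith
  have hplus : (1:ℝ) + 1 / x = (x + 1) / x := by field_simp
  set K : ℝ := s * (s + 1) / 2 with hK
  set A : ℝ := (x + 1) ^ (s - 1) with hA
  set B : ℝ := x ^ (s - 1) with hB
  have hApos : 0 < A := rpow_pos_of_pos hx10 _
  have hBpos : 0 < B := rpow_pos_of_pos hx0 _
  have eA1 : (x + 1) ^ s = A * (x + 1) := by
    rw [hA, ← rpow_add_one hx10.ne' (s - 1)]; norm_num
  have eA2 : (x + 1) ^ (s + 1) = A * (x + 1) ^ 2 := by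
    rw [hA, show s + 1 = (s - 1) + 2 by ring, rpow_add hx10, rpow_two]
  have eB1 : x ^ s = B * x := by
    rw [hB, ← rpow_add_one hx0.ne' (s - 1)]; norm_num
  have eB2 : x ^ (s + 1) = B * x ^ 2 := by
    rw [hB, show s + 1 = (s - 1) + 2 by ring, rpow_add hx0, rpow_two]
  have eB3 : x ^ (s - 2) = B / x := by
    rw [hB, show s - 2 = (s - 1) - 1 by ring, rpow_sub_one hx0.ne']
  have d1 : (1 + 1 / x) ^ (s + 1) = A * (x + 1) ^ 2 / (B * x ^ 2) := by
    rw [hplus, div_rpow (by linarith) hx0.le, eA2, eB2]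
  have d2 : (1 + 1 / x) ^ s = A * (x + 1) / (B * x) := by
    rw [hplus, div_rpow (by linarith) hx0.le, eA1, eB1]
  have hT1 : erwT s (n + 1) = A * (x + 1) + K * A := by
    unfold erwT; push_cast; rw [← hxdef, eA1, hA, hK]
  have hT0 : erwT s n = B * x + K * B := by
    unfold erwT; rw [← hxdef, eB1, hB, hK]
  have ident : erwT s (n + 1) * (x + 1) - erwT s n * (x + 1 + s)
      = x ^ (s + 1) * ((1 + 1/x) ^ (s + 1) + K * (1/x) * (1 + 1/x) ^ s
          - 1 - (1 + s) * (1/x) - K * (1/x) - K * (1 + s) * (1/x) ^ 2) := by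
    rw [hT1, hT0, d1, d2, eB2]
    field_simp
    ring
  have psi := erw_psi_bound hs h0 h1
  rw [ident, abs_mul, abs_of_nonneg (rpow_nonneg hx0.le _)]
  calc x ^ (s + 1) * |(1 + 1/x) ^ (s + 1) + K * (1/x) * (1 + 1/x) ^ s
          - 1 - (1 + s) * (1/x) - K * (1/x) - K * (1 + s) * (1/x) ^ 2|
      ≤ x ^ (s + 1) * (erwCpsi s * (1/x) ^ 3) := by
        refine mul_le_mul_of_nonneg_left ?_ (rpow_nonneg hx0.le _)
        convert psi using 2
    _ = erwCpsi s * x ^ (s - 2) := by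
        rw [eB2, eB3]
        field_simp
lemma erw_delta_bound {s : ℝ} (hs : 0 < s) (hs1 : s < 1) {n : ℕ} (hn : 1 ≤ n) :
    |erwW s (n + 1) - erwW s n| ≤ erwCpsi s * (1 / (n:ℝ) ^ 3) := by
  set x : ℝ := (n:ℝ) with hxdef
  have hx1 : (1:ℝ) ≤ x := by rw [hxdef]; exact_mod_cast hn
  have hx0 : (0:ℝ) < x := by linarith
  have hGpos := erwG_pos hs (s := s) (n := n)
  have hD : (0:ℝ) < (x + 1 + s) * erwG s n := by positivity
  have hwdiff : erwW s (n + 1) - erwW s n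
      = (erwT s (n + 1) * (x + 1) - erwT s n * (x + 1 + s)) / ((x + 1 + s) * erwG s n) := by
    unfold erwW
    rw [erwG_rec hs n, ← hxdef]
    field_simp
  have hnum := erw_phi_bound hs hn
  rw [← hxdef] at hnum
  have hCnn := erwCpsi_nonneg hs.le
  have key : x ^ (s - 2) * x ^ 3 = x ^ (s + 1) := by
    rw [← rpow_natCast x 3, ← rpow_add hx0]; congr 1; ring
  have key2 : x ^ (s + 1) ≤ (x + 1 + s) * erwG s n := by
    rw [rpow_add_one hx0.ne' s]
    calc x ^ s * x ≤ erwG s n * (x + 1 + s) := by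
          refine mul_le_mul (erwG_lb hs hs1 hn) (by linarith) (by linarith) hGpos.le
      _ = (x + 1 + s) * erwG s n := by ring
  rw [hwdiff, abs_div, abs_of_pos hD]
  rw [div_le_iff₀ hD]
  calc |erwT s (n + 1) * (x + 1) - erwT s n * (x + 1 + s)|
      ≤ erwCpsi s * x ^ (s - 2) := hnum
    _ ≤ erwCpsi s * (1 / x ^ 3) * ((x + 1 + s) * erwG s n) := by
        rw [show erwCpsi s * (1 / x ^ 3) * ((x + 1 + s) * erwG s n)
            = erwCpsi s * (((x + 1 + s) * erwG s n) / x ^ 3) by ring]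
        refine mul_le_mul_of_nonneg_left ?_ hCnn
        rw [le_div_iff₀ (by positivity)]
        rw [key]
        exact key2

lemma erw_tail {s : ℝ} (hs : 0 < s) (hs1 : s < 1) {n : ℕ} (hn : 2 ≤ n) :
    ∀ m : ℕ, n ≤ m → |erwW s m - erwW s n|
      ≤ erwCpsi s * (1 / (2 * ((n:ℝ) - 1) ^ 2) - 1 / (2 * ((m:ℝ) - 1) ^ 2)) := by
  intro m hm
  induction m, hm using Nat.le_induction with
  | base => simp
  | succ m hm ih =>
    have hm2 : 2 ≤ m := le_trans hn hm
    have hy2 : (2:ℝ) ≤ (m:ℝ) := by exact_mod_cast hm2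
    have hy1 : (0:ℝ) < (m:ℝ) - 1 := by linarith
    have key : 1 / (m:ℝ) ^ 3 ≤ 1 / (2 * ((m:ℝ) - 1) ^ 2) - 1 / (2 * (m:ℝ) ^ 2) := by
      rw [div_sub_div _ _ (by positivity) (by positivity),
        div_le_div_iff₀ (by positivity) (by positivity)]
      nlinarith
    have hd := erw_delta_bound hs hs1 (le_trans one_le_two hm2)
    have hCnn := erwCpsi_nonneg hs.le
    calc |erwW s (m+1) - erwW s n|
        ≤ |erwW s (m+1) - erwW s m| + |erwW s m - erwW s n| := abs_sub_le _ _ _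
      _ ≤ erwCpsi s * (1 / (m:ℝ) ^ 3)
          + erwCpsi s * (1 / (2 * ((n:ℝ) - 1) ^ 2) - 1 / (2 * ((m:ℝ) - 1) ^ 2)) :=
          add_le_add hd ih
      _ = erwCpsi s * (1 / (2 * ((n:ℝ) - 1) ^ 2)
            - (1 / (2 * ((m:ℝ) - 1) ^ 2) - 1 / (m:ℝ) ^ 3)) := by ring
      _ ≤ erwCpsi s * (1 / (2 * ((n:ℝ) - 1) ^ 2) - 1 / (2 * (m:ℝ) ^ 2)) := by
          refine mul_le_mul_of_nonneg_left (by linarith) hCnn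
      _ = erwCpsi s * (1 / (2 * ((n:ℝ) - 1) ^ 2) - 1 / (2 * ((((m+1:ℕ)):ℝ) - 1) ^ 2)) := by
          have e : (((m+1:ℕ)):ℝ) - 1 = (m:ℝ) := by push_cast; ring
          rw [e]

open Real Filter in
lemma erw_w_tendsto {s : ℝ} (hs : 0 < s) (hs1 : s < 1) :
    Tendsto (erwW s) atTop (nhds 1) := by
  have hK : (0:ℝ) ≤ s * (s + 1) / 2 := by positivity
  have hlow : ∀ n : ℕ, 1 ≤ n → ((n:ℝ) / ((n:ℝ) + 1)) ^ s ≤ erwW s n := by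
    intro n hn
    have hx1 : (1:ℝ) ≤ (n:ℝ) := by exact_mod_cast hn
    have hx0 : (0:ℝ) < (n:ℝ) := by linarith
    have hGpos := erwG_pos hs (s := s) (n := n)
    have hTlb : (n:ℝ) ^ s ≤ erwT s n := by
      unfold erwT
      have : (0:ℝ) ≤ s * (s + 1) / 2 * (n:ℝ) ^ (s - 1) := by positivity
      linarith
    calc ((n:ℝ) / ((n:ℝ) + 1)) ^ s = (n:ℝ) ^ s / ((n:ℝ) + 1) ^ s :=
          Real.div_rpow hx0.le (by positivity : (0:ℝ) ≤ (n:ℝ) + 1) s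
      _ ≤ erwT s n / ((n:ℝ) + 1) ^ s := by gcongr
      _ ≤ erwT s n / erwG s n := by
          have := erwG_ub hs hs1 n
          gcongr
          · exact (erwT_pos hs hn).le
      _ = erwW s n := rfl
  have hup : ∀ n : ℕ, 1 ≤ n → erwW s n ≤ 1 + s * (s + 1) / 2 * (1 / (n:ℝ)) := by
    intro n hn
    have hx1 : (1:ℝ) ≤ (n:ℝ) := by exact_mod_cast hn
    have hx0 : (0:ℝ) < (n:ℝ) := by linarith
    have hGpos := erwG_pos hs (s := s) (n := n)
    have hrp : (0:ℝ) < (n:ℝ) ^ s := rpow_pos_of_pos hx0 s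
    calc erwW s n = erwT s n / erwG s n := rfl
      _ ≤ erwT s n / (n:ℝ) ^ s := by
          have := erwG_lb hs hs1 hn
          gcongr
          · exact (erwT_pos hs hn).le
      _ = 1 + s * (s + 1) / 2 * (1 / (n:ℝ)) := by
          unfold erwT
          rw [rpow_sub_one hx0.ne' s]
          field_simp
  have L1 : Tendsto (fun n : ℕ => ((n:ℝ) / ((n:ℝ) + 1)) ^ s) atTop (nhds 1) := by
    have t0 : Tendsto (fun n : ℕ => (n:ℝ) / ((n:ℝ) + 1)) atTop (nhds 1) :=
      tendsto_natCast_div_add_atTop (1:ℝ)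
    have := t0.rpow_const (Or.inr hs.le)
    simpa using this
  have L2 : Tendsto (fun n : ℕ => 1 + s * (s + 1) / 2 * (1 / (n:ℝ))) atTop (nhds 1) := by
    have t0 := tendsto_one_div_atTop_nhds_zero_nat.const_mul (s * (s + 1) / 2)
    have t1 : Tendsto (fun _ : ℕ => (1:ℝ)) atTop (nhds 1) := tendsto_const_nhds
    simpa using t1.add t0
  refine tendsto_of_tendsto_of_tendsto_of_le_of_le' L1 L2 ?_ ?_
  · filter_upwards [eventually_ge_atTop 1] with n hn using hlow n hn
  · filter_upwards [eventually_ge_atTop 1] with n hn using hup n hn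

open Filter in
lemma erw_w_close {s : ℝ} (hs : 0 < s) (hs1 : s < 1) {n : ℕ} (hn : 2 ≤ n) :
    |1 - erwW s n| ≤ erwCpsi s * (1 / (2 * ((n:ℝ) - 1) ^ 2)) := by
  have hlim : Tendsto (fun m => |erwW s m - erwW s n|) atTop (nhds |1 - erwW s n|) :=
    ((erw_w_tendsto hs hs1).sub tendsto_const_nhds).abs
  refine le_of_tendsto hlim ?_
  filter_upwards [eventually_ge_atTop n] with m hm
  refine (erw_tail hs hs1 hn m hm).trans ?_
  have hCnn := erwCpsi_nonneg hs.le
  have h2 : (2:ℝ) ≤ (m:ℝ) := by exact_mod_cast le_trans hn hm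
  have hpos : (0:ℝ) ≤ 1 / (2 * ((m:ℝ) - 1) ^ 2) := by positivity
  exact mul_le_mul_of_nonneg_left (by linarith) hCnn

open Real in
lemma erw_gamma_ratio {s : ℝ} (hs : 0 < s) (hs1 : s < 1) {n : ℕ} (hn : 2 ≤ n) :
    |erwG s n - erwT s n| ≤ 4 * erwCpsi s * (n:ℝ) ^ (s - 2) := by
  have hx2 : (2:ℝ) ≤ (n:ℝ) := by exact_mod_cast hn
  have hx0 : (0:ℝ) < (n:ℝ) := by linarith
  have hn1 : 1 ≤ n := le_trans one_le_two hn
  have hGpos := erwG_pos hs (s := s) (n := n)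
  have hCnn := erwCpsi_nonneg hs.le
  have hW : erwG s n - erwT s n = erwG s n * (1 - erwW s n) := by
    unfold erwW; field_simp
  have key : |erwG s n - erwT s n|
      ≤ ((n:ℝ) + 1) ^ s * (erwCpsi s * (1 / (2 * ((n:ℝ) - 1) ^ 2))) := by
    rw [hW, abs_mul, abs_of_pos hGpos]
    exact mul_le_mul (erwG_ub hs hs1 n) (erw_w_close hs hs1 hn) (abs_nonneg _)
      (rpow_nonneg (by positivity) _)
  have b1 : ((n:ℝ) + 1) ^ s ≤ 2 * (n:ℝ) ^ s := by
    calc ((n:ℝ) + 1) ^ s ≤ (2 * (n:ℝ)) ^ s :=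
          rpow_le_rpow (by positivity) (by linarith) hs.le
      _ = 2 ^ s * (n:ℝ) ^ s := mul_rpow (by norm_num) hx0.le
      _ ≤ 2 * (n:ℝ) ^ s := by
          have h21 : (2:ℝ) ^ s ≤ 2 ^ (1:ℝ) :=
            rpow_le_rpow_of_exponent_le one_le_two hs1.le
          rw [rpow_one] at h21
          exact mul_le_mul_of_nonneg_right h21 (rpow_nonneg hx0.le _)
  have b2 : 1 / (2 * ((n:ℝ) - 1) ^ 2) ≤ 2 / (n:ℝ) ^ 2 := by
    rw [div_le_div_iff₀ (by nlinarith) (by positivity)]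
    nlinarith
  have b3 : (n:ℝ) ^ (s - 2) = (n:ℝ) ^ s / (n:ℝ) ^ 2 := by
    rw [rpow_sub hx0, rpow_two]
  calc |erwG s n - erwT s n|
      ≤ ((n:ℝ) + 1) ^ s * (erwCpsi s * (1 / (2 * ((n:ℝ) - 1) ^ 2))) := key
    _ ≤ (2 * (n:ℝ) ^ s) * (erwCpsi s * (2 / (n:ℝ) ^ 2)) := by
        refine mul_le_mul b1 (mul_le_mul_of_nonneg_left b2 hCnn) (by positivity)
          (by positivity)
    _ = 4 * erwCpsi s * ((n:ℝ) ^ s / (n:ℝ) ^ 2) := by ring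
    _ = 4 * erwCpsi s * (n:ℝ) ^ (s - 2) := by rw [← b3]


/-- For the ERW with delays and full memory, as `n → ∞`,
`E[N*_{n+1}] = n^{1-r}/Γ(1-r) + n^{-r} (1-r)(2-r)/(2Γ(1-r)) + O(n^{-r-1})`. -/
theorem expected_nonzero_steps_asymptotics
    {Ω : Type*} [m0 : MeasurableSpace Ω] (μ : Measure Ω) [IsProbabilityMeasure μ]
    (𝓕 : Filtration ℕ m0) (r : ℝ) (hr0 : 0 < r) (hr1 : r < 1)
    (Istar : ℕ → Ω → ℝ)
    (h01 : ∀ n : ℕ, 1 ≤ n → ∀ ω, Istar n ω = 0 ∨ Istar n ω = 1)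
    (hadapt : ∀ n : ℕ, 1 ≤ n → StronglyMeasurable[𝓕 n] (Istar n))
    (hint : ∀ n : ℕ, 1 ≤ n → Integrable (Istar n) μ)
    (Nstar : ℕ → Ω → ℝ)
    (hN : ∀ n ω, Nstar n ω = ∑ k ∈ Finset.Icc 1 n, Istar k ω)
    (hI1 : ∫ ω, Istar 1 ω ∂μ = 1 - r)
    (hcond : ∀ n : ℕ, 1 ≤ n →
      (μ[Istar (n + 1)|𝓕 n]) =ᵐ[μ] fun ω => ((1 - r) / (n : ℝ)) * Nstar n ω) :
    (fun n : ℕ => (∫ ω, Nstar (n + 1) ω ∂μ)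
        - ((n : ℝ) ^ (1 - r) / Real.Gamma (1 - r)
            + (n : ℝ) ^ (-r) * ((1 - r) * (2 - r)) / (2 * Real.Gamma (1 - r))))
      =O[atTop] fun n : ℕ => (n : ℝ) ^ (-r - 1) := by
  set s : ℝ := 1 - r with hsdef
  have hs : 0 < s := by rw [hsdef]; linarith
  have hs1 : s < 1 := by rw [hsdef]; linarith
  have hΓpos : 0 < Real.Gamma s := Real.Gamma_pos_of_pos hs
  -- integrability of Nstar
  have hNint : ∀ n : ℕ, 1 ≤ n → Integrable (Nstar n) μ := by
    intro n hn
    have h1 : Integrable (fun ω => ∑ k ∈ Finset.Icc 1 n, Istar k ω) μ :=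
      integrable_finset_sum _ (fun k hk => hint k (Finset.mem_Icc.1 hk).1)
    exact h1.congr (Filter.EventuallyEq.of_eq (funext fun ω => (hN n ω).symm))
  -- the recursion for the expectations
  have hrecur : ∀ n : ℕ, 1 ≤ n →
      ∫ ω, Nstar (n + 1) ω ∂μ = (1 + s / (n:ℝ)) * ∫ ω, Nstar n ω ∂μ := by
    intro n hn
    have hnR : (0:ℝ) < (n:ℝ) := by exact_mod_cast hn
    have hIint : Integrable (Istar (n+1)) μ := hint _ (by omega)
    have h1 : ∫ ω, Nstar (n+1) ω ∂μ
        = ∫ ω, Nstar n ω ∂μ + ∫ ω, Istar (n+1) ω ∂μ := by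
      rw [show (∫ ω, Nstar (n+1) ω ∂μ) = ∫ ω, (Nstar n ω + Istar (n+1) ω) ∂μ by
        congr 1
        funext ω
        rw [hN, hN, Finset.sum_Icc_succ_top (by omega : 1 ≤ n + 1)]]
      exact integral_add (hNint n hn) hIint
    have h2 : ∫ ω, Istar (n+1) ω ∂μ = ((1 - r) / (n:ℝ)) * ∫ ω, Nstar n ω ∂μ := by
      have e1 : ∫ ω, (μ[Istar (n+1)|𝓕 n]) ω ∂μ = ∫ ω, Istar (n+1) ω ∂μ :=
        integral_condExp (𝓕.le n)
      have e2 : ∫ ω, (μ[Istar (n+1)|𝓕 n]) ω ∂μ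
          = ∫ ω, ((1 - r) / (n:ℝ)) * Nstar n ω ∂μ := integral_congr_ae (hcond n hn)
      rw [← e1, e2, integral_const_mul]
    rw [h1, h2, hsdef]
    field_simp
  -- closed formula via Gamma
  have hformula : ∀ n : ℕ, 1 ≤ n → ∫ ω, Nstar (n + 1) ω ∂μ
      = Real.Gamma ((n:ℝ) + 1 + s) / (Real.Gamma s * Real.Gamma ((n:ℝ) + 1)) := by
    intro n hn
    induction n, hn using Nat.le_induction with
    | base =>
      have hA1 : ∫ ω, Nstar 1 ω ∂μ = 1 - r := by
        rw [show (∫ ω, Nstar 1 ω ∂μ) = ∫ ω, Istar 1 ω ∂μ by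
          congr 1; funext ω; rw [hN]; simp]
        exact hI1
      rw [hrecur 1 le_rfl, hA1]
      have e2 : Real.Gamma ((1:ℕ) + 1 + s : ℝ) = (1 + s) * (s * Real.Gamma s) := by
        push_cast
        rw [show (1:ℝ) + 1 + s = (1 + s) + 1 by ring,
          Real.Gamma_add_one (by positivity : (1:ℝ) + s ≠ 0),
          show (1:ℝ) + s = s + 1 by ring, Real.Gamma_add_one hs.ne']
      have e3 : Real.Gamma ((1:ℕ) + 1 : ℝ) = 1 := by
        norm_num [Real.Gamma_two]
      rw [e2, e3, hsdef]
      push_cast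
      have hΓ' : Real.Gamma (1 - r) ≠ 0 := by rw [← hsdef]; exact hΓpos.ne'
      field_simp
    | succ n hn ih =>
      have hnR : (0:ℝ) < (n:ℝ) + 1 := by positivity
      have hg1 : Real.Gamma (((n+1:ℕ):ℝ) + 1 + s) = ((n:ℝ) + 1 + s) * Real.Gamma ((n:ℝ) + 1 + s) := by
        push_cast
        rw [show (n:ℝ) + 1 + 1 + s = ((n:ℝ) + 1 + s) + 1 by ring,
          Real.Gamma_add_one (by positivity : (n:ℝ) + 1 + s ≠ 0)]
      have hg2 : Real.Gamma (((n+1:ℕ):ℝ) + 1) = ((n:ℝ) + 1) * Real.Gamma ((n:ℝ) + 1) := by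
        push_cast
        rw [show (n:ℝ) + 1 + 1 = ((n:ℝ) + 1) + 1 by ring,
          Real.Gamma_add_one hnR.ne']
      have hGa := Real.Gamma_pos_of_pos (show (0:ℝ) < (n:ℝ) + 1 + s by positivity)
      have hGb := Real.Gamma_pos_of_pos hnR
      rw [hrecur (n+1) (by omega), ih, hg1, hg2]
      push_cast
      field_simp
  -- conclusion
  rw [Asymptotics.isBigO_iff]
  refine ⟨4 * erwCpsi s / Real.Gamma s, ?_⟩
  filter_upwards [Filter.eventually_ge_atTop 2] with n hn
  have hn1 : 1 ≤ n := le_trans one_le_two hn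
  have hx0 : (0:ℝ) < (n:ℝ) := by exact_mod_cast hn1
  have e1 : (-r : ℝ) = s - 1 := by rw [hsdef]; ring
  have e2 : (2 - r : ℝ) = s + 1 := by rw [hsdef]; ring
  have e3 : (-r - 1 : ℝ) = s - 2 := by rw [hsdef]; ring
  have hmain : Real.Gamma ((n:ℝ) + 1 + s) / (Real.Gamma s * Real.Gamma ((n:ℝ) + 1))
      - ((n:ℝ) ^ s / Real.Gamma s + (n:ℝ) ^ (-r) * (s * (2 - r)) / (2 * Real.Gamma s))
      = (erwG s n - erwT s n) / Real.Gamma s := by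
    rw [e1, e2]
    unfold erwG erwT
    have hGb := Real.Gamma_pos_of_pos (show (0:ℝ) < (n:ℝ) + 1 by positivity)
    field_simp
  rw [hformula n hn1, hmain, e3]
  rw [Real.norm_eq_abs, Real.norm_eq_abs, abs_div, abs_of_pos hΓpos,
    abs_of_nonneg (Real.rpow_nonneg hx0.le (s - 2))]
  rw [div_mul_eq_mul_div]
  gcongr
  exact erw_gamma_ratio hs hs1 hn
end

section
/- The series c_r = Σ_{k=1}^∞ Γ(k+1-r)/Γ(k+3-2r) converges, and with d_r = ((1-r)/Γ(1-r))·(c_r + Γ(1-r)/(2(1-r)·Γ(2(1-r)))), the second moment of the number of nonzero steps satisfies E[(N*_n)^2] = d_r·n^{2(1-r)} + o(n^{2(1-r)}) as n → ∞. -/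
open MeasureTheory Filter Asymptotics

open Topology

section ErwAux

/-- Log-convexity bound: `Γ(x+r) ≤ x^r Γ(x)` for `x > 0`, `0 ≤ r ≤ 1`. -/
lemma erw_gamma_logconvex {r x : ℝ} (hr0 : 0 ≤ r) (hr1 : r ≤ 1) (hx : 0 < x) :
    Real.Gamma (x + r) ≤ x ^ r * Real.Gamma x := by
  have h1 : (0:ℝ) < x + 1 := by linarith
  have hc := Real.convexOn_log_Gamma.2 (Set.mem_Ioi.mpr hx) (Set.mem_Ioi.mpr h1)
    (by linarith : (0:ℝ) ≤ 1 - r) hr0 (by ring)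
  have hxy : (1 - r) • x + r • (x + 1) = x + r := by simp [smul_eq_mul]; ring
  rw [hxy] at hc
  simp only [Function.comp_apply, smul_eq_mul] at hc
  have hGx : 0 < Real.Gamma x := Real.Gamma_pos_of_pos hx
  have hGx1 : Real.Gamma (x + 1) = x * Real.Gamma x := Real.Gamma_add_one hx.ne'
  have hGxr : 0 < Real.Gamma (x + r) := Real.Gamma_pos_of_pos (by linarith)
  have key : Real.log (Real.Gamma (x + r)) ≤ r * Real.log x + Real.log (Real.Gamma x) := by
    rw [hGx1] at hc
    rw [Real.log_mul hx.ne' hGx.ne'] at hc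
    nlinarith [hc]
  calc Real.Gamma (x + r) = Real.exp (Real.log (Real.Gamma (x + r))) :=
        (Real.exp_log hGxr).symm
    _ ≤ Real.exp (r * Real.log x + Real.log (Real.Gamma x)) := Real.exp_le_exp.mpr key
    _ = x ^ r * Real.Gamma x := by
        rw [Real.exp_add, Real.exp_log hGx, Real.rpow_def_of_pos hx, mul_comm r]


/-- The bound for the `k`-th term of the series. -/
lemma erw_term_le {r : ℝ} (hr0 : 0 < r) (hr1 : r < 1) (k : ℕ) (hk : 1 ≤ k) :
    Real.Gamma (((k : ℝ) + 1) + 1 - r) / Real.Gamma (((k : ℝ) + 1) + 3 - 2 * r)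
      ≤ ((k : ℝ)) ^ (-(2 - r)) := by
  set x : ℝ := (k : ℝ) + 2 - 2 * r with hxdef
  have hk1 : (1:ℝ) ≤ (k : ℝ) := by exact_mod_cast hk
  have hx : 0 < x := by simp only [hxdef]; linarith
  have hkx : (k : ℝ) ≤ x := by simp only [hxdef]; linarith
  have hkpos : (0:ℝ) < (k : ℝ) := by linarith
  have e1 : ((k : ℝ) + 1) + 1 - r = x + r := by simp only [hxdef]; ring
  have e2 : ((k : ℝ) + 1) + 3 - 2 * r = (x + 1) + 1 := by simp only [hxdef]; ring
  rw [e1, e2, Real.Gamma_add_one (by linarith : x + 1 ≠ 0),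
    Real.Gamma_add_one hx.ne']
  have hbound := erw_gamma_logconvex hr0.le hr1.le hx
  have hGx : 0 < Real.Gamma x := Real.Gamma_pos_of_pos hx
  have hden : (0:ℝ) < (x + 1) * (x * Real.Gamma x) := by positivity
  have hk1x : (k:ℝ) ≤ x + 1 := by linarith
  have hxr1 : x ^ (r - 1) ≤ (k:ℝ) ^ (r - 1) := by
    have e : ∀ y : ℝ, 0 < y → y ^ (r - 1) = (y ^ (1 - r))⁻¹ := by
      intro y hy
      rw [← Real.rpow_neg hy.le]
      norm_num
    rw [e x hx, e _ hkpos]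
    exact inv_anti₀ (Real.rpow_pos_of_pos hkpos _)
      (Real.rpow_le_rpow hkpos.le hkx (by linarith))
  calc Real.Gamma (x + r) / ((x + 1) * (x * Real.Gamma x))
      ≤ (x ^ r * Real.Gamma x) / ((x + 1) * (x * Real.Gamma x)) := by
        gcongr
    _ = x ^ (r - 1) / (x + 1) := by
        rw [Real.rpow_sub hx, Real.rpow_one]
        field_simp
    _ ≤ (k:ℝ) ^ (r - 1) / (k:ℝ) :=
        div_le_div₀ (Real.rpow_pos_of_pos hkpos _).le hxr1 hkpos hk1x
    _ = (k:ℝ) ^ (-(2 - r)) := by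
        rw [div_eq_mul_inv, ← Real.rpow_neg_one (k:ℝ), ← Real.rpow_add hkpos]
        congr 1; ring

lemma erw_summable {r : ℝ} (hr0 : 0 < r) (hr1 : r < 1) :
    Summable (fun k : ℕ =>
      Real.Gamma (((k : ℝ) + 1) + 1 - r) / Real.Gamma (((k : ℝ) + 1) + 3 - 2 * r)) := by
  rw [← summable_nat_add_iff 1]
  have hcomp : Summable (fun k : ℕ => ((k : ℝ) + 1) ^ (-(2 - r))) := by
    have h := Real.summable_nat_rpow.mpr (by linarith : -(2 - r) < -1)
    have h2 := (summable_nat_add_iff 1).mpr h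
    simpa using h2
  refine Summable.of_nonneg_of_le (fun k => ?_) (fun k => ?_) hcomp
  · apply div_nonneg
    · exact (Real.Gamma_pos_of_pos (by push_cast; linarith)).le
    · exact (Real.Gamma_pos_of_pos (by push_cast; linarith)).le
  · have h := erw_term_le hr0 hr1 (k + 1) (Nat.le_add_left 1 k)
    push_cast at h ⊢
    convert h using 3 <;> ring

lemma erw_gamma_ratio_s6 {a : ℝ} (ha : 0 < a) :
    Tendsto (fun n : ℕ => Real.Gamma ((n:ℝ) + a) / (Real.Gamma n * (n:ℝ) ^ a))
      atTop (𝓝 1) := by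
  have hGa : Real.Gamma a ≠ 0 := (Real.Gamma_pos_of_pos ha).ne'
  have hprod : ∀ n : ℕ, ∏ j ∈ Finset.range (n+1), (a + (j:ℝ))
      = Real.Gamma (a + (n:ℝ) + 1) / Real.Gamma a := by
    intro n
    induction n with
    | zero =>
      simp [Real.Gamma_add_one ha.ne']
      field_simp
    | succ n ih =>
      rw [Finset.prod_range_succ, ih]
      have h1 : a + ((n:ℕ):ℝ) + 1 ≠ 0 := by positivity
      have h2 : a + ((n+1:ℕ):ℝ) + 1 = (a + (n:ℝ) + 1) + 1 := by push_cast; ring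
      rw [h2, Real.Gamma_add_one h1]
      push_cast
      field_simp
      ring
  have key : Tendsto (fun n : ℕ => Real.Gamma (a + (n:ℝ) + 1) / ((n:ℝ) ^ a * (n.factorial : ℝ)))
      atTop (𝓝 1) := by
    have h1 : Tendsto (fun n : ℕ => Real.Gamma a / Real.GammaSeq a n) atTop
        (𝓝 (Real.Gamma a / Real.Gamma a)) :=
      Tendsto.div tendsto_const_nhds (Real.GammaSeq_tendsto_Gamma a) hGa
    rw [div_self hGa] at h1
    apply h1.congr'
    filter_upwards [eventually_ge_atTop 1] with n hn
    have hnpos : (0:ℝ) < (n:ℝ) := by exact_mod_cast hn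
    have hfac : (0:ℝ) < (n.factorial : ℝ) := by exact_mod_cast n.factorial_pos
    have hGpos : (0:ℝ) < Real.Gamma (a + (n:ℝ) + 1) := Real.Gamma_pos_of_pos (by positivity)
    have hrp : (0:ℝ) < (n:ℝ) ^ a := Real.rpow_pos_of_pos hnpos a
    rw [Real.GammaSeq, hprod n]
    field_simp
  have key2 : Tendsto (fun n : ℕ =>
      Real.Gamma (((n:ℝ) + 1) + a) / (Real.Gamma ((n:ℝ) + 1) * ((n:ℝ) + 1) ^ a))
      atTop (𝓝 1) := by
    have hratio : Tendsto (fun n : ℕ => ((n:ℝ) / ((n:ℝ) + 1)) ^ a) atTop (𝓝 1) := by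
      have h := tendsto_natCast_div_add_atTop (1:ℝ)
      have := h.rpow_const (Or.inr ha.le)
      simpa using this
    have := key.mul hratio
    rw [mul_one] at this
    apply this.congr'
    filter_upwards [eventually_ge_atTop 1] with n hn
    have hnpos : (0:ℝ) < (n:ℝ) := by exact_mod_cast hn
    have hfac : (0:ℝ) < (n.factorial : ℝ) := by exact_mod_cast n.factorial_pos
    have hrp : (0:ℝ) < (n:ℝ) ^ a := Real.rpow_pos_of_pos hnpos a
    have hrp1 : (0:ℝ) < ((n:ℝ) + 1) ^ a := Real.rpow_pos_of_pos (by positivity) a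
    have hGn1 : Real.Gamma ((n:ℝ) + 1) = (n.factorial : ℝ) := by
      exact_mod_cast Real.Gamma_nat_eq_factorial n
    have harg : ((n:ℝ) + 1) + a = a + (n:ℝ) + 1 := by ring
    have hdivpow : ((n:ℝ) / ((n:ℝ) + 1)) ^ a = (n:ℝ) ^ a / ((n:ℝ) + 1) ^ a :=
      Real.div_rpow hnpos.le (by positivity : (0:ℝ) ≤ (n:ℝ)+1) a
    rw [hdivpow, harg, hGn1]
    field_simp
  rw [← tendsto_add_atTop_iff_nat 1]
  apply key2.congr
  intro n
  norm_cast

end ErwAux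

set_option maxHeartbeats 1600000 in

/-- For the ERW with delays and full memory: the series
`c_r = ∑_{k=1}^∞ Γ(k+1-r)/Γ(k+3-2r)` converges, and with
`d_r = ((1-r)/Γ(1-r)) (c_r + Γ(1-r)/(2(1-r)Γ(2(1-r))))`, the second moment of the
number of nonzero steps satisfies `E[(N*_n)^2] = d_r n^{2(1-r)} + o(n^{2(1-r)})`. -/
theorem second_moment_nonzero_steps
    {Ω : Type*} [m0 : MeasurableSpace Ω] (μ : Measure Ω) [IsProbabilityMeasure μ]
    (𝓕 : Filtration ℕ m0) (r : ℝ) (hr0 : 0 < r) (hr1 : r < 1)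
    (Istar : ℕ → Ω → ℝ)
    (h01 : ∀ n : ℕ, 1 ≤ n → ∀ ω, Istar n ω = 0 ∨ Istar n ω = 1)
    (hadapt : ∀ n : ℕ, 1 ≤ n → StronglyMeasurable[𝓕 n] (Istar n))
    (hint : ∀ n : ℕ, 1 ≤ n → Integrable (Istar n) μ)
    (Nstar : ℕ → Ω → ℝ)
    (hN : ∀ n ω, Nstar n ω = ∑ k ∈ Finset.Icc 1 n, Istar k ω)
    (hI1 : ∫ ω, Istar 1 ω ∂μ = 1 - r)
    (hcond : ∀ n : ℕ, 1 ≤ n →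
      (μ[Istar (n + 1)|𝓕 n]) =ᵐ[μ] fun ω => ((1 - r) / (n : ℝ)) * Nstar n ω)
    (cr dr : ℝ)
    (hcr : cr = ∑' k : ℕ,
      Real.Gamma (((k : ℝ) + 1) + 1 - r) / Real.Gamma (((k : ℝ) + 1) + 3 - 2 * r))
    (hdr : dr = (1 - r) / Real.Gamma (1 - r)
      * (cr + Real.Gamma (1 - r) / (2 * (1 - r) * Real.Gamma (2 * (1 - r))))) :
    Summable (fun k : ℕ =>
      Real.Gamma (((k : ℝ) + 1) + 1 - r) / Real.Gamma (((k : ℝ) + 1) + 3 - 2 * r)) ∧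
    (fun n : ℕ => (∫ ω, (Nstar n ω) ^ 2 ∂μ) - dr * (n : ℝ) ^ (2 * (1 - r)))
      =o[atTop] fun n : ℕ => (n : ℝ) ^ (2 * (1 - r)) := by
  have hsum := erw_summable hr0 hr1
  refine ⟨hsum, ?_⟩
  set f : ℕ → ℝ := fun k =>
    Real.Gamma (((k : ℝ) + 1) + 1 - r) / Real.Gamma (((k : ℝ) + 1) + 3 - 2 * r) with hfdef
  -- positivity of various Gamma values
  have hG1r : 0 < Real.Gamma (1 - r) := Real.Gamma_pos_of_pos (by linarith)
  have hG3 : 0 < Real.Gamma (3 - 2 * r) := Real.Gamma_pos_of_pos (by linarith)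
  have hG2 : 0 < Real.Gamma (2 - 2 * r) := Real.Gamma_pos_of_pos (by linarith)
  -- pointwise bounds on the indicators
  have hIbd : ∀ n : ℕ, 1 ≤ n → ∀ ω, 0 ≤ Istar n ω ∧ Istar n ω ≤ 1 := by
    intro n hn ω
    rcases h01 n hn ω with h | h <;> rw [h] <;> norm_num
  have hIsq : ∀ n : ℕ, 1 ≤ n → ∀ ω, Istar n ω ^ 2 = Istar n ω := by
    intro n hn ω
    rcases h01 n hn ω with h | h <;> rw [h] <;> norm_num
  -- measurability of Nstar
  have hNfun : ∀ n : ℕ, Nstar n = fun ω => ∑ k ∈ Finset.Icc 1 n, Istar k ω :=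
    fun n => funext (hN n)
  have hNmeas : ∀ n : ℕ, 1 ≤ n → StronglyMeasurable[𝓕 n] (Nstar n) := by
    intro n hn
    rw [hNfun n]
    refine Finset.stronglyMeasurable_fun_sum _ fun k hk => ?_
    rw [Finset.mem_Icc] at hk
    exact (hadapt k hk.1).mono (𝓕.mono hk.2)
  have hNmeas0 : ∀ n : ℕ, 1 ≤ n → StronglyMeasurable[m0] (Nstar n) :=
    fun n hn => (hNmeas n hn).mono (𝓕.le n)
  have hNbd : ∀ n : ℕ, ∀ ω, 0 ≤ Nstar n ω ∧ Nstar n ω ≤ n := by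
    intro n ω
    rw [hN]
    constructor
    · exact Finset.sum_nonneg fun k hk => (hIbd k (Finset.mem_Icc.mp hk).1 ω).1
    · calc ∑ k ∈ Finset.Icc 1 n, Istar k ω ≤ ∑ k ∈ Finset.Icc 1 n, 1 :=
            Finset.sum_le_sum fun k hk => (hIbd k (Finset.mem_Icc.mp hk).1 ω).2
        _ = n := by simp
  have hNint : ∀ n : ℕ, Integrable (Nstar n) μ := by
    intro n
    rw [hNfun n]
    exact integrable_finset_sum _ fun k hk => hint k (Finset.mem_Icc.mp hk).1
  have hNsqint : ∀ n : ℕ, 1 ≤ n → Integrable (fun ω => (Nstar n ω) ^ 2) μ := by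
    intro n hn
    refine Integrable.mono' (integrable_const ((n : ℝ) ^ 2))
      ?_ (Filter.Eventually.of_forall fun ω => ?_)
    · have h := hNmeas0 n hn
      have : (fun ω => (Nstar n ω) ^ 2) = fun ω => Nstar n ω * Nstar n ω := by
        funext ω; ring
      rw [this]; exact (h.mul h).aestronglyMeasurable
    · have h1 := (hNbd n ω).1
      have h2 := (hNbd n ω).2
      rw [Real.norm_eq_abs, abs_of_nonneg (by positivity)]
      nlinarith
  have hNIint : ∀ n : ℕ, 1 ≤ n → Integrable (fun ω => Nstar n ω * Istar (n + 1) ω) μ := by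
    intro n hn
    refine Integrable.mono' (integrable_const ((n : ℝ)))
      ?_ (Filter.Eventually.of_forall fun ω => ?_)
    · exact ((hNmeas0 n hn).mul
        ((hadapt (n + 1) (by omega)).mono (𝓕.le (n + 1)))).aestronglyMeasurable
    · have h1 := (hNbd n ω).1
      have h2 := (hNbd n ω).2
      have h3 := (hIbd (n + 1) (by omega) ω).1
      have h4 := (hIbd (n + 1) (by omega) ω).2
      rw [Real.norm_eq_abs, abs_of_nonneg (by positivity)]
      nlinarith
  set A : ℕ → ℝ := fun n => ∫ ω, (Nstar n ω) ^ 2 ∂μ with hAdef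
  set B : ℕ → ℝ := fun n => ∫ ω, Nstar n ω ∂μ with hBdef
  -- initial values
  have hN1 : Nstar 1 = Istar 1 := by
    funext ω; rw [hN]; simp
  have hB1 : B 1 = 1 - r := by
    simp only [hBdef]
    rw [show (fun ω => Nstar 1 ω) = Istar 1 from hN1 ▸ rfl, hI1]
  have hA1 : A 1 = 1 - r := by
    simp only [hAdef]
    have : (fun ω => (Nstar 1 ω) ^ 2) = Istar 1 := by
      funext ω; rw [hN1]; exact hIsq 1 le_rfl ω
    rw [this, hI1]
  -- expectation of Istar (n+1)
  have hIexp : ∀ n : ℕ, 1 ≤ n → ∫ ω, Istar (n + 1) ω ∂μ = (1 - r) / n * B n := by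
    intro n hn
    rw [← integral_condExp (𝓕.le n) (f := Istar (n + 1)),
      integral_congr_ae (hcond n hn), integral_const_mul]
  -- expectation of Nstar n * Istar (n+1)
  have hNIexp : ∀ n : ℕ, 1 ≤ n →
      ∫ ω, Nstar n ω * Istar (n + 1) ω ∂μ = (1 - r) / n * A n := by
    intro n hn
    have hpull : μ[Nstar n * Istar (n + 1)|𝓕 n] =ᵐ[μ] Nstar n * μ[Istar (n + 1)|𝓕 n] :=
      condExp_mul_of_stronglyMeasurable_left (hNmeas n hn) (hNIint n hn) (hint (n + 1) (by omega))
    have hae : μ[Nstar n * Istar (n + 1)|𝓕 n] =ᵐ[μ]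
        fun ω => Nstar n ω * ((1 - r) / n * Nstar n ω) := by
      refine hpull.trans ?_
      filter_upwards [hcond n hn] with ω hω
      simp only [Pi.mul_apply, hω]
    calc ∫ ω, Nstar n ω * Istar (n + 1) ω ∂μ
        = ∫ ω, (μ[Nstar n * Istar (n + 1)|𝓕 n]) ω ∂μ :=
          (integral_condExp (𝓕.le n)).symm
      _ = ∫ ω, Nstar n ω * ((1 - r) / n * Nstar n ω) ∂μ := integral_congr_ae hae
      _ = ∫ ω, (1 - r) / n * (Nstar n ω) ^ 2 ∂μ := by
          congr 1; funext ω; ring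
      _ = (1 - r) / n * A n := by rw [integral_const_mul]
  -- one-step decomposition
  have hNsucc : ∀ n : ℕ, 1 ≤ n → ∀ ω, Nstar (n + 1) ω = Nstar n ω + Istar (n + 1) ω := by
    intro n hn ω
    rw [hN, hN, Finset.sum_Icc_succ_top (by omega : 1 ≤ n + 1)]
  -- recursions
  have hBrec : ∀ n : ℕ, 1 ≤ n → B (n + 1) = B n + (1 - r) / n * B n := by
    intro n hn
    have : (fun ω => Nstar (n + 1) ω) = fun ω => Nstar n ω + Istar (n + 1) ω :=
      funext (hNsucc n hn)
    simp only [hBdef]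
    rw [this, integral_add (hNint n) (hint (n + 1) (by omega)), hIexp n hn]
  have hArec : ∀ n : ℕ, 1 ≤ n →
      A (n + 1) = A n + 2 * ((1 - r) / n) * A n + (1 - r) / n * B n := by
    intro n hn
    have hexp : (fun ω => (Nstar (n + 1) ω) ^ 2) =
        fun ω => ((Nstar n ω) ^ 2 + 2 * (Nstar n ω * Istar (n + 1) ω)) + Istar (n + 1) ω := by
      funext ω
      rw [hNsucc n hn ω]
      have := hIsq (n + 1) (by omega) ω
      nlinarith [this]
    have hint2 : Integrable (fun ω => 2 * (Nstar n ω * Istar (n + 1) ω)) μ :=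
      (hNIint n hn).const_mul 2
    have hint12 : Integrable (fun ω => (Nstar n ω) ^ 2
        + 2 * (Nstar n ω * Istar (n + 1) ω)) μ := (hNsqint n hn).add hint2
    simp only [hAdef]
    rw [hexp, integral_add hint12 (hint (n + 1) (by omega)),
      integral_add (hNsqint n hn) hint2,
      integral_const_mul, hNIexp n hn, hIexp n hn]
    ring
  -- closed form for B
  have hBform : ∀ m : ℕ, B (m + 1) =
      Real.Gamma ((m : ℝ) + 2 - r) / (Real.Gamma (1 - r) * Real.Gamma ((m : ℝ) + 1)) := by
    intro m
    induction m with
    | zero =>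
      rw [hB1, show ((0:ℕ) : ℝ) + 2 - r = (1 - r) + 1 by push_cast; ring,
        show ((0:ℕ) : ℝ) + 1 = 1 by push_cast; ring,
        Real.Gamma_add_one (by intro hc; linarith), Real.Gamma_one]
      field_simp
    | succ m ih =>
      have hm1 : (1 : ℕ) ≤ m + 1 := by omega
      have hrec := hBrec (m + 1) hm1
      rw [show m + 1 + 1 = m + 2 from rfl] at hrec
      rw [hrec, ih]
      have hX : (0:ℝ) < (m : ℝ) + 1 := by positivity
      have hGX : 0 < Real.Gamma ((m : ℝ) + 1) := Real.Gamma_pos_of_pos hX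
      have e1 : ((m + 1 : ℕ) : ℝ) + 2 - r = ((m : ℝ) + 2 - r) + 1 := by push_cast; ring
      have e2 : ((m + 1 : ℕ) : ℝ) + 1 = ((m : ℝ) + 1) + 1 := by push_cast; ring
      have hne1 : (m : ℝ) + 2 - r ≠ 0 := by
        have h0 : (0:ℝ) ≤ (m : ℝ) := Nat.cast_nonneg m
        intro hc; linarith
      rw [e1, e2, Real.Gamma_add_one hne1, Real.Gamma_add_one hX.ne']
      push_cast
      field_simp
      ring
  -- closed form for A
  have hAform : ∀ m : ℕ, A (m + 1) =
      Real.Gamma ((m : ℝ) + 3 - 2 * r) / (Real.Gamma (3 - 2 * r) * Real.Gamma ((m : ℝ) + 1))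
        * ((1 - r) * (1 + Real.Gamma (3 - 2 * r) / Real.Gamma (1 - r)
            * ∑ k ∈ Finset.range m, f k)) := by
    intro m
    induction m with
    | zero =>
      rw [hA1, show ((0:ℕ) : ℝ) + 3 - 2 * r = 3 - 2 * r by push_cast; ring,
        show ((0:ℕ) : ℝ) + 1 = 1 by push_cast; ring, Real.Gamma_one,
        Finset.sum_range_zero]
      field_simp
      have h3 : Real.Gamma (3 - r * 2) ≠ 0 := by
        rw [show (3:ℝ) - r * 2 = 3 - 2 * r by ring]; exact hG3.ne'
      simp only [mul_zero, add_zero]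
      rw [eq_div_iff h3]
      ring
    | succ m ih =>
      have hm1 : (1 : ℕ) ≤ m + 1 := by omega
      have hrec := hArec (m + 1) hm1
      rw [show m + 1 + 1 = m + 2 from rfl] at hrec
      rw [hrec, ih, hBform m, Finset.sum_range_succ]
      have hX : (0:ℝ) < (m : ℝ) + 1 := by positivity
      have hGX : 0 < Real.Gamma ((m : ℝ) + 1) := Real.Gamma_pos_of_pos hX
      have hG1 : 0 < Real.Gamma ((m : ℝ) + 3 - 2 * r) := Real.Gamma_pos_of_pos (by linarith)
      have hG4 : 0 < Real.Gamma ((m : ℝ) + 2 - r) := Real.Gamma_pos_of_pos (by linarith)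
      have e1 : ((m + 1 : ℕ) : ℝ) + 3 - 2 * r = ((m : ℝ) + 3 - 2 * r) + 1 := by push_cast; ring
      have e2 : ((m + 1 : ℕ) : ℝ) + 1 = ((m : ℝ) + 1) + 1 := by push_cast; ring
      have hfm : f m = Real.Gamma ((m : ℝ) + 2 - r)
          / (((m : ℝ) + 3 - 2 * r) * Real.Gamma ((m : ℝ) + 3 - 2 * r)) := by
        simp only [hfdef]
        have hne2 : (m : ℝ) + 3 - 2 * r ≠ 0 := by
          have h0 : (0:ℝ) ≤ (m : ℝ) := Nat.cast_nonneg m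
          intro hc; linarith
        rw [show ((m : ℝ) + 1) + 3 - 2 * r = ((m : ℝ) + 3 - 2 * r) + 1 by ring,
          Real.Gamma_add_one hne2, show ((m : ℝ) + 1) + 1 - r = (m : ℝ) + 2 - r by ring]
      have hne2 : (m : ℝ) + 3 - 2 * r ≠ 0 := by
        have h0 : (0:ℝ) ≤ (m : ℝ) := Nat.cast_nonneg m
        intro hc; linarith
      rw [e1, e2, Real.Gamma_add_one hne2, Real.Gamma_add_one hX.ne', hfm]
      push_cast
      field_simp
      ring
  -- limit of partial sums
  have hSsum : Filter.Tendsto (fun m : ℕ => ∑ k ∈ Finset.range m, f k) atTop (𝓝 cr) := by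
    rw [hcr]
    exact hsum.hasSum.tendsto_sum_nat
  -- Gamma ratio limit
  have hratio := erw_gamma_ratio_s6 (a := 2 - 2 * r) (by linarith)
  have hratio1 : Filter.Tendsto (fun m : ℕ =>
      Real.Gamma (((m : ℝ) + 1) + (2 - 2 * r))
        / (Real.Gamma ((m : ℝ) + 1) * ((m : ℝ) + 1) ^ (2 - 2 * r))) atTop (𝓝 1) := by
    have := hratio.comp (tendsto_add_atTop_nat 1)
    apply this.congr
    intro m
    simp only [Function.comp_apply]
    push_cast
    ring_nf
  -- main limit
  have hmain : Filter.Tendsto (fun m : ℕ => A (m + 1) / ((m : ℝ) + 1) ^ (2 * (1 - r)))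
      atTop (𝓝 dr) := by
    have heq : ∀ m : ℕ, A (m + 1) / ((m : ℝ) + 1) ^ (2 * (1 - r)) =
        (Real.Gamma (((m : ℝ) + 1) + (2 - 2 * r))
          / (Real.Gamma ((m : ℝ) + 1) * ((m : ℝ) + 1) ^ (2 - 2 * r)))
        * ((1 / Real.Gamma (3 - 2 * r)) * ((1 - r) * (1 + Real.Gamma (3 - 2 * r)
            / Real.Gamma (1 - r) * ∑ k ∈ Finset.range m, f k))) := by
      intro m
      have hX : (0:ℝ) < (m : ℝ) + 1 := by positivity
      have hGX : 0 < Real.Gamma ((m : ℝ) + 1) := Real.Gamma_pos_of_pos hX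
      have hrp : (0:ℝ) < ((m : ℝ) + 1) ^ (2 - 2 * r) := Real.rpow_pos_of_pos hX _
      rw [hAform m, show (2 : ℝ) * (1 - r) = 2 - 2 * r by ring,
        show ((m : ℝ) + 1) + (2 - 2 * r) = (m : ℝ) + 3 - 2 * r by ring]
      have hGA : 0 < Real.Gamma ((m : ℝ) + 3 - 2 * r) := by
        apply Real.Gamma_pos_of_pos
        have h0 : (0:ℝ) ≤ (m : ℝ) := Nat.cast_nonneg m
        linarith
      set S := ∑ k ∈ Finset.range m, f k
      set GA := Real.Gamma ((m : ℝ) + 3 - 2 * r)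
      set GX := Real.Gamma ((m : ℝ) + 1)
      set G3 := Real.Gamma (3 - 2 * r)
      set G1 := Real.Gamma (1 - r)
      set P := ((m : ℝ) + 1) ^ (2 - 2 * r)
      field_simp
      try ring
      try tauto
    rw [funext heq]
    have hlim := hratio1.mul (Filter.Tendsto.const_mul
      ((1 : ℝ) / Real.Gamma (3 - 2 * r))
      (Filter.Tendsto.const_mul (1 - r)
        (Filter.Tendsto.const_add 1 (Filter.Tendsto.const_mul
          (Real.Gamma (3 - 2 * r) / Real.Gamma (1 - r)) hSsum))))
    rw [one_mul] at hlim
    have hval : (1 : ℝ) / Real.Gamma (3 - 2 * r) * ((1 - r)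
        * (1 + Real.Gamma (3 - 2 * r) / Real.Gamma (1 - r) * cr)) = dr := by
      have hG3eq : Real.Gamma (3 - 2 * r) = (2 - 2 * r) * Real.Gamma (2 - 2 * r) := by
        rw [show (3:ℝ) - 2 * r = (2 - 2 * r) + 1 by ring,
          Real.Gamma_add_one (by intro hc; linarith)]
      rw [hdr, show (2:ℝ) * (1 - r) = 2 - 2 * r by ring, hG3eq]
      have h1 : (1:ℝ) - r ≠ 0 := by intro hc; linarith
      have h2 : (2:ℝ) - 2 * r ≠ 0 := by intro hc; linarith
      set G1 := Real.Gamma (1 - r)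
      set G2 := Real.Gamma (2 - 2 * r)
      have hG1ne : G1 ≠ 0 := hG1r.ne'
      have hG2ne : G2 ≠ 0 := hG2.ne'
      field_simp
      ring
    rwa [hval] at hlim
  -- convert to the little-o statement
  have hAll : Filter.Tendsto (fun n : ℕ => A n / (n : ℝ) ^ (2 * (1 - r))) atTop (𝓝 dr) := by
    rw [← tendsto_add_atTop_iff_nat 1]
    apply hmain.congr
    intro m
    push_cast
    ring_nf
  rw [Asymptotics.isLittleO_iff_tendsto']
  · have h2 : Filter.Tendsto (fun n : ℕ => A n / (n : ℝ) ^ (2 * (1 - r)) - dr)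
        atTop (𝓝 0) := by
      simpa using hAll.sub_const dr
    apply h2.congr'
    filter_upwards [Filter.eventually_ge_atTop 1] with n hn
    have hX : (0:ℝ) < (n : ℝ) := by exact_mod_cast hn
    have hrp : (0:ℝ) < (n : ℝ) ^ (2 * (1 - r)) := Real.rpow_pos_of_pos hX _
    rw [sub_div, mul_div_cancel_right₀ dr hrp.ne']
  · filter_upwards [Filter.eventually_ge_atTop 1] with n hn h
    have hX : (0:ℝ) < (n : ℝ) := by exact_mod_cast hn
    have hrp : (0:ℝ) < (n : ℝ) ^ (2 * (1 - r)) := Real.rpow_pos_of_pos hX _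
    exact absurd h hrp.ne'
end

section
/- Let M*_n = α*_n·N*_n with α*_k = Γ(k)·Γ(2-r)/Γ(k+1-r), and let ε*_{n+1} = M*_{n+1} - M*_n be the martingale differences. Then E[(ε*_{n+1})^2 | F_n] = (α*_{n+1})^2·( ((1-r)/n)·N*_n - ((1-r)^2/n^2)·(N*_n)^2 ) almost surely, E[(ε*_{n+1})^2] ~ (1-r)^3·Γ(1-r)·n^{r-2} as n → ∞, and the expected value of the predictable quadratic variation ⟨M*⟩_n = Σ_{k=1}^n E[(ε*_k)^2 | F_{k-1}] remains bounded: sup_n E[⟨M*⟩_n] < ∞. -/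
open MeasureTheory Filter Asymptotics Topology

/-- arithmetic helper for the second-moment induction -/
private lemma aux_quad (c E v K : ℝ) (hc : 0 ≤ c) (hE : 0 ≤ E) (hK : 0 ≤ K)
    (h : v ≤ K * E ^ 2 - E) :
    v + 2 * (c * v) + c * E ≤ K * ((1 + c) * E) ^ 2 - (1 + c) * E := by
  nlinarith [mul_le_mul_of_nonneg_left h (by linarith : (0:ℝ) ≤ 1 + 2 * c),
    mul_nonneg (mul_nonneg hK (sq_nonneg c)) (sq_nonneg E)]

set_option maxHeartbeats 1600000 in
/-- For the ERW with delays and full memory: with `M*_n = α*_n N*_n`,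
`α*_k = Γ(k)Γ(2-r)/Γ(k+1-r)`, and martingale differences `ε*_{n+1} = M*_{n+1} - M*_n`
(with `ε*_1 = M*_1 - (1-r)`), one has
`E[(ε*_{n+1})² ∣ 𝓕_n] = (α*_{n+1})² (((1-r)/n) N*_n - ((1-r)²/n²) (N*_n)²)` a.s.,
`E[(ε*_{n+1})²] ∼ (1-r)³ Γ(1-r) n^{r-2}`, and the expected predictable quadratic
variation `E⟨M*⟩_n` stays bounded. -/
theorem martingale_difference_brackets
    {Ω : Type*} [m0 : MeasurableSpace Ω] (μ : Measure Ω) [IsProbabilityMeasure μ]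
    (𝓕 : Filtration ℕ m0) (r : ℝ) (hr0 : 0 < r) (hr1 : r < 1)
    (Istar : ℕ → Ω → ℝ)
    (h01 : ∀ n : ℕ, 1 ≤ n → ∀ ω, Istar n ω = 0 ∨ Istar n ω = 1)
    (hadapt : ∀ n : ℕ, 1 ≤ n → StronglyMeasurable[𝓕 n] (Istar n))
    (hint : ∀ n : ℕ, 1 ≤ n → Integrable (Istar n) μ)
    (Nstar : ℕ → Ω → ℝ)
    (hN : ∀ n ω, Nstar n ω = ∑ k ∈ Finset.Icc 1 n, Istar k ω)
    (hI1 : ∫ ω, Istar 1 ω ∂μ = 1 - r)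
    (hcond : ∀ n : ℕ, 1 ≤ n →
      (μ[Istar (n + 1)|𝓕 n]) =ᵐ[μ] fun ω => ((1 - r) / (n : ℝ)) * Nstar n ω)
    (astar : ℕ → ℝ)
    (hastar : ∀ k : ℕ, astar k
      = Real.Gamma (k : ℝ) * Real.Gamma (2 - r) / Real.Gamma ((k : ℝ) + 1 - r))
    (Mstar : ℕ → Ω → ℝ) (hMstar : ∀ n ω, Mstar n ω = astar n * Nstar n ω)
    (eps : ℕ → Ω → ℝ)
    (heps1 : ∀ ω, eps 1 ω = Mstar 1 ω - (1 - r))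
    (heps : ∀ n : ℕ, 2 ≤ n → ∀ ω, eps n ω = Mstar n ω - Mstar (n - 1) ω) :
    (∀ n : ℕ, 1 ≤ n →
      (μ[fun ω => (eps (n + 1) ω) ^ 2|𝓕 n]) =ᵐ[μ]
        fun ω => (astar (n + 1)) ^ 2
          * (((1 - r) / (n : ℝ)) * Nstar n ω
              - ((1 - r) ^ 2 / (n : ℝ) ^ 2) * (Nstar n ω) ^ 2)) ∧
    ((fun n : ℕ => ∫ ω, (eps (n + 1) ω) ^ 2 ∂μ)
      ~[atTop] fun n : ℕ => (1 - r) ^ 3 * Real.Gamma (1 - r) * (n : ℝ) ^ (r - 2)) ∧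
    (∃ C : ℝ, ∀ n : ℕ, 1 ≤ n →
      (∫ ω, ((eps 1 ω) ^ 2
          + ∑ k ∈ Finset.Icc 2 n, (μ[fun ω' => (eps k ω') ^ 2|𝓕 (k - 1)]) ω) ∂μ) ≤ C) := by
  have hr1' : (0:ℝ) < 1 - r := by linarith
  have hγ1 : 0 < Real.Gamma (1 - r) := Real.Gamma_pos_of_pos hr1'
  have hγ2 : 0 < Real.Gamma (2 - r) := Real.Gamma_pos_of_pos (by linarith)
  have hγ21 : Real.Gamma (2 - r) = (1 - r) * Real.Gamma (1 - r) := by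
    have := Real.Gamma_add_one (s := 1 - r) (ne_of_gt hr1')
    rw [show (1:ℝ) - r + 1 = 2 - r by ring] at this
    exact this
  -- ## basic facts about astar
  have hapos : ∀ n : ℕ, 1 ≤ n → 0 < astar n := by
    intro n hn
    have hn0 : (0:ℝ) < n := by exact_mod_cast hn
    rw [hastar]
    have h1 : 0 < Real.Gamma (n : ℝ) := Real.Gamma_pos_of_pos hn0
    have h2 : 0 < Real.Gamma ((n : ℝ) + 1 - r) := Real.Gamma_pos_of_pos (by linarith)
    positivity
  have harec : ∀ n : ℕ, 1 ≤ n → astar (n + 1) * ((n : ℝ) + 1 - r) = astar n * n := by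
    intro n hn
    have hn0 : (0:ℝ) < n := by exact_mod_cast hn
    have h1 : Real.Gamma ((n:ℝ) + 1) = n * Real.Gamma n := Real.Gamma_add_one (ne_of_gt hn0)
    have h2 : Real.Gamma (((n:ℝ) + 1) + 1 - r) = ((n:ℝ) + 1 - r) * Real.Gamma ((n:ℝ) + 1 - r) := by
      have := Real.Gamma_add_one (s := (n:ℝ) + 1 - r) (ne_of_gt (by linarith))
      rw [show (n:ℝ) + 1 - r + 1 = ((n:ℝ) + 1) + 1 - r by ring] at this
      exact this
    have h3 : Real.Gamma ((n:ℝ) + 1 - r) ≠ 0 := ne_of_gt (Real.Gamma_pos_of_pos (by linarith))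
    have h4 : (n:ℝ) + 1 - r ≠ 0 := ne_of_gt (by linarith)
    rw [hastar (n+1), hastar n]
    push_cast
    rw [h1, h2]
    field_simp [h3, h4]
  have ha1 : astar 1 = 1 := by
    rw [hastar 1]
    norm_num
    exact ne_of_gt hγ2
  have hale : ∀ n : ℕ, 1 ≤ n → astar (n + 1) ≤ astar n := by
    intro n hn
    have hn0 : (0:ℝ) < n := by exact_mod_cast hn
    have h := harec n hn
    nlinarith [hapos (n+1) (by omega), hapos n hn]
  -- ## basic facts about Nstar
  have hNsucc : ∀ (n : ℕ) (ω : Ω), Nstar (n + 1) ω = Nstar n ω + Istar (n + 1) ω := by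
    intro n ω
    rw [hN, hN, Finset.sum_Icc_succ_top (by omega : 1 ≤ n + 1)]
  have hNnn : ∀ (n : ℕ) (ω : Ω), 0 ≤ Nstar n ω := by
    intro n ω
    rw [hN]
    refine Finset.sum_nonneg fun k hk => ?_
    rcases h01 k (Finset.mem_Icc.mp hk).1 ω with h | h <;> rw [h] <;> norm_num
  have hNle : ∀ (n : ℕ) (ω : Ω), Nstar n ω ≤ n := by
    intro n ω
    rw [hN]
    calc ∑ k ∈ Finset.Icc 1 n, Istar k ω ≤ ∑ _k ∈ Finset.Icc 1 n, (1:ℝ) :=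
          Finset.sum_le_sum fun k hk => by
            rcases h01 k (Finset.mem_Icc.mp hk).1 ω with h | h <;> rw [h] <;> norm_num
      _ = n := by simp [Nat.card_Icc]
  have hNmeas : ∀ n : ℕ, StronglyMeasurable[𝓕 n] (Nstar n) := by
    intro n
    have h : StronglyMeasurable[𝓕 n] (fun ω => ∑ k ∈ Finset.Icc 1 n, Istar k ω) :=
      Finset.stronglyMeasurable_fun_sum _ fun k hk =>
        (hadapt k (Finset.mem_Icc.mp hk).1).mono (𝓕.mono (Finset.mem_Icc.mp hk).2)
    have heq : Nstar n = fun ω => ∑ k ∈ Finset.Icc 1 n, Istar k ω := funext (hN n)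
    rw [heq]; exact h
  have hNint : ∀ n : ℕ, Integrable (Nstar n) μ := by
    intro n
    have h : Integrable (fun ω => ∑ k ∈ Finset.Icc 1 n, Istar k ω) μ :=
      integrable_finset_sum _ fun k hk => hint k (Finset.mem_Icc.mp hk).1
    have heq : Nstar n = fun ω => ∑ k ∈ Finset.Icc 1 n, Istar k ω := funext (hN n)
    rw [heq]; exact h
  have hNnorm : ∀ (n : ℕ) (ω : Ω), ‖Nstar n ω‖ ≤ (n:ℝ) := by
    intro n ω
    rw [Real.norm_eq_abs, abs_le]
    exact ⟨by linarith [hNnn n ω, Nat.cast_nonneg (α := ℝ) n], hNle n ω⟩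
  have hNsq_int : ∀ n : ℕ, Integrable (fun ω => (Nstar n ω) ^ 2) μ := by
    intro n
    have h : Integrable (fun ω => Nstar n ω * Nstar n ω) μ :=
      (hNint n).bdd_mul ((hNmeas n).mono (𝓕.le n)).aestronglyMeasurable (ae_of_all _ (hNnorm n))
    have heq : (fun ω => (Nstar n ω) ^ 2) = fun ω => Nstar n ω * Nstar n ω :=
      funext fun ω => sq (Nstar n ω)
    rw [heq]; exact h
  have hNIint : ∀ n : ℕ, Integrable (fun ω => Nstar n ω * Istar (n + 1) ω) μ := fun n =>
    (hint (n+1) (by omega)).bdd_mul ((hNmeas n).mono (𝓕.le n)).aestronglyMeasurable (ae_of_all _ (hNnorm n))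
  -- ## the martingale difference
  have heps' : ∀ n : ℕ, 1 ≤ n → ∀ ω, eps (n + 1) ω
      = astar (n + 1) * (Istar (n + 1) ω - (1 - r) / (n:ℝ) * Nstar n ω) := by
    intro n hn ω
    have hn0 : (0:ℝ) < n := by exact_mod_cast hn
    rw [heps (n+1) (by omega) ω]
    simp only [Nat.add_sub_cancel]
    rw [hMstar, hMstar, hNsucc]
    have h := harec n hn
    field_simp
    nlinarith [h, hNnn n ω]
  have hepssq : ∀ n : ℕ, 1 ≤ n → ∀ ω, (eps (n + 1) ω) ^ 2
      = (astar (n + 1) ^ 2 * (1 - 2 * ((1 - r) / (n:ℝ)) * Nstar n ω)) * Istar (n + 1) ω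
        + (astar (n + 1) ^ 2 * ((1 - r) / (n:ℝ)) ^ 2) * (Nstar n ω) ^ 2 := by
    intro n hn ω
    rcases h01 (n+1) (by omega) ω with h | h <;> rw [heps' n hn ω, h] <;> ring
  -- ## Part 1 : the conditional expectation identity
  have hpart1 : ∀ n : ℕ, 1 ≤ n →
      (μ[fun ω => (eps (n + 1) ω) ^ 2|𝓕 n]) =ᵐ[μ]
        fun ω => (astar (n + 1)) ^ 2
          * (((1 - r) / (n : ℝ)) * Nstar n ω
              - ((1 - r) ^ 2 / (n : ℝ) ^ 2) * (Nstar n ω) ^ 2) := by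
    intro n hn
    have hn0 : (0:ℝ) < n := by exact_mod_cast hn
    have hc0 : (0:ℝ) ≤ (1 - r) / (n:ℝ) := by positivity
    have hdecomp : (fun ω => (eps (n + 1) ω) ^ 2)
        = (fun ω => (astar (n + 1) ^ 2 * (1 - 2 * ((1 - r) / (n:ℝ)) * Nstar n ω))
              * Istar (n + 1) ω)
          + fun ω => (astar (n + 1) ^ 2 * ((1 - r) / (n:ℝ)) ^ 2) * (Nstar n ω) ^ 2 :=
      funext fun ω => hepssq n hn ω
    have hφmeas : StronglyMeasurable[𝓕 n]
        (fun ω => astar (n + 1) ^ 2 * (1 - 2 * ((1 - r) / (n:ℝ)) * Nstar n ω)) :=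
      (stronglyMeasurable_const.sub ((hNmeas n).const_mul _)).const_mul _
    have hφbdd : ∃ C, ∀ ω,
        ‖astar (n + 1) ^ 2 * (1 - 2 * ((1 - r) / (n:ℝ)) * Nstar n ω)‖ ≤ C := by
      refine ⟨astar (n + 1) ^ 2 * (1 + 2 * ((1 - r) / (n:ℝ)) * n), fun ω => ?_⟩
      rw [Real.norm_eq_abs, abs_mul, abs_of_nonneg (sq_nonneg _)]
      refine mul_le_mul_of_nonneg_left ?_ (sq_nonneg _)
      rw [abs_le]
      constructor <;> nlinarith [hNnn n ω, hNle n ω]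
    have hFint : Integrable (fun ω =>
        (astar (n + 1) ^ 2 * (1 - 2 * ((1 - r) / (n:ℝ)) * Nstar n ω)) * Istar (n + 1) ω) μ :=
      (hint (n+1) (by omega)).bdd_mul (hφmeas.mono (𝓕.le n)).aestronglyMeasurable (ae_of_all _ hφbdd.choose_spec)
    have hGmeas : StronglyMeasurable[𝓕 n]
        (fun ω => (astar (n + 1) ^ 2 * ((1 - r) / (n:ℝ)) ^ 2) * (Nstar n ω) ^ 2) := by
      have : StronglyMeasurable[𝓕 n] (fun ω => Nstar n ω * Nstar n ω) :=
        (hNmeas n).mul (hNmeas n)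
      have h2 : (fun ω => (astar (n + 1) ^ 2 * ((1 - r) / (n:ℝ)) ^ 2) * (Nstar n ω) ^ 2)
          = fun ω => (astar (n + 1) ^ 2 * ((1 - r) / (n:ℝ)) ^ 2) * (Nstar n ω * Nstar n ω) :=
        funext fun ω => by ring
      rw [h2]
      exact this.const_mul _
    have hGint : Integrable
        (fun ω => (astar (n + 1) ^ 2 * ((1 - r) / (n:ℝ)) ^ 2) * (Nstar n ω) ^ 2) μ :=
      (hNsq_int n).const_mul _
    have h3 : μ[(fun ω => (astar (n + 1) ^ 2 * (1 - 2 * ((1 - r) / (n:ℝ)) * Nstar n ω))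
            * Istar (n + 1) ω)|𝓕 n]
        =ᵐ[μ] (fun ω => astar (n + 1) ^ 2 * (1 - 2 * ((1 - r) / (n:ℝ)) * Nstar n ω))
            * μ[Istar (n + 1)|𝓕 n] :=
      condExp_mul_of_stronglyMeasurable_left hφmeas hFint (hint (n+1) (by omega))
    have h5 : μ[(fun ω => (astar (n + 1) ^ 2 * ((1 - r) / (n:ℝ)) ^ 2) * (Nstar n ω) ^ 2)|𝓕 n]
        = fun ω => (astar (n + 1) ^ 2 * ((1 - r) / (n:ℝ)) ^ 2) * (Nstar n ω) ^ 2 :=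
      condExp_of_stronglyMeasurable (𝓕.le n) hGmeas hGint
    calc μ[fun ω => (eps (n + 1) ω) ^ 2|𝓕 n]
        =ᵐ[μ] μ[(fun ω => (astar (n + 1) ^ 2 * (1 - 2 * ((1 - r) / (n:ℝ)) * Nstar n ω))
              * Istar (n + 1) ω)|𝓕 n]
            + μ[(fun ω => (astar (n + 1) ^ 2 * ((1 - r) / (n:ℝ)) ^ 2) * (Nstar n ω) ^ 2)|𝓕 n] := by
          rw [hdecomp]
          exact condExp_add hFint hGint _
      _ =ᵐ[μ] fun ω => (astar (n + 1)) ^ 2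
          * (((1 - r) / (n : ℝ)) * Nstar n ω
              - ((1 - r) ^ 2 / (n : ℝ) ^ 2) * (Nstar n ω) ^ 2) := by
          filter_upwards [h3, hcond n hn] with ω hω3 hω4
          simp only [Pi.add_apply, h5]
          rw [hω3]
          simp only [Pi.mul_apply]
          rw [hω4]
          ring
  -- ## first moments
  have hIe : ∀ n : ℕ, 1 ≤ n →
      ∫ ω, Istar (n + 1) ω ∂μ = (1 - r) / (n:ℝ) * ∫ ω, Nstar n ω ∂μ := by
    intro n hn
    rw [← integral_condExp (𝓕.le n), integral_congr_ae (hcond n hn), integral_const_mul]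
  have herec : ∀ n : ℕ, 1 ≤ n →
      ∫ ω, Nstar (n + 1) ω ∂μ
        = (1 + (1 - r) / (n:ℝ)) * ∫ ω, Nstar n ω ∂μ := by
    intro n hn
    have heq : (fun ω => Nstar (n + 1) ω) = fun ω => Nstar n ω + Istar (n + 1) ω :=
      funext fun ω => hNsucc n ω
    calc ∫ ω, Nstar (n + 1) ω ∂μ = ∫ ω, (Nstar n ω + Istar (n + 1) ω) ∂μ := by rw [heq]
      _ = (∫ ω, Nstar n ω ∂μ) + ∫ ω, Istar (n + 1) ω ∂μ :=
          integral_add (hNint n) (hint (n+1) (by omega))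
      _ = (1 + (1 - r) / (n:ℝ)) * ∫ ω, Nstar n ω ∂μ := by rw [hIe n hn]; ring
  have hE1 : ∫ ω, Nstar 1 ω ∂μ = 1 - r := by
    have heq : (fun ω => Nstar 1 ω) = Istar 1 := funext fun ω => by rw [hN]; simp
    rw [heq]; exact hI1
  have hEnn : ∀ n : ℕ, 0 ≤ ∫ ω, Nstar n ω ∂μ := fun n =>
    integral_nonneg fun ω => hNnn n ω
  have hae : ∀ n : ℕ, 1 ≤ n → astar n * ∫ ω, Nstar n ω ∂μ = 1 - r := by
    intro n hn
    induction n, hn using Nat.le_induction with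
    | base => rw [hE1, ha1, one_mul]
    | succ m hm ih =>
      have hm0 : (0:ℝ) < m := by exact_mod_cast hm
      rw [herec m hm]
      have h := harec m hm
      have : astar (m + 1) * (1 + (1 - r) / (m:ℝ)) = astar m := by
        field_simp
        nlinarith [h]
      calc astar (m + 1) * ((1 + (1 - r) / (m:ℝ)) * ∫ ω, Nstar m ω ∂μ)
          = (astar (m + 1) * (1 + (1 - r) / (m:ℝ))) * ∫ ω, Nstar m ω ∂μ := by ring
        _ = astar m * ∫ ω, Nstar m ω ∂μ := by rw [this]
        _ = 1 - r := ih
  have hEeq : ∀ n : ℕ, 1 ≤ n → ∫ ω, Nstar n ω ∂μ = (1 - r) / astar n := by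
    intro n hn
    rw [eq_div_iff (ne_of_gt (hapos n hn))]
    rw [mul_comm]
    exact hae n hn
  -- ## second moments
  have hNIval : ∀ n : ℕ, 1 ≤ n →
      ∫ ω, Nstar n ω * Istar (n + 1) ω ∂μ
        = (1 - r) / (n:ℝ) * ∫ ω, (Nstar n ω) ^ 2 ∂μ := by
    intro n hn
    rw [← integral_condExp (𝓕.le n)]
    have h1 : μ[(fun ω => Nstar n ω * Istar (n + 1) ω)|𝓕 n]
        =ᵐ[μ] Nstar n * μ[Istar (n + 1)|𝓕 n] :=
      condExp_mul_of_stronglyMeasurable_left (hNmeas n) (hNIint n) (hint (n+1) (by omega))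
    have h2 : μ[(fun ω => Nstar n ω * Istar (n + 1) ω)|𝓕 n]
        =ᵐ[μ] fun ω => (1 - r) / (n:ℝ) * (Nstar n ω) ^ 2 := by
      filter_upwards [h1, hcond n hn] with ω hω1 hω2
      rw [hω1]
      simp only [Pi.mul_apply]
      rw [hω2]
      ring
    rw [integral_congr_ae h2, integral_const_mul]
  have hvrec : ∀ n : ℕ, 1 ≤ n →
      ∫ ω, (Nstar (n + 1) ω) ^ 2 ∂μ
        = (∫ ω, (Nstar n ω) ^ 2 ∂μ)
          + 2 * ((1 - r) / (n:ℝ) * ∫ ω, (Nstar n ω) ^ 2 ∂μ)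
          + (1 - r) / (n:ℝ) * ∫ ω, Nstar n ω ∂μ := by
    intro n hn
    have heq : (fun ω => (Nstar (n + 1) ω) ^ 2)
        = fun ω => ((Nstar n ω) ^ 2 + 2 * (Nstar n ω * Istar (n + 1) ω)) + Istar (n + 1) ω := by
      funext ω
      rcases h01 (n+1) (by omega) ω with h | h <;> rw [hNsucc n ω, h] <;> ring
    calc ∫ ω, (Nstar (n + 1) ω) ^ 2 ∂μ
        = ∫ ω, (((Nstar n ω) ^ 2 + 2 * (Nstar n ω * Istar (n + 1) ω)) + Istar (n + 1) ω) ∂μ := by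
          rw [heq]
      _ = (∫ ω, ((Nstar n ω) ^ 2 + 2 * (Nstar n ω * Istar (n + 1) ω)) ∂μ)
          + ∫ ω, Istar (n + 1) ω ∂μ :=
          integral_add ((hNsq_int n).add ((hNIint n).const_mul 2)) (hint (n+1) (by omega))
      _ = (∫ ω, (Nstar n ω) ^ 2 ∂μ) + (∫ ω, 2 * (Nstar n ω * Istar (n + 1) ω) ∂μ)
          + ∫ ω, Istar (n + 1) ω ∂μ := by
          rw [integral_add (hNsq_int n) ((hNIint n).const_mul 2)]
      _ = (∫ ω, (Nstar n ω) ^ 2 ∂μ)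
          + 2 * ((1 - r) / (n:ℝ) * ∫ ω, (Nstar n ω) ^ 2 ∂μ)
          + (1 - r) / (n:ℝ) * ∫ ω, Nstar n ω ∂μ := by
          rw [integral_const_mul, hNIval n hn, hIe n hn]
  have hv1 : ∫ ω, (Nstar 1 ω) ^ 2 ∂μ = 1 - r := by
    have heq : (fun ω => (Nstar 1 ω) ^ 2) = Istar 1 := by
      funext ω
      have h1 : Nstar 1 ω = Istar 1 ω := by rw [hN]; simp
      rcases h01 1 le_rfl ω with h | h <;> rw [h1, h] <;> ring
    rw [heq]; exact hI1
  have hvnn : ∀ n : ℕ, 0 ≤ ∫ ω, (Nstar n ω) ^ 2 ∂μ := fun n =>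
    integral_nonneg fun ω => sq_nonneg _
  have hvle : ∀ n : ℕ, 1 ≤ n →
      ∫ ω, (Nstar n ω) ^ 2 ∂μ
        ≤ 2 / (1 - r) * (∫ ω, Nstar n ω ∂μ) ^ 2 - ∫ ω, Nstar n ω ∂μ := by
    intro n hn
    induction n, hn using Nat.le_induction with
    | base =>
      have hne : (1:ℝ) - r ≠ 0 := ne_of_gt hr1'
      have heq2 : 2 / (1 - r) * ((1:ℝ) - r) ^ 2 - (1 - r) = 1 - r := by
        field_simp
        ring
      rw [hv1, hE1, heq2]
    | succ m hm ih =>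
      have hm0 : (0:ℝ) < m := by exact_mod_cast hm
      have hc : (0:ℝ) ≤ (1 - r) / (m:ℝ) := by positivity
      have hK : (0:ℝ) ≤ 2 / (1 - r) := by positivity
      rw [hvrec m hm, herec m hm]
      exact aux_quad ((1 - r) / (m:ℝ)) (∫ ω, Nstar m ω ∂μ) (∫ ω, (Nstar m ω) ^ 2 ∂μ)
        (2 / (1 - r)) hc (hEnn m) hK ih
  have hvle' : ∀ n : ℕ, 1 ≤ n →
      ∫ ω, (Nstar n ω) ^ 2 ∂μ ≤ 2 * (1 - r) / astar n ^ 2 := by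
    intro n hn
    have h1 := hvle n hn
    have h2 := hEnn n
    have h3 : 2 / (1 - r) * (∫ ω, Nstar n ω ∂μ) ^ 2 = 2 * (1 - r) / astar n ^ 2 := by
      rw [hEeq n hn]
      have := ne_of_gt (hapos n hn)
      field_simp
    linarith [h1, h3.symm.le]
  -- ## the integral of eps²
  have hF : ∀ n : ℕ, 1 ≤ n → (∫ ω, (eps (n + 1) ω) ^ 2 ∂μ)
      = astar (n + 1) ^ 2 * ((1 - r) / (n:ℝ) * ∫ ω, Nstar n ω ∂μ)
        - astar (n + 1) ^ 2 * ((1 - r) ^ 2 / (n:ℝ) ^ 2 * ∫ ω, (Nstar n ω) ^ 2 ∂μ) := by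
    intro n hn
    rw [← integral_condExp (𝓕.le n), integral_congr_ae (hpart1 n hn)]
    have heq : (fun ω => (astar (n + 1)) ^ 2
          * (((1 - r) / (n : ℝ)) * Nstar n ω
              - ((1 - r) ^ 2 / (n : ℝ) ^ 2) * (Nstar n ω) ^ 2))
        = fun ω => (astar (n + 1) ^ 2 * ((1 - r) / (n:ℝ))) * Nstar n ω
            - (astar (n + 1) ^ 2 * ((1 - r) ^ 2 / (n:ℝ) ^ 2)) * (Nstar n ω) ^ 2 :=
      funext fun ω => by ring
    rw [heq, integral_sub ((hNint n).const_mul _) ((hNsq_int n).const_mul _),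
      integral_const_mul, integral_const_mul]
    ring
  -- ## Gamma asymptotics
  have hprod : ∀ n : ℕ, ∏ j ∈ Finset.range (n + 1), ((1 - r) + (j:ℝ))
      = Real.Gamma ((n:ℝ) + 2 - r) / Real.Gamma (1 - r) := by
    intro n
    induction n with
    | zero =>
      simp only [Nat.zero_add, Finset.range_one, Finset.prod_singleton, Nat.cast_zero, add_zero]
      rw [show (0:ℝ) + 2 - r = 2 - r by ring, hγ21]
      field_simp
    | succ m ih =>
      have hm : (0:ℝ) ≤ m := Nat.cast_nonneg m
      have h2 : Real.Gamma (((m:ℝ) + 2 - r) + 1) = ((m:ℝ) + 2 - r) * Real.Gamma ((m:ℝ) + 2 - r) :=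
        Real.Gamma_add_one (ne_of_gt (by linarith))
      rw [Finset.prod_range_succ, ih]
      push_cast
      rw [show ((m:ℝ) + 1) + 2 - r = ((m:ℝ) + 2 - r) + 1 by ring, h2]
      ring
  have hGs : ∀ n : ℕ, astar (n + 1) * (n:ℝ) ^ (1 - r)
      = Real.GammaSeq (1 - r) n * (Real.Gamma (2 - r) / Real.Gamma (1 - r)) := by
    intro n
    have h3 : Real.Gamma ((n:ℝ) + 2 - r) ≠ 0 :=
      ne_of_gt (Real.Gamma_pos_of_pos (by have := Nat.cast_nonneg (α := ℝ) n; linarith))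
    have h1 : Real.Gamma (1 - r) ≠ 0 := ne_of_gt hγ1
    rw [Real.GammaSeq, hprod, hastar (n+1)]
    push_cast
    rw [show ((n:ℝ) + 1) + 1 - r = (n:ℝ) + 2 - r by ring, Real.Gamma_nat_eq_factorial n]
    rw [div_div_eq_mul_div, div_mul_eq_mul_div, div_mul_eq_mul_div]
    rw [div_eq_div_iff h3 (by positivity)]
    field_simp
  have hL1 : Tendsto (fun n : ℕ => astar (n + 1) * (n:ℝ) ^ (1 - r)) atTop
      (𝓝 (Real.Gamma (2 - r))) := by
    have h := (Real.GammaSeq_tendsto_Gamma (1 - r)).mul_const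
      (Real.Gamma (2 - r) / Real.Gamma (1 - r))
    rw [show Real.Gamma (1 - r) * (Real.Gamma (2 - r) / Real.Gamma (1 - r))
        = Real.Gamma (2 - r) by rw [mul_comm, div_mul_cancel₀ _ (ne_of_gt hγ1)]] at h
    exact h.congr fun n => (hGs n).symm
  have hL2 : Tendsto (fun n : ℕ => astar (n + 1) / astar n) atTop (𝓝 1) := by
    have h := tendsto_natCast_div_add_atTop (𝕜 := ℝ) (1 - r)
    refine h.congr' ?_
    filter_upwards [eventually_ge_atTop 1] with n hn
    have hn0 : (0:ℝ) < n := by exact_mod_cast hn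
    have ha := harec n hn
    have h4 : (n:ℝ) + 1 - r ≠ 0 := ne_of_gt (by linarith)
    have ha' : astar n ≠ 0 := ne_of_gt (hapos n hn)
    rw [show (n:ℝ) + (1 - r) = (n:ℝ) + 1 - r by ring]
    rw [div_eq_div_iff h4 ha']
    linarith [ha]
  -- ## boundedness constant
  obtain ⟨A₀, hA₀⟩ := hL1.bddAbove_range
  set A : ℝ := max A₀ 0 with hAdef
  have hAnn : (0:ℝ) ≤ A := le_max_right _ _
  have hA : ∀ n : ℕ, astar (n + 1) * (n:ℝ) ^ (1 - r) ≤ A :=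
    fun n => le_trans (hA₀ (Set.mem_range_self n)) (le_max_left _ _)
  -- rpow helpers
  have hrpow1 : ∀ n : ℕ, 1 ≤ n → (n:ℝ) ^ (1 - r) * (n:ℝ) ^ (r - 1) = 1 := by
    intro n hn
    have hn0 : (0:ℝ) < n := by exact_mod_cast hn
    rw [← Real.rpow_add hn0, show (1 - r) + (r - 1) = 0 by ring, Real.rpow_zero]
  have hrpow2 : ∀ n : ℕ, 1 ≤ n → (n:ℝ) ^ (r - 1) = (n:ℝ) ^ (r - 2) * (n:ℝ) := by
    intro n hn
    have hn0 : (0:ℝ) < n := by exact_mod_cast hn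
    have e1 : (n:ℝ) ^ (r - 2) * (n:ℝ) ^ (1:ℝ) = (n:ℝ) ^ (r - 1) := by
      rw [← Real.rpow_add hn0, show r - 2 + 1 = r - 1 by ring]
    rw [← e1, Real.rpow_one]
  have hrpow3 : ∀ n : ℕ, 1 ≤ n → (n:ℝ) ^ (r - 2) = ((n:ℝ) ^ (1 - r) * (n:ℝ))⁻¹ := by
    intro n hn
    have hn0 : (0:ℝ) < n := by exact_mod_cast hn
    have h : (n:ℝ) ^ (r - 2) * ((n:ℝ) ^ (1 - r) * (n:ℝ)) = 1 := by
      calc (n:ℝ) ^ (r - 2) * ((n:ℝ) ^ (1 - r) * (n:ℝ))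
          = (n:ℝ) ^ (r - 2) * ((n:ℝ) ^ (1 - r) * (n:ℝ) ^ (1:ℝ)) := by rw [Real.rpow_one]
        _ = (n:ℝ) ^ ((r - 2) + ((1 - r) + 1)) := by
            rw [← Real.rpow_add hn0, ← Real.rpow_add hn0]
        _ = 1 := by rw [show (r - 2) + ((1 - r) + 1) = 0 by ring, Real.rpow_zero]
    exact eq_inv_of_mul_eq_one_left h
  have hrpow4 : ∀ n : ℕ, 1 ≤ n → (n:ℝ) ^ (-r) * (n:ℝ) = (n:ℝ) ^ (1 - r) := by
    intro n hn
    have hn0 : (0:ℝ) < n := by exact_mod_cast hn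
    calc (n:ℝ) ^ (-r) * (n:ℝ) = (n:ℝ) ^ (-r) * (n:ℝ) ^ (1:ℝ) := by rw [Real.rpow_one]
      _ = (n:ℝ) ^ (-r + 1) := (Real.rpow_add hn0 _ _).symm
      _ = (n:ℝ) ^ (1 - r) := by rw [show -r + 1 = 1 - r by ring]
  have hgpos : ∀ n : ℕ, 1 ≤ n → 0 < (1 - r) ^ 3 * Real.Gamma (1 - r) * (n:ℝ) ^ (r - 2) := by
    intro n hn
    have hn0 : (0:ℝ) < n := by exact_mod_cast hn
    have := Real.rpow_pos_of_pos hn0 (r - 2)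
    positivity
  -- bound on astar (n+1)
  have ha1le : ∀ n : ℕ, 1 ≤ n → astar (n + 1) ≤ A * (n:ℝ) ^ (r - 1) := by
    intro n hn
    have hn0 : (0:ℝ) < n := by exact_mod_cast hn
    have hx := hrpow1 n hn
    have hxpos : (0:ℝ) < (n:ℝ) ^ (r - 1) := Real.rpow_pos_of_pos hn0 _
    calc astar (n + 1) = (astar (n + 1) * (n:ℝ) ^ (1 - r)) * (n:ℝ) ^ (r - 1) := by
          rw [mul_assoc, hx, mul_one]
      _ ≤ A * (n:ℝ) ^ (r - 1) := mul_le_mul_of_nonneg_right (hA n) hxpos.le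
  -- bound on the integral of eps²
  have hFle : ∀ n : ℕ, 1 ≤ n →
      (∫ ω, (eps (n + 1) ω) ^ 2 ∂μ) ≤ (1 - r) ^ 2 * A * (n:ℝ) ^ (r - 2) := by
    intro n hn
    have hn0 : (0:ℝ) < n := by exact_mod_cast hn
    have h1 : (∫ ω, (eps (n + 1) ω) ^ 2 ∂μ)
        ≤ astar (n + 1) ^ 2 * ((1 - r) / (n:ℝ) * ∫ ω, Nstar n ω ∂μ) := by
      rw [hF n hn]
      have : 0 ≤ astar (n + 1) ^ 2 * ((1 - r) ^ 2 / (n:ℝ) ^ 2 * ∫ ω, (Nstar n ω) ^ 2 ∂μ) := by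
        have := hvnn n
        positivity
      linarith
    have hap1 : 0 < astar (n + 1) := hapos (n+1) (by omega)
    have hap0 : 0 < astar n := hapos n hn
    have h2 : astar (n + 1) ^ 2 * ((1 - r) / (n:ℝ) * ∫ ω, Nstar n ω ∂μ)
        = ((1 - r) ^ 2 / (n:ℝ)) * (astar (n + 1) * (astar (n + 1) / astar n)) := by
      rw [hEeq n hn]
      field_simp
    have h3 : astar (n + 1) / astar n ≤ 1 := by
      rw [div_le_one hap0]
      exact hale n hn
    have h4 : astar (n + 1) * (astar (n + 1) / astar n) ≤ astar (n + 1) * 1 :=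
      mul_le_mul_of_nonneg_left h3 hap1.le
    have h5 : ((1 - r) ^ 2 / (n:ℝ)) * (astar (n + 1) * (astar (n + 1) / astar n))
        ≤ ((1 - r) ^ 2 / (n:ℝ)) * (A * (n:ℝ) ^ (r - 1)) := by
      have hpos : (0:ℝ) ≤ (1 - r) ^ 2 / (n:ℝ) := by positivity
      refine mul_le_mul_of_nonneg_left ?_ hpos
      calc astar (n + 1) * (astar (n + 1) / astar n) ≤ astar (n + 1) * 1 := h4
        _ = astar (n + 1) := mul_one _
        _ ≤ A * (n:ℝ) ^ (r - 1) := ha1le n hn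
    have h6 : ((1 - r) ^ 2 / (n:ℝ)) * (A * (n:ℝ) ^ (r - 1))
        = (1 - r) ^ 2 * A * (n:ℝ) ^ (r - 2) := by
      rw [hrpow2 n hn]
      field_simp
    linarith [h1, h2.le, h5, h6.le]
  -- ## Part 2 : the asymptotic equivalence
  have hpart2 : (fun n : ℕ => ∫ ω, (eps (n + 1) ω) ^ 2 ∂μ)
      ~[atTop] fun n : ℕ => (1 - r) ^ 3 * Real.Gamma (1 - r) * (n : ℝ) ^ (r - 2) := by
    rw [isEquivalent_iff_tendsto_one]
    swap
    · filter_upwards [eventually_ge_atTop 1] with n hn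
      exact ne_of_gt (hgpos n hn)
    have hT1 : Tendsto (fun n : ℕ => (astar (n + 1) / astar n)
        * (astar (n + 1) * (n:ℝ) ^ (1 - r) / Real.Gamma (2 - r))) atTop (𝓝 1) := by
      have h := hL2.mul (hL1.div_const (Real.Gamma (2 - r)))
      rw [div_self (ne_of_gt hγ2), mul_one] at h
      exact h
    have hnr0 : Tendsto (fun n : ℕ => (n:ℝ) ^ (-r)) atTop (𝓝 0) :=
      (tendsto_rpow_neg_atTop hr0).comp tendsto_natCast_atTop_atTop
    have hB : Tendsto (fun n : ℕ => (astar (n + 1) / astar n) ^ 2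
        * (2 / Real.Gamma (1 - r)) * (n:ℝ) ^ (-r)) atTop (𝓝 0) := by
      have h1 : Tendsto (fun n : ℕ => (astar (n + 1) / astar n) ^ 2) atTop (𝓝 1) := by
        have := hL2.mul hL2
        rw [mul_one] at this
        exact this.congr fun n => (sq _).symm
      have h2 := (h1.mul_const (2 / Real.Gamma (1 - r))).mul hnr0
      rw [mul_zero] at h2
      exact h2
    have hT2 : Tendsto (fun n : ℕ => astar (n + 1) ^ 2
        * ((1 - r) ^ 2 / (n:ℝ) ^ 2 * ∫ ω, (Nstar n ω) ^ 2 ∂μ)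
        / ((1 - r) ^ 3 * Real.Gamma (1 - r) * (n:ℝ) ^ (r - 2))) atTop (𝓝 0) := by
      refine squeeze_zero' ?_ ?_ hB
      · filter_upwards [eventually_ge_atTop 1] with n hn
        have := hvnn n
        have hg := hgpos n hn
        have hn0 : (0:ℝ) < n := by exact_mod_cast hn
        positivity
      · filter_upwards [eventually_ge_atTop 1] with n hn
        have hn0 : (0:ℝ) < n := by exact_mod_cast hn
        have hg := hgpos n hn
        have hap1 : 0 < astar (n + 1) := hapos (n+1) (by omega)
        have hap0 : 0 < astar n := hapos n hn
        have hstep : astar (n + 1) ^ 2 * ((1 - r) ^ 2 / (n:ℝ) ^ 2 * ∫ ω, (Nstar n ω) ^ 2 ∂μ)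
            / ((1 - r) ^ 3 * Real.Gamma (1 - r) * (n:ℝ) ^ (r - 2))
            ≤ astar (n + 1) ^ 2 * ((1 - r) ^ 2 / (n:ℝ) ^ 2 * (2 * (1 - r) / astar n ^ 2))
            / ((1 - r) ^ 3 * Real.Gamma (1 - r) * (n:ℝ) ^ (r - 2)) := by
          gcongr
          exact hvle' n hn
        refine le_trans hstep (le_of_eq ?_)
        rw [hrpow3 n hn]
        have hx : (0:ℝ) < (n:ℝ) ^ (1 - r) := Real.rpow_pos_of_pos hn0 _
        have hnr : (n:ℝ) ^ (-r) = (n:ℝ) ^ (1 - r) / (n:ℝ) := by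
          rw [eq_div_iff (ne_of_gt hn0)]
          exact hrpow4 n hn
        rw [hnr]
        field_simp
    have heqv : (fun n : ℕ => (astar (n + 1) / astar n)
          * (astar (n + 1) * (n:ℝ) ^ (1 - r) / Real.Gamma (2 - r))
          - astar (n + 1) ^ 2 * ((1 - r) ^ 2 / (n:ℝ) ^ 2 * ∫ ω, (Nstar n ω) ^ 2 ∂μ)
          / ((1 - r) ^ 3 * Real.Gamma (1 - r) * (n:ℝ) ^ (r - 2)))
        =ᶠ[atTop] (fun n : ℕ => ∫ ω, (eps (n + 1) ω) ^ 2 ∂μ)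
          / (fun n : ℕ => (1 - r) ^ 3 * Real.Gamma (1 - r) * (n : ℝ) ^ (r - 2)) := by
      filter_upwards [eventually_ge_atTop 1] with n hn
      have hn0 : (0:ℝ) < n := by exact_mod_cast hn
      have hg := hgpos n hn
      have hap0 : 0 < astar n := hapos n hn
      simp only [Pi.div_apply]
      rw [hF n hn, sub_div]
      congr 1
      rw [hEeq n hn, hrpow3 n hn]
      have hx : (0:ℝ) < (n:ℝ) ^ (1 - r) := Real.rpow_pos_of_pos hn0 _
      rw [hγ21]
      field_simp
    have hfinal := (hT1.sub hT2).congr' heqv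
    rw [sub_zero] at hfinal
    exact hfinal
  -- ## Part 3 : boundedness of the predictable bracket
  have heps1sq : ∀ ω, (eps 1 ω) ^ 2 = (1 - 2 * (1 - r)) * Istar 1 ω + (1 - r) ^ 2 := by
    intro ω
    have h1 : Nstar 1 ω = Istar 1 ω := by rw [hN]; simp
    rw [heps1 ω, hMstar, ha1, h1, one_mul]
    rcases h01 1 le_rfl ω with h | h <;> rw [h] <;> ring
  have hint1sq : Integrable (fun ω => (eps 1 ω) ^ 2) μ := by
    have heq : (fun ω => (eps 1 ω) ^ 2)
        = fun ω => (1 - 2 * (1 - r)) * Istar 1 ω + (1 - r) ^ 2 := funext heps1sq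
    rw [heq]
    exact ((hint 1 le_rfl).const_mul _).add (integrable_const _)
  have hepsk_int : ∀ k : ℕ, 2 ≤ k → Integrable (fun ω => (eps k ω) ^ 2) μ := by
    intro k hk
    obtain ⟨m, rfl⟩ : ∃ m, k = m + 1 := ⟨k - 1, by omega⟩
    have hm : 1 ≤ m := by omega
    have heq : (fun ω => (eps (m + 1) ω) ^ 2)
        = (fun ω => (astar (m + 1) ^ 2 * (1 - 2 * ((1 - r) / (m:ℝ)) * Nstar m ω))
              * Istar (m + 1) ω)
          + fun ω => (astar (m + 1) ^ 2 * ((1 - r) / (m:ℝ)) ^ 2) * (Nstar m ω) ^ 2 :=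
      funext fun ω => hepssq m hm ω
    rw [heq]
    have hn0 : (0:ℝ) < m := by exact_mod_cast hm
    refine Integrable.add ?_ ((hNsq_int m).const_mul _)
    refine (hint (m+1) (by omega)).bdd_mul (c := astar (m + 1) ^ 2 * (1 + 2 * ((1 - r) / (m:ℝ)) * m))
      (((stronglyMeasurable_const.sub ((hNmeas m).const_mul _)).const_mul _).mono
        (𝓕.le m)).aestronglyMeasurable ?_
    refine ae_of_all _ fun ω => ?_
    rw [Real.norm_eq_abs, abs_mul, abs_of_nonneg (sq_nonneg _)]
    refine mul_le_mul_of_nonneg_left ?_ (sq_nonneg _)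
    rw [abs_le]
    have hc0 : (0:ℝ) ≤ (1 - r) / (m:ℝ) := by positivity
    constructor <;> nlinarith [hNnn m ω, hNle m ω]
  -- summable dominating sequence
  have hgsum : Summable (fun k : ℕ => (1 - r) ^ 2 * A * (((k - 1 : ℕ)):ℝ) ^ (r - 2)) := by
    rw [← summable_nat_add_iff 1]
    have h1 : Summable (fun m : ℕ => (1 - r) ^ 2 * A * ((m:ℝ)) ^ (r - 2)) :=
      (Real.summable_nat_rpow.mpr (by linarith)).mul_left _
    refine h1.congr fun m => ?_
    norm_num
  have hgnn : ∀ k : ℕ, 0 ≤ (1 - r) ^ 2 * A * (((k - 1 : ℕ)):ℝ) ^ (r - 2) := by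
    intro k
    have : (0:ℝ) ≤ (((k - 1 : ℕ)):ℝ) ^ (r - 2) := Real.rpow_nonneg (Nat.cast_nonneg _) _
    positivity
  refine ⟨hpart1, hpart2, ⟨(∫ ω, (eps 1 ω) ^ 2 ∂μ)
      + ∑' k : ℕ, (1 - r) ^ 2 * A * (((k - 1 : ℕ)):ℝ) ^ (r - 2), ?_⟩⟩
  intro n hn
  have hsplit : (∫ ω, ((eps 1 ω) ^ 2
        + ∑ k ∈ Finset.Icc 2 n, (μ[fun ω' => (eps k ω') ^ 2|𝓕 (k - 1)]) ω) ∂μ)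
      = (∫ ω, (eps 1 ω) ^ 2 ∂μ)
        + ∑ k ∈ Finset.Icc 2 n, ∫ ω, (μ[fun ω' => (eps k ω') ^ 2|𝓕 (k - 1)]) ω ∂μ := by
    rw [integral_add hint1sq (integrable_finset_sum _ fun k _ => integrable_condExp),
      integral_finset_sum _ fun k _ => integrable_condExp]
  rw [hsplit]
  have hterm : ∀ k ∈ Finset.Icc 2 n,
      (∫ ω, (μ[fun ω' => (eps k ω') ^ 2|𝓕 (k - 1)]) ω ∂μ)
        ≤ (1 - r) ^ 2 * A * (((k - 1 : ℕ)):ℝ) ^ (r - 2) := by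
    intro k hk
    have hk2 : 2 ≤ k := (Finset.mem_Icc.mp hk).1
    obtain ⟨m, rfl⟩ : ∃ m, k = m + 1 := ⟨k - 1, by omega⟩
    have hm : 1 ≤ m := by omega
    rw [integral_condExp (𝓕.le _)]
    simp only [Nat.add_sub_cancel]
    exact hFle m hm
  have hsum_le : ∑ k ∈ Finset.Icc 2 n, ∫ ω, (μ[fun ω' => (eps k ω') ^ 2|𝓕 (k - 1)]) ω ∂μ
      ≤ ∑' k : ℕ, (1 - r) ^ 2 * A * (((k - 1 : ℕ)):ℝ) ^ (r - 2) := by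
    calc ∑ k ∈ Finset.Icc 2 n, ∫ ω, (μ[fun ω' => (eps k ω') ^ 2|𝓕 (k - 1)]) ω ∂μ
        ≤ ∑ k ∈ Finset.Icc 2 n, (1 - r) ^ 2 * A * (((k - 1 : ℕ)):ℝ) ^ (r - 2) :=
          Finset.sum_le_sum hterm
      _ ≤ ∑' k : ℕ, (1 - r) ^ 2 * A * (((k - 1 : ℕ)):ℝ) ^ (r - 2) :=
          Summable.sum_le_tsum _ (fun k _ => hgnn k) hgsum
  linarith [hsum_le]
end

section
/- There exists an integrable random variable Y such that M*_n = α*_n·N*_n converges to Y almost surely and in L^1 as n → ∞ (where α*_k = Γ(k)·Γ(2-r)/Γ(k+1-r)); consequently, N*_n/n^{1-r} = (n - N_n)/n^{1-r} converges almost surely and in L^1 to Y/Γ(2-r) as n → ∞. -/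
open MeasureTheory Filter ENNReal
open scoped NNReal

/-- Wendel-type inequality from log-convexity: `Γ(x+s) ≤ Γ(x) x^s`. -/
lemma wendel_upper {s x : ℝ} (hs0 : 0 ≤ s) (hs1 : s ≤ 1) (hx : 0 < x) :
    Real.Gamma (x + s) ≤ Real.Gamma x * x ^ s := by
  have hx1 : (0:ℝ) < x + 1 := by linarith
  have h := Real.convexOn_log_Gamma.2 (Set.mem_Ioi.2 hx) (Set.mem_Ioi.2 hx1)
      (by linarith : (0:ℝ) ≤ 1 - s) hs0 (by ring)
  simp only [smul_eq_mul, Function.comp_apply] at h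
  rw [show (1 - s) * x + s * (x + 1) = x + s by ring] at h
  have hGpos : 0 < Real.Gamma x := Real.Gamma_pos_of_pos hx
  have hGs : 0 < Real.Gamma (x + s) := Real.Gamma_pos_of_pos (by linarith)
  rw [Real.Gamma_add_one hx.ne', Real.log_mul hx.ne' hGpos.ne'] at h
  have h2 : Real.log (Real.Gamma (x + s))
      ≤ Real.log (Real.Gamma x) + s * Real.log x := by
    have : (1 - s) * Real.log (Real.Gamma x)
        + s * (Real.log x + Real.log (Real.Gamma x))
        = Real.log (Real.Gamma x) + s * Real.log x := by ring
    linarith [h, this.le]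
  calc Real.Gamma (x + s) = Real.exp (Real.log (Real.Gamma (x + s))) :=
        (Real.exp_log hGs).symm
    _ ≤ Real.exp (Real.log (Real.Gamma x) + s * Real.log x) := Real.exp_le_exp.2 h2
    _ = Real.Gamma x * x ^ s := by
        rw [Real.exp_add, Real.exp_log hGpos, Real.rpow_def_of_pos hx,
          mul_comm (Real.log x) s]

/-- Wendel-type inequality from log-convexity: `Γ(x) x ≤ Γ(x+s) (x+s)^{1-s}`. -/
lemma wendel_lower {s x : ℝ} (hs0 : 0 ≤ s) (hs1 : s ≤ 1) (hx : 0 < x) :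
    Real.Gamma x * x ≤ Real.Gamma (x + s) * (x + s) ^ (1 - s) := by
  have hxs : (0:ℝ) < x + s := by linarith
  have h := Real.convexOn_log_Gamma.2 (Set.mem_Ioi.2 hxs)
      (Set.mem_Ioi.2 (by linarith : (0:ℝ) < x + s + 1)) hs0
      (by linarith : (0:ℝ) ≤ 1 - s) (by ring)
  simp only [smul_eq_mul, Function.comp_apply] at h
  rw [show s * (x + s) + (1 - s) * (x + s + 1) = x + 1 by ring] at h
  have hGpos : 0 < Real.Gamma x := Real.Gamma_pos_of_pos hx
  have hGs : 0 < Real.Gamma (x + s) := Real.Gamma_pos_of_pos hxs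
  rw [Real.Gamma_add_one hx.ne', Real.Gamma_add_one hxs.ne',
    Real.log_mul hx.ne' hGpos.ne', Real.log_mul hxs.ne' hGs.ne'] at h
  have h2 : Real.log x + Real.log (Real.Gamma x)
      ≤ Real.log (Real.Gamma (x + s)) + (1 - s) * Real.log (x + s) := by
    have : s * Real.log (Real.Gamma (x + s))
        + (1 - s) * (Real.log (x + s) + Real.log (Real.Gamma (x + s)))
        = Real.log (Real.Gamma (x + s)) + (1 - s) * Real.log (x + s) := by ring
    linarith [h, this.le]
  calc Real.Gamma x * x
      = Real.exp (Real.log x + Real.log (Real.Gamma x)) := by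
        rw [Real.exp_add, Real.exp_log hx, Real.exp_log hGpos]; ring
    _ ≤ Real.exp (Real.log (Real.Gamma (x + s)) + (1 - s) * Real.log (x + s)) :=
        Real.exp_le_exp.2 h2
    _ = Real.Gamma (x + s) * (x + s) ^ (1 - s) := by
        rw [Real.exp_add, Real.exp_log hGs, Real.rpow_def_of_pos hxs,
          mul_comm (Real.log (x + s)) (1 - s)]

/-- A sequence bounded in `L²` is uniformly integrable in `L¹`. -/
lemma ui_of_l2_bound {Ω : Type*} [MeasurableSpace Ω] {μ : Measure Ω} [IsFiniteMeasure μ]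
    {f : ℕ → Ω → ℝ} (hmeas : ∀ i, AEStronglyMeasurable (f i) μ) {B : ℝ≥0∞} (hB : B ≠ ⊤)
    (hbd : ∀ i, ∫⁻ ω, (‖f i ω‖₊ : ℝ≥0∞) ^ 2 ∂μ ≤ B) :
    UniformIntegrable f 1 μ := by
  refine uniformIntegrable_of le_rfl ENNReal.one_ne_top hmeas fun ε hε => ?_
  have hεe : (0:ℝ≥0∞) < ENNReal.ofReal ε := ENNReal.ofReal_pos.2 hε
  have hdivt : B / ENNReal.ofReal ε ≠ ⊤ :=
    (ENNReal.div_lt_top hB hεe.ne').ne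
  set C : ℝ≥0 := (B / ENNReal.ofReal ε).toNNReal + 1 with hCdef
  have hC0 : (0:ℝ≥0) < C := by positivity
  have hCle : B / ENNReal.ofReal ε ≤ (C : ℝ≥0∞) := by
    rw [hCdef]
    push_cast
    calc B / ENNReal.ofReal ε = ((B / ENNReal.ofReal ε).toNNReal : ℝ≥0∞) :=
          (ENNReal.coe_toNNReal hdivt).symm
      _ ≤ ((B / ENNReal.ofReal ε).toNNReal : ℝ≥0∞) + 1 := le_self_add
  have hBle : B ≤ (C : ℝ≥0∞) * ENNReal.ofReal ε :=
    (ENNReal.div_le_iff hεe.ne' ENNReal.ofReal_ne_top).mp hCle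
  refine ⟨C, fun i => ?_⟩
  rw [eLpNorm_one_eq_lintegral_enorm]
  have hpt : ∀ x, (‖({ x | C ≤ ‖f i x‖₊ }.indicator (f i)) x‖₊ : ℝ≥0∞)
      ≤ (‖f i x‖₊ : ℝ≥0∞) ^ 2 / C := by
    intro x
    by_cases hx : x ∈ { x | C ≤ ‖f i x‖₊ }
    · rw [Set.indicator_of_mem hx]
      have hx' : (C : ℝ≥0∞) ≤ (‖f i x‖₊ : ℝ≥0∞) := ENNReal.coe_le_coe.2 hx
      rw [ENNReal.le_div_iff_mul_le (Or.inl (by exact_mod_cast hC0.ne'))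
        (Or.inl ENNReal.coe_ne_top), sq]
      exact mul_le_mul_right hx' _
    · rw [Set.indicator_of_notMem hx]
      simp
  calc ∫⁻ x, (‖({ x | C ≤ ‖f i x‖₊ }.indicator (f i)) x‖₊ : ℝ≥0∞) ∂μ
      ≤ ∫⁻ x, (‖f i x‖₊ : ℝ≥0∞) ^ 2 / C ∂μ := lintegral_mono hpt
    _ = (∫⁻ x, (‖f i x‖₊ : ℝ≥0∞) ^ 2 ∂μ) * (C : ℝ≥0∞)⁻¹ := by
        simp_rw [div_eq_mul_inv]
        exact lintegral_mul_const' _ _ (ENNReal.inv_ne_top.2 (by exact_mod_cast hC0.ne'))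
    _ ≤ B * (C : ℝ≥0∞)⁻¹ := mul_le_mul_left (hbd i) _
    _ ≤ ((C : ℝ≥0∞) * ENNReal.ofReal ε) * (C : ℝ≥0∞)⁻¹ := mul_le_mul_left hBle _
    _ = ENNReal.ofReal ε := by
        rw [mul_comm (C : ℝ≥0∞), mul_assoc,
          ENNReal.mul_inv_cancel (by exact_mod_cast hC0.ne') ENNReal.coe_ne_top, mul_one]

set_option maxHeartbeats 1000000 in
/-- Theorem 3.1: there is a random variable `Y` such that `M*_n = α*_n N*_n → Y`
almost surely and in `L¹`, and consequently
`N*_n/n^{1-r} = (n - N_n)/n^{1-r} → Y/Γ(2-r)` almost surely and in `L¹`. -/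
theorem martingale_limit_nonzero_steps
    {Ω : Type*} [m0 : MeasurableSpace Ω] (μ : Measure Ω) [IsProbabilityMeasure μ]
    (𝓕 : Filtration ℕ m0) (r : ℝ) (hr0 : 0 < r) (hr1 : r < 1)
    (Istar : ℕ → Ω → ℝ)
    (h01 : ∀ n : ℕ, 1 ≤ n → ∀ ω, Istar n ω = 0 ∨ Istar n ω = 1)
    (hadapt : ∀ n : ℕ, 1 ≤ n → StronglyMeasurable[𝓕 n] (Istar n))
    (hint : ∀ n : ℕ, 1 ≤ n → Integrable (Istar n) μ)
    (Nstar : ℕ → Ω → ℝ)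
    (hN : ∀ n ω, Nstar n ω = ∑ k ∈ Finset.Icc 1 n, Istar k ω)
    (hI1 : ∫ ω, Istar 1 ω ∂μ = 1 - r)
    (hcond : ∀ n : ℕ, 1 ≤ n →
      (μ[Istar (n + 1)|𝓕 n]) =ᵐ[μ] fun ω => ((1 - r) / (n : ℝ)) * Nstar n ω)
    (astar : ℕ → ℝ)
    (hastar : ∀ k : ℕ, astar k
      = Real.Gamma (k : ℝ) * Real.Gamma (2 - r) / Real.Gamma ((k : ℝ) + 1 - r)) :
    ∃ Y : Ω → ℝ, Integrable Y μ ∧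
      (∀ᵐ ω ∂μ, Tendsto (fun n : ℕ => astar n * Nstar n ω) atTop (nhds (Y ω))) ∧
      Tendsto (fun n : ℕ => ∫ ω, |astar n * Nstar n ω - Y ω| ∂μ) atTop (nhds 0) ∧
      (∀ᵐ ω ∂μ, Tendsto (fun n : ℕ => Nstar n ω / (n : ℝ) ^ (1 - r)) atTop
        (nhds (Y ω / Real.Gamma (2 - r)))) ∧
      Tendsto (fun n : ℕ =>
          ∫ ω, |Nstar n ω / (n : ℝ) ^ (1 - r) - Y ω / Real.Gamma (2 - r)| ∂μ)
        atTop (nhds 0) := by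
  classical
  have hr2 : (0:ℝ) < 2 - r := by linarith
  set G : ℝ := Real.Gamma (2 - r) with hG
  have hGpos : 0 < G := Real.Gamma_pos_of_pos hr2
  -- basic positivity and recurrence for astar
  have hapos : ∀ k : ℕ, 1 ≤ k → 0 < astar k := by
    intro k hk
    have hk' : (0:ℝ) < k := by exact_mod_cast hk
    have h1 : 0 < Real.Gamma (k:ℝ) := Real.Gamma_pos_of_pos hk'
    have h2 : 0 < Real.Gamma ((k:ℝ) + 1 - r) := Real.Gamma_pos_of_pos (by linarith)
    rw [hastar]
    positivity
  have hrec : ∀ k : ℕ, 1 ≤ k → astar (k+1) * ((k:ℝ) + 1 - r) = astar k * k := by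
    intro k hk
    have hk' : (0:ℝ) < k := by exact_mod_cast hk
    have h2 : 0 < Real.Gamma ((k:ℝ) + 1 - r) := Real.Gamma_pos_of_pos (by linarith)
    rw [hastar, hastar]
    push_cast
    rw [Real.Gamma_add_one hk'.ne',
      show (k:ℝ) + 1 + 1 - r = ((k:ℝ) + 1 - r) + 1 by ring,
      Real.Gamma_add_one (by linarith : (0:ℝ) < (k:ℝ) + 1 - r).ne',
      div_mul_eq_mul_div, div_mul_eq_mul_div,
      div_eq_div_iff (mul_pos (by linarith : (0:ℝ) < (k:ℝ) + 1 - r) h2).ne' h2.ne']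
    ring
  -- Wendel-type bounds for astar
  have hlowb : ∀ k : ℕ, 1 ≤ k → G ≤ astar k * (k:ℝ) ^ (1 - r) := by
    intro k hk
    have hk' : (0:ℝ) < k := by exact_mod_cast hk
    have h1 : 0 < Real.Gamma (k:ℝ) := Real.Gamma_pos_of_pos hk'
    have h2 : 0 < Real.Gamma ((k:ℝ) + 1 - r) := Real.Gamma_pos_of_pos (by linarith)
    have hw := wendel_upper (by linarith : (0:ℝ) ≤ 1 - r) (by linarith) hk'
    rw [show (k:ℝ) + (1 - r) = (k:ℝ) + 1 - r by ring] at hw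
    rw [hastar, div_mul_eq_mul_div, le_div_iff₀ h2]
    calc G * Real.Gamma ((k:ℝ) + 1 - r)
        ≤ G * (Real.Gamma (k:ℝ) * (k:ℝ) ^ (1 - r)) :=
          mul_le_mul_of_nonneg_left hw hGpos.le
      _ = Real.Gamma (k:ℝ) * G * (k:ℝ) ^ (1 - r) := by ring
  have huppb : ∀ k : ℕ, 1 ≤ k →
      astar k * (k:ℝ) ^ (1 - r) ≤ G * (1 + (1 - r)/(k:ℝ)) ^ r := by
    intro k hk
    have hk' : (0:ℝ) < k := by exact_mod_cast hk
    have h1 : 0 < Real.Gamma (k:ℝ) := Real.Gamma_pos_of_pos hk'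
    have h2 : 0 < Real.Gamma ((k:ℝ) + 1 - r) := Real.Gamma_pos_of_pos (by linarith)
    have hw := wendel_lower (by linarith : (0:ℝ) ≤ 1 - r) (by linarith) hk'
    rw [show (k:ℝ) + (1 - r) = (k:ℝ) + 1 - r by ring,
      show 1 - (1 - r) = r by ring] at hw
    have hdiv : (1 + (1 - r)/(k:ℝ)) = ((k:ℝ) + 1 - r) / k := by
      field_simp
      ring
    rw [hdiv, Real.div_rpow (by linarith) hk'.le, ← mul_div_assoc]
    rw [hastar, div_mul_eq_mul_div, div_le_div_iff₀ h2 (by positivity)]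
    have hpow : (k:ℝ) ^ (1 - r) * (k:ℝ) ^ r = (k:ℝ) := by
      rw [← Real.rpow_add hk', show 1 - r + r = 1 by ring, Real.rpow_one]
    calc Real.Gamma (k:ℝ) * G * (k:ℝ) ^ (1 - r) * (k:ℝ) ^ r
        = G * (Real.Gamma (k:ℝ) * (k:ℝ)) := by rw [mul_assoc, hpow]; ring
      _ ≤ G * (Real.Gamma ((k:ℝ) + 1 - r) * ((k:ℝ) + 1 - r) ^ r) :=
          mul_le_mul_of_nonneg_left hw hGpos.le
      _ = G * ((k:ℝ) + 1 - r) ^ r * Real.Gamma ((k:ℝ) + 1 - r) := by ring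
  have haub : ∀ k : ℕ, 1 ≤ k → astar k ≤ G * ((k:ℝ) + 1) ^ r / k := by
    intro k hk
    have hk' : (0:ℝ) < k := by exact_mod_cast hk
    have h1 : 0 < Real.Gamma (k:ℝ) := Real.Gamma_pos_of_pos hk'
    have h2 : 0 < Real.Gamma ((k:ℝ) + 1 - r) := Real.Gamma_pos_of_pos (by linarith)
    have hw := wendel_lower (by linarith : (0:ℝ) ≤ 1 - r) (by linarith) hk'
    rw [show (k:ℝ) + (1 - r) = (k:ℝ) + 1 - r by ring,
      show 1 - (1 - r) = r by ring] at hw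
    have hw2 : Real.Gamma (k:ℝ) * (k:ℝ)
        ≤ Real.Gamma ((k:ℝ) + 1 - r) * ((k:ℝ) + 1) ^ r := by
      refine hw.trans (mul_le_mul_of_nonneg_left ?_ h2.le)
      exact Real.rpow_le_rpow (by linarith) (by linarith) hr0.le
    rw [hastar, div_le_div_iff₀ h2 hk']
    calc Real.Gamma (k:ℝ) * G * (k:ℝ) = G * (Real.Gamma (k:ℝ) * (k:ℝ)) := by ring
      _ ≤ G * (Real.Gamma ((k:ℝ) + 1 - r) * ((k:ℝ) + 1) ^ r) :=
          mul_le_mul_of_nonneg_left hw2 hGpos.le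
      _ = G * ((k:ℝ) + 1) ^ r * Real.Gamma ((k:ℝ) + 1 - r) := by ring
  -- the normalisation tends to Γ(2-r)
  have haT : Tendsto (fun n : ℕ => astar n * (n:ℝ) ^ (1 - r)) atTop (nhds G) := by
    have h1 : Tendsto (fun n : ℕ => 1 + (1 - r)/(n:ℝ)) atTop (nhds 1) := by
      have := (tendsto_const_div_atTop_nhds_zero_nat (1 - r)).const_add 1
      simpa using this
    have h2 : Tendsto (fun n : ℕ => G * (1 + (1 - r)/(n:ℝ)) ^ r) atTop (nhds G) := by
      have hc : ContinuousAt (fun y : ℝ => y ^ r) 1 :=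
        Real.continuousAt_rpow_const 1 r (Or.inl one_ne_zero)
      have := (hc.tendsto.comp h1).const_mul G
      simpa [Real.one_rpow] using this
    refine tendsto_of_tendsto_of_tendsto_of_le_of_le' tendsto_const_nhds h2 ?_ ?_
    · filter_upwards [eventually_ge_atTop 1] with k hk using hlowb k hk
    · filter_upwards [eventually_ge_atTop 1] with k hk using huppb k hk
  -- measurability and integrability of Nstar
  have hI01 : ∀ k : ℕ, 1 ≤ k → ∀ ω, 0 ≤ Istar k ω ∧ Istar k ω ≤ 1 := by
    intro k hk ω
    rcases h01 k hk ω with h | h <;> rw [h] <;> norm_num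
  have hNsm : ∀ n : ℕ, 1 ≤ n → StronglyMeasurable[𝓕 n] (Nstar n) := by
    intro n hn
    have : Nstar n = fun ω => ∑ k ∈ Finset.Icc 1 n, Istar k ω := funext (hN n)
    rw [this]
    refine Finset.stronglyMeasurable_fun_sum _ fun k hk => ?_
    rcases Finset.mem_Icc.1 hk with ⟨hk1, hk2⟩
    exact (hadapt k hk1).mono (𝓕.mono hk2)
  have hNint : ∀ n : ℕ, Integrable (Nstar n) μ := by
    intro n
    have : Nstar n = fun ω => ∑ k ∈ Finset.Icc 1 n, Istar k ω := funext (hN n)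
    rw [this]
    refine integrable_finset_sum _ fun k hk => ?_
    exact hint k (Finset.mem_Icc.1 hk).1
  have hN0 : ∀ n ω, 0 ≤ Nstar n ω := by
    intro n ω
    rw [hN]
    exact Finset.sum_nonneg fun k hk => (hI01 k (Finset.mem_Icc.1 hk).1 ω).1
  have hNle : ∀ n ω, Nstar n ω ≤ n := by
    intro n ω
    rw [hN]
    calc ∑ k ∈ Finset.Icc 1 n, Istar k ω ≤ ∑ k ∈ Finset.Icc 1 n, (1:ℝ) :=
          Finset.sum_le_sum fun k hk => (hI01 k (Finset.mem_Icc.1 hk).1 ω).2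
      _ = n := by simp [Nat.card_Icc]
  have hsucc : ∀ n : ℕ, ∀ ω, Nstar (n+1) ω = Nstar n ω + Istar (n+1) ω := by
    intro n ω
    rw [hN, hN, Finset.sum_Icc_succ_top (by omega : 1 ≤ n + 1)]
  -- bounded integrability helper
  have hbint : ∀ (g : Ω → ℝ), AEStronglyMeasurable g μ → ∀ c : ℝ,
      (∀ ω, |g ω| ≤ c) → Integrable g μ := fun g hg c hb =>
    memLp_one_iff_integrable.mp
      (MemLp.of_bound hg c (ae_of_all _ (by simpa [Real.norm_eq_abs] using hb)))
  -- the martingale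
  set F : ℕ → Ω → ℝ := fun n ω => astar (n+1) * Nstar (n+1) ω with hF
  set 𝓖 : Filtration ℕ m0 :=
    ⟨fun n => 𝓕 (n+1), fun i j hij => 𝓕.mono (by omega), fun n => 𝓕.le _⟩ with h𝓖
  have h𝓖n : ∀ n, 𝓖 n = 𝓕 (n+1) := fun n => rfl
  have hFadp : StronglyAdapted 𝓖 F := by
    intro n
    exact ((hNsm (n+1) (by omega)).const_mul _)
  have hFint : ∀ n, Integrable (F n) μ := fun n => (hNint (n+1)).const_mul _
  have hstep : ∀ n : ℕ, F n =ᵐ[μ] μ[F (n+1)|𝓖 n] := by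
    intro n
    have hkey : astar (n+2) + astar (n+2) * ((1-r)/((n:ℝ)+1)) = astar (n+1) := by
      have h := hrec (n+1) (by omega)
      push_cast at h
      have hm : (0:ℝ) < (n:ℝ) + 1 := by positivity
      field_simp
      nlinarith [h]
    have h1 : F (n+1) = (fun ω => astar (n+2) * Nstar (n+1) ω)
        + (fun ω => astar (n+2) * Istar (n+2) ω) := by
      funext ω
      simp only [hF, Pi.add_apply]
      rw [show n+1+1 = n+2 from rfl, hsucc (n+1) ω]
      ring
    have hN1 : Integrable (fun ω => astar (n+2) * Nstar (n+1) ω) μ :=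
      (hNint (n+1)).const_mul _
    have hI2 : Integrable (fun ω => astar (n+2) * Istar (n+2) ω) μ :=
      (hint (n+2) (by omega)).const_mul _
    have e1 : μ[(fun ω => astar (n+2) * Nstar (n+1) ω)|𝓖 n]
        = fun ω => astar (n+2) * Nstar (n+1) ω :=
      condExp_of_stronglyMeasurable (𝓖.le n)
        ((hNsm (n+1) (by omega)).const_mul _) hN1
    have e2 : μ[(fun ω => astar (n+2) * Istar (n+2) ω)|𝓖 n]
        =ᵐ[μ] fun ω => astar (n+2) * (((1-r)/((n:ℝ)+1)) * Nstar (n+1) ω) := by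
      have hs : (fun ω => astar (n+2) * Istar (n+2) ω)
          = astar (n+2) • Istar (n+2) := rfl
      rw [hs]
      refine (condExp_smul (astar (n+2)) (Istar (n+2)) _).trans ?_
      have hc := hcond (n+1) (by omega)
      rw [h𝓖n]
      filter_upwards [hc] with ω hω
      simp only [Pi.smul_apply, smul_eq_mul, hω]
      push_cast
      ring
    rw [h1]
    refine EventuallyEq.symm ?_
    calc μ[(fun ω => astar (n+2) * Nstar (n+1) ω)
          + (fun ω => astar (n+2) * Istar (n+2) ω)|𝓖 n]
        =ᵐ[μ] μ[(fun ω => astar (n+2) * Nstar (n+1) ω)|𝓖 n]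
          + μ[(fun ω => astar (n+2) * Istar (n+2) ω)|𝓖 n] := condExp_add hN1 hI2 _
      _ =ᵐ[μ] F n := by
          rw [e1]
          filter_upwards [e2] with ω hω
          simp only [Pi.add_apply, hω, hF]
          nlinarith [hkey, hN0 (n+1) ω]
  have hmart : Martingale F 𝓖 μ := martingale_nat hFadp hFint hstep
  -- mean value
  have hmean : ∀ n, ∫ ω, F n ω ∂μ = 1 - r := by
    intro n
    have ha1 : astar 1 = 1 := by
      rw [hastar]
      norm_num
      rw [← hG]
      exact div_self hGpos.ne'
    have h0 : ∫ ω, F 0 ω ∂μ = 1 - r := by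
      have hN1 : ∀ ω, Nstar 1 ω = Istar 1 ω := by
        intro ω; rw [hN]; simp
      simp only [hF]
      calc ∫ ω, astar 1 * Nstar 1 ω ∂μ = ∫ ω, Istar 1 ω ∂μ := by
            congr 1; funext ω; rw [ha1, hN1 ω]; ring
        _ = 1 - r := hI1
    calc ∫ ω, F n ω ∂μ = ∫ ω, (μ[F n|𝓖 0]) ω ∂μ :=
          (integral_condExp (𝓖.le 0)).symm
      _ = ∫ ω, F 0 ω ∂μ := integral_congr_ae (hmart.condExp_ae_eq (Nat.zero_le n))
      _ = 1 - r := h0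
  -- second moments
  have hsqm : ∀ (g : Ω → ℝ), AEStronglyMeasurable g μ →
      AEStronglyMeasurable (fun ω => (g ω)^2) μ := fun g hg => by
    exact (hg.mul hg).congr (ae_of_all _ fun ω => by simp [sq])
  have hNsq_int : ∀ n : ℕ, Integrable (fun ω => (Nstar (n+1) ω)^2) μ := by
    intro n
    refine hbint _ (hsqm _ ((hNsm (n+1) (by omega)).mono (𝓕.le _)).aestronglyMeasurable)
      (((n:ℝ)+1)^2) fun ω => ?_
    rw [abs_of_nonneg (sq_nonneg _)]
    have h1 := hN0 (n+1) ω
    have h2 := hNle (n+1) ω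
    push_cast at h2
    nlinarith
  have hEN : ∀ n : ℕ, ∫ ω, Nstar (n+1) ω ∂μ = (1 - r) / astar (n+1) := by
    intro n
    have h := hmean n
    have ha := hapos (n+1) (by omega)
    simp only [hF] at h
    rw [integral_const_mul] at h
    field_simp
    linarith [h]
  have hEI : ∀ n : ℕ, ∫ ω, Istar (n+2) ω ∂μ
      = (1-r)/((n:ℝ)+1) * ∫ ω, Nstar (n+1) ω ∂μ := by
    intro n
    calc ∫ ω, Istar (n+2) ω ∂μ = ∫ ω, (μ[Istar (n+2)|𝓕 (n+1)]) ω ∂μ :=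
          (integral_condExp (𝓕.le (n+1))).symm
      _ = ∫ ω, ((1-r)/((n:ℝ)+1)) * Nstar (n+1) ω ∂μ := by
          refine integral_congr_ae ((hcond (n+1) (by omega)).trans ?_)
          refine Filter.EventuallyEq.of_eq (funext fun ω => ?_)
          push_cast
          ring
      _ = (1-r)/((n:ℝ)+1) * ∫ ω, Nstar (n+1) ω ∂μ := integral_const_mul _ _
  have hNIint : ∀ n : ℕ, Integrable (Nstar (n+1) * Istar (n+2)) μ := by
    intro n
    refine hbint _ ((((hNsm (n+1) (by omega)).mono (𝓕.le _)).mul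
      ((hadapt (n+2) (by omega)).mono (𝓕.le _))).aestronglyMeasurable) ((n:ℝ)+1) fun ω => ?_
    simp only [Pi.mul_apply]
    rw [abs_mul]
    have h1 := hN0 (n+1) ω
    have h2 := hNle (n+1) ω
    have h3 := hI01 (n+2) (by omega) ω
    push_cast at h2
    rw [abs_of_nonneg h1, abs_of_nonneg h3.1]
    nlinarith [h3.2]
  have hENI : ∀ n : ℕ, ∫ ω, Nstar (n+1) ω * Istar (n+2) ω ∂μ
      = (1-r)/((n:ℝ)+1) * ∫ ω, (Nstar (n+1) ω)^2 ∂μ := by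
    intro n
    have hpull := condExp_mul_of_stronglyMeasurable_left (hNsm (n+1) (by omega))
      (hNIint n) (hint (n+2) (by omega))
    have h0 := integral_condExp (μ := μ) (𝓕.le (n+1)) (f := Nstar (n+1) * Istar (n+2))
    simp only [Pi.mul_apply] at h0
    rw [← h0]
    calc ∫ ω, (μ[Nstar (n+1) * Istar (n+2)|𝓕 (n+1)]) ω ∂μ
        = ∫ ω, ((1-r)/((n:ℝ)+1)) * (Nstar (n+1) ω)^2 ∂μ := by
          refine integral_congr_ae (hpull.trans ?_)
          filter_upwards [hcond (n+1) (by omega)] with ω hω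
          simp only [Pi.mul_apply, hω]
          push_cast
          ring
      _ = (1-r)/((n:ℝ)+1) * ∫ ω, (Nstar (n+1) ω)^2 ∂μ := integral_const_mul _ _
  -- one-step second moment inequality
  have key2 : ∀ n : ℕ, ∫ ω, (F (n+1) ω)^2 ∂μ
      ≤ ∫ ω, (F n ω)^2 ∂μ + (2*G*(1-r)^2) * ((n:ℝ)+1)^(r-2) := by
    intro n
    have hm : (0:ℝ) < (n:ℝ)+1 := by positivity
    have hm1 : (1:ℝ) ≤ (n:ℝ)+1 := by
      have : (0:ℝ) ≤ (n:ℝ) := Nat.cast_nonneg n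
      linarith
    have ha1 := hapos (n+1) (by omega)
    have ha2 := hapos (n+2) (by omega)
    have hrec' : astar (n+2) * ((n:ℝ)+1+1-r) = astar (n+1) * ((n:ℝ)+1) := by
      have h := hrec (n+1) (by omega)
      push_cast at h
      linarith [h]
    have hexp : ∀ ω, (F (n+1) ω)^2 = astar (n+2)^2 * ((Nstar (n+1) ω)^2
        + (2*(Nstar (n+1) ω * Istar (n+2) ω) + Istar (n+2) ω)) := by
      intro ω
      have hI2 : Istar (n+2) ω * Istar (n+2) ω = Istar (n+2) ω := by
        rcases h01 (n+2) (by omega) ω with h | h <;> rw [h] <;> ring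
      simp only [hF]
      rw [show n+1+1 = n+2 from rfl, hsucc (n+1) ω]
      linear_combination (astar (n+2)^2) * hI2
    have hInt1 : Integrable (fun ω => (Nstar (n+1) ω)^2) μ := hNsq_int n
    have hInt2 : Integrable (fun ω => 2*(Nstar (n+1) ω * Istar (n+2) ω)) μ :=
      (hNIint n).const_mul 2
    have hInt3 : Integrable (Istar (n+2)) μ := hint (n+2) (by omega)
    have hInt23 : Integrable (fun ω => 2*(Nstar (n+1) ω * Istar (n+2) ω)
        + Istar (n+2) ω) μ := hInt2.add hInt3
    have hy : 0 ≤ ∫ ω, (Nstar (n+1) ω)^2 ∂μ := integral_nonneg fun ω => sq_nonneg _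
    have heq1 : ∫ ω, (F (n+1) ω)^2 ∂μ
        = astar (n+2)^2 * ((∫ ω, (Nstar (n+1) ω)^2 ∂μ)
          + (2*((1-r)/((n:ℝ)+1) * ∫ ω, (Nstar (n+1) ω)^2 ∂μ)
            + (1-r)/((n:ℝ)+1) * ((1-r)/astar (n+1)))) := by
      rw [integral_congr_ae (ae_of_all _ hexp), integral_const_mul,
        integral_add hInt1 hInt23, integral_add hInt2 hInt3,
        integral_const_mul, hENI n, hEI n, hEN n]
    have heq0 : ∫ ω, (F n ω)^2 ∂μ = astar (n+1)^2 * ∫ ω, (Nstar (n+1) ω)^2 ∂μ := by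
      calc ∫ ω, (F n ω)^2 ∂μ = ∫ ω, astar (n+1)^2 * (Nstar (n+1) ω)^2 ∂μ :=
            integral_congr_ae (ae_of_all _ fun ω => by simp only [hF]; ring)
        _ = astar (n+1)^2 * ∫ ω, (Nstar (n+1) ω)^2 ∂μ := integral_const_mul _ _
    have hsqe : (astar (n+1) * ((n:ℝ)+1))^2 = (astar (n+2) * ((n:ℝ)+1+1-r))^2 := by
      rw [hrec']
    have hclaim1 : astar (n+2)^2 + 2*astar (n+2)^2*((1-r)/((n:ℝ)+1))
        ≤ astar (n+1)^2 := by
      have hmain : (astar (n+2)^2 + 2*astar (n+2)^2*((1-r)/((n:ℝ)+1))) * ((n:ℝ)+1)^2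
          ≤ astar (n+1)^2 * ((n:ℝ)+1)^2 := by
        have e1 : (astar (n+2)^2 + 2*astar (n+2)^2*((1-r)/((n:ℝ)+1))) * ((n:ℝ)+1)^2
            = astar (n+2)^2*((n:ℝ)+1)^2 + 2*astar (n+2)^2*(1-r)*((n:ℝ)+1) := by
          field_simp
        rw [e1]
        nlinarith [hsqe, sq_nonneg (astar (n+2) * (1-r))]
      exact le_of_mul_le_mul_right hmain (by positivity)
    have ha2le : astar (n+2) ≤ astar (n+1) := by
      have h1 : astar (n+2) * ((n:ℝ)+1+1-r) ≤ astar (n+1) * ((n:ℝ)+1+1-r) := by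
        rw [hrec']
        have : astar (n+1) * ((n:ℝ)+1) ≤ astar (n+1) * ((n:ℝ)+1+1-r) :=
          mul_le_mul_of_nonneg_left (by linarith) ha1.le
        linarith
      exact le_of_mul_le_mul_right h1 (by linarith)
    have haub1 : astar (n+1) ≤ G * (((n:ℝ)+1)+1)^r / ((n:ℝ)+1) := by
      have h := haub (n+1) (by omega)
      push_cast at h
      exact h
    have hpow1 : (((n:ℝ)+1)+1)^r ≤ 2 * ((n:ℝ)+1)^r := by
      have h1 : (((n:ℝ)+1)+1)^r ≤ (2*((n:ℝ)+1))^r :=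
        Real.rpow_le_rpow (by linarith) (by linarith) hr0.le
      have h2 : (2*((n:ℝ)+1))^r = 2^r * ((n:ℝ)+1)^r := Real.mul_rpow (by norm_num) hm.le
      have h3 : (2:ℝ)^r ≤ 2 := by
        calc (2:ℝ)^r ≤ (2:ℝ)^(1:ℝ) := Real.rpow_le_rpow_of_exponent_le one_le_two hr1.le
          _ = 2 := Real.rpow_one 2
      calc (((n:ℝ)+1)+1)^r ≤ 2^r * ((n:ℝ)+1)^r := h1.trans_eq h2
        _ ≤ 2 * ((n:ℝ)+1)^r :=
          mul_le_mul_of_nonneg_right h3 (Real.rpow_nonneg hm.le r)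
    have hterm : astar (n+2)^2 * ((1-r)/((n:ℝ)+1) * ((1-r)/astar (n+1)))
        ≤ (2*G*(1-r)^2) * ((n:ℝ)+1)^(r-2) := by
      have e1 : astar (n+2)^2 * ((1-r)/((n:ℝ)+1) * ((1-r)/astar (n+1)))
          = astar (n+2)^2 * (1-r)^2 / (((n:ℝ)+1) * astar (n+1)) := by
        field_simp
      have e2 : astar (n+2)^2 * (1-r)^2 / (((n:ℝ)+1) * astar (n+1))
          ≤ astar (n+1)^2 * (1-r)^2 / (((n:ℝ)+1) * astar (n+1)) := by
        have hsq2 : astar (n+2)^2 ≤ astar (n+1)^2 := by nlinarith [ha2.le, ha2le]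
        exact (div_le_div_iff_of_pos_right (by positivity)).mpr
          (mul_le_mul_of_nonneg_right hsq2 (sq_nonneg _))
      have e3 : astar (n+1)^2 * (1-r)^2 / (((n:ℝ)+1) * astar (n+1))
          = astar (n+1) * (1-r)^2 / ((n:ℝ)+1) := by
        field_simp [ha1.ne']
      have e4 : astar (n+1) * (1-r)^2 / ((n:ℝ)+1)
          ≤ (G * (((n:ℝ)+1)+1)^r / ((n:ℝ)+1)) * (1-r)^2 / ((n:ℝ)+1) :=
        (div_le_div_iff_of_pos_right hm).mpr (mul_le_mul_of_nonneg_right haub1 (sq_nonneg _))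
      have e5 : (G * (((n:ℝ)+1)+1)^r / ((n:ℝ)+1)) * (1-r)^2 / ((n:ℝ)+1)
          ≤ (G * (2 * ((n:ℝ)+1)^r) / ((n:ℝ)+1)) * (1-r)^2 / ((n:ℝ)+1) :=
        (div_le_div_iff_of_pos_right hm).mpr (mul_le_mul_of_nonneg_right
          ((div_le_div_iff_of_pos_right hm).mpr
            (mul_le_mul_of_nonneg_left hpow1 hGpos.le)) (sq_nonneg _))
      have e6 : (G * (2 * ((n:ℝ)+1)^r) / ((n:ℝ)+1)) * (1-r)^2 / ((n:ℝ)+1)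
          = (2*G*(1-r)^2) * (((n:ℝ)+1)^r / ((n:ℝ)+1)^2) := by
        field_simp
      have e7 : ((n:ℝ)+1)^r / ((n:ℝ)+1)^2 = ((n:ℝ)+1)^(r-2) := by
        rw [show ((n:ℝ)+1)^2 = ((n:ℝ)+1)^((2:ℕ):ℝ) by rw [Real.rpow_natCast],
          ← Real.rpow_sub hm]
        norm_num
      calc astar (n+2)^2 * ((1-r)/((n:ℝ)+1) * ((1-r)/astar (n+1)))
          = astar (n+2)^2 * (1-r)^2 / (((n:ℝ)+1) * astar (n+1)) := e1
        _ ≤ astar (n+1)^2 * (1-r)^2 / (((n:ℝ)+1) * astar (n+1)) := e2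
        _ = astar (n+1) * (1-r)^2 / ((n:ℝ)+1) := e3
        _ ≤ (G * (((n:ℝ)+1)+1)^r / ((n:ℝ)+1)) * (1-r)^2 / ((n:ℝ)+1) := e4
        _ ≤ (G * (2 * ((n:ℝ)+1)^r) / ((n:ℝ)+1)) * (1-r)^2 / ((n:ℝ)+1) := e5
        _ = (2*G*(1-r)^2) * (((n:ℝ)+1)^r / ((n:ℝ)+1)^2) := e6
        _ = (2*G*(1-r)^2) * ((n:ℝ)+1)^(r-2) := by rw [e7]
    rw [heq1, heq0]
    calc astar (n+2)^2 * ((∫ ω, (Nstar (n+1) ω)^2 ∂μ)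
          + (2*((1-r)/((n:ℝ)+1) * ∫ ω, (Nstar (n+1) ω)^2 ∂μ)
            + (1-r)/((n:ℝ)+1) * ((1-r)/astar (n+1))))
        = (astar (n+2)^2 + 2*astar (n+2)^2*((1-r)/((n:ℝ)+1)))
            * (∫ ω, (Nstar (n+1) ω)^2 ∂μ)
          + astar (n+2)^2 * ((1-r)/((n:ℝ)+1) * ((1-r)/astar (n+1))) := by ring
      _ ≤ astar (n+1)^2 * (∫ ω, (Nstar (n+1) ω)^2 ∂μ)
          + (2*G*(1-r)^2) * ((n:ℝ)+1)^(r-2) :=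
        add_le_add (mul_le_mul_of_nonneg_right hclaim1 hy) hterm
  -- uniform second moment bound
  have hsummand_nonneg : ∀ k : ℕ, (0:ℝ) ≤ (2*G*(1-r)^2) * ((k:ℝ)+1)^(r-2) := by
    intro k
    have h1 : (0:ℝ) ≤ ((k:ℝ)+1)^(r-2) := Real.rpow_nonneg (by positivity) _
    positivity
  have hsummable : Summable (fun k : ℕ => (2*G*(1-r)^2) * ((k:ℝ)+1)^(r-2)) := by
    apply Summable.mul_left
    have h1 : Summable (fun k : ℕ => ((k:ℝ))^(r-2)) :=
      Real.summable_nat_rpow.mpr (by linarith)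
    have h2 := (summable_nat_add_iff 1).mpr h1
    refine h2.congr fun k => ?_
    push_cast
    rfl
  have hqbound : ∀ n : ℕ, ∫ ω, (F n ω)^2 ∂μ ≤ ∫ ω, (F 0 ω)^2 ∂μ
      + ∑' k : ℕ, (2*G*(1-r)^2) * ((k:ℝ)+1)^(r-2) := by
    have hpartial : ∀ n : ℕ, ∫ ω, (F n ω)^2 ∂μ ≤ ∫ ω, (F 0 ω)^2 ∂μ
        + ∑ k ∈ Finset.range n, (2*G*(1-r)^2) * ((k:ℝ)+1)^(r-2) := by
      intro n
      induction n with
      | zero => simp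
      | succ n ih =>
        calc ∫ ω, (F (n+1) ω)^2 ∂μ
            ≤ ∫ ω, (F n ω)^2 ∂μ + (2*G*(1-r)^2) * ((n:ℝ)+1)^(r-2) := key2 n
          _ ≤ (∫ ω, (F 0 ω)^2 ∂μ
                + ∑ k ∈ Finset.range n, (2*G*(1-r)^2) * ((k:ℝ)+1)^(r-2))
              + (2*G*(1-r)^2) * ((n:ℝ)+1)^(r-2) := by linarith
          _ = ∫ ω, (F 0 ω)^2 ∂μ
                + ∑ k ∈ Finset.range (n+1), (2*G*(1-r)^2) * ((k:ℝ)+1)^(r-2) := by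
              rw [Finset.sum_range_succ]; ring
    intro n
    refine (hpartial n).trans ?_
    have h3 := Summable.sum_le_tsum (Finset.range n) (fun k _ => hsummand_nonneg k) hsummable
    linarith
  -- L² boundedness in ℝ≥0∞ and uniform integrability
  have hFsq_int : ∀ n : ℕ, Integrable (fun ω => (F n ω)^2) μ := by
    intro n
    refine hbint _ (hsqm _ ((hFadp n).mono (𝓖.le n)).aestronglyMeasurable)
      ((|astar (n+1)| * ((n:ℝ)+2))^2) fun ω => ?_
    rw [abs_of_nonneg (sq_nonneg _)]
    have h1 : |F n ω| ≤ |astar (n+1)| * ((n:ℝ)+2) := by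
      simp only [hF]
      rw [abs_mul]
      refine mul_le_mul_of_nonneg_left ?_ (abs_nonneg _)
      rw [abs_of_nonneg (hN0 (n+1) ω)]
      have h2 := hNle (n+1) ω
      push_cast at h2
      linarith
    calc (F n ω)^2 = |F n ω|^2 := (sq_abs _).symm
      _ ≤ (|astar (n+1)| * ((n:ℝ)+2))^2 := by nlinarith [abs_nonneg (F n ω)]
  have hlin : ∀ n : ℕ, ∫⁻ ω, (‖F n ω‖₊ : ℝ≥0∞)^2 ∂μ
      ≤ ENNReal.ofReal (∫ ω, (F 0 ω)^2 ∂μ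
        + ∑' k : ℕ, (2*G*(1-r)^2) * ((k:ℝ)+1)^(r-2)) := by
    intro n
    have h1 : ∀ ω, (‖F n ω‖₊ : ℝ≥0∞)^2 = ENNReal.ofReal ((F n ω)^2) := by
      intro ω
      rw [← enorm_eq_nnnorm, Real.enorm_eq_ofReal_abs, ← ENNReal.ofReal_pow (abs_nonneg _), sq_abs]
    calc ∫⁻ ω, (‖F n ω‖₊ : ℝ≥0∞)^2 ∂μ
        = ∫⁻ ω, ENNReal.ofReal ((F n ω)^2) ∂μ := by simp_rw [h1]
      _ = ENNReal.ofReal (∫ ω, (F n ω)^2 ∂μ) :=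
          (ofReal_integral_eq_lintegral_ofReal (hFsq_int n)
            (ae_of_all _ fun ω => sq_nonneg _)).symm
      _ ≤ ENNReal.ofReal (∫ ω, (F 0 ω)^2 ∂μ
            + ∑' k : ℕ, (2*G*(1-r)^2) * ((k:ℝ)+1)^(r-2)) :=
          ENNReal.ofReal_le_ofReal (hqbound n)
  have hFmeas : ∀ n, AEStronglyMeasurable (F n) μ :=
    fun n => ((hFadp n).mono (𝓖.le n)).aestronglyMeasurable
  have hui : UniformIntegrable F 1 μ :=
    ui_of_l2_bound hFmeas ENNReal.ofReal_ne_top hlin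
  obtain ⟨R, hR⟩ := hui.2.2
  -- limit process
  set Y : Ω → ℝ := 𝓖.limitProcess F μ with hY
  have hsub : Submartingale F 𝓖 μ := hmart.submartingale
  have haeY : ∀ᵐ ω ∂μ, Tendsto (fun n => F n ω) atTop (nhds (Y ω)) :=
    hsub.ae_tendsto_limitProcess hR
  have hYint : Integrable Y μ :=
    memLp_one_iff_integrable.mp (hsub.memLp_limitProcess hR)
  have hL1 : Tendsto (fun n => eLpNorm (F n - Y) 1 μ) atTop (nhds 0) :=
    hsub.tendsto_eLpNorm_one_limitProcess hui
  -- conversion to real integrals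
  have hL1' : Tendsto (fun n => ∫ ω, |F n ω - Y ω| ∂μ) atTop (nhds 0) := by
    have heq : ∀ n, ∫ ω, |F n ω - Y ω| ∂μ = (eLpNorm (F n - Y) 1 μ).toReal := by
      intro n
      rw [eLpNorm_one_eq_lintegral_enorm]
      have h := integral_norm_eq_lintegral_enorm
        ((hFint n).sub hYint).aestronglyMeasurable
      simp only [Pi.sub_apply, Real.norm_eq_abs] at h
      simp only [Pi.sub_apply]
      exact h
    have h0 : Tendsto (fun n => (eLpNorm (F n - Y) 1 μ).toReal) atTop (nhds 0) := by
      have h1 := (ENNReal.tendsto_toReal (by simp : (0:ℝ≥0∞) ≠ ⊤)).comp hL1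
      simpa [Function.comp_def] using h1
    exact h0.congr fun n => (heq n).symm
  -- conclusion 1 : a.e. convergence
  have hc1 : ∀ᵐ ω ∂μ, Tendsto (fun n : ℕ => astar n * Nstar n ω) atTop (nhds (Y ω)) := by
    filter_upwards [haeY] with ω hω
    have hω' : Tendsto (fun n : ℕ => astar (n+1) * Nstar (n+1) ω) atTop (nhds (Y ω)) := hω
    exact (tendsto_add_atTop_iff_nat (f := fun m : ℕ => astar m * Nstar m ω) 1).mp hω'
  -- conclusion 2 : L¹ convergence
  have hc2 : Tendsto (fun n : ℕ => ∫ ω, |astar n * Nstar n ω - Y ω| ∂μ)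
      atTop (nhds 0) := by
    have h2 : Tendsto (fun n : ℕ => ∫ ω, |astar (n+1) * Nstar (n+1) ω - Y ω| ∂μ)
        atTop (nhds 0) := hL1'
    exact (tendsto_add_atTop_iff_nat
      (f := fun n : ℕ => ∫ ω, |astar n * Nstar n ω - Y ω| ∂μ) 1).mp h2
  -- conclusion 3 : a.e. convergence of the normalised sequence
  have hc3 : ∀ᵐ ω ∂μ, Tendsto (fun n : ℕ => Nstar n ω / (n:ℝ) ^ (1-r)) atTop
      (nhds (Y ω / G)) := by
    filter_upwards [hc1] with ω hω
    have hdiv := hω.div haT hGpos.ne'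
    refine Tendsto.congr' ?_ hdiv
    filter_upwards [eventually_ge_atTop 1] with k hk
    exact mul_div_mul_left _ _ (hapos k hk).ne'
  -- conclusion 4 : L¹ convergence of the normalised sequence
  have hc4 : Tendsto (fun n : ℕ =>
      ∫ ω, |Nstar n ω / (n:ℝ) ^ (1-r) - Y ω / G| ∂μ) atTop (nhds 0) := by
    set u : ℕ → ℝ := fun n => (astar n * (n:ℝ)^(1-r))⁻¹ with hu
    have huT : Tendsto u atTop (nhds G⁻¹) := haT.inv₀ hGpos.ne'
    have hIY : Integrable (fun ω => |Y ω|) μ := hYint.abs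
    have hbound : ∀ᶠ n in atTop, ∫ ω, |Nstar n ω / (n:ℝ)^(1-r) - Y ω / G| ∂μ
        ≤ u n * (∫ ω, |astar n * Nstar n ω - Y ω| ∂μ)
          + |u n - G⁻¹| * ∫ ω, |Y ω| ∂μ := by
      filter_upwards [eventually_ge_atTop 1] with n hn
      have ha := hapos n hn
      have hn' : (0:ℝ) < (n:ℝ) := by exact_mod_cast hn
      have hp : (0:ℝ) < (n:ℝ)^(1-r) := Real.rpow_pos_of_pos hn' _
      have hun : 0 < u n := inv_pos.mpr (mul_pos ha hp)
      have hpt : ∀ ω, |Nstar n ω / (n:ℝ)^(1-r) - Y ω / G|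
          ≤ u n * |astar n * Nstar n ω - Y ω| + |u n - G⁻¹| * |Y ω| := by
        intro ω
        have he : Nstar n ω / (n:ℝ)^(1-r)
            = (astar n * (n:ℝ)^(1-r))⁻¹ * (astar n * Nstar n ω) := by
          field_simp
        have he2 : Nstar n ω / (n:ℝ)^(1-r) - Y ω / G
            = u n * (astar n * Nstar n ω - Y ω) + (u n - G⁻¹) * Y ω := by
          rw [he]
          show (astar n * (n:ℝ)^(1-r))⁻¹ * (astar n * Nstar n ω) - Y ω / G
            = (astar n * (n:ℝ)^(1-r))⁻¹ * (astar n * Nstar n ω - Y ω)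
              + ((astar n * (n:ℝ)^(1-r))⁻¹ - G⁻¹) * Y ω
          field_simp
          ring
        rw [he2]
        calc |u n * (astar n * Nstar n ω - Y ω) + (u n - G⁻¹) * Y ω|
            ≤ |u n * (astar n * Nstar n ω - Y ω)| + |(u n - G⁻¹) * Y ω| :=
              abs_add_le _ _
          _ = u n * |astar n * Nstar n ω - Y ω| + |u n - G⁻¹| * |Y ω| := by
              rw [abs_mul, abs_mul, abs_of_nonneg hun.le]
      have hfn_int : Integrable (fun ω => astar n * Nstar n ω - Y ω) μ :=
        ((hNint n).const_mul _).sub hYint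
      have hLHSint : Integrable (fun ω => |Nstar n ω / (n:ℝ)^(1-r) - Y ω / G|) μ :=
        (((hNint n).div_const _).sub (hYint.div_const _)).abs
      have hR1 : Integrable (fun ω => u n * |astar n * Nstar n ω - Y ω|) μ :=
        hfn_int.abs.const_mul _
      have hR2 : Integrable (fun ω => |u n - G⁻¹| * |Y ω|) μ := hIY.const_mul _
      calc ∫ ω, |Nstar n ω / (n:ℝ)^(1-r) - Y ω / G| ∂μ
          ≤ ∫ ω, (u n * |astar n * Nstar n ω - Y ω| + |u n - G⁻¹| * |Y ω|) ∂μ :=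
            integral_mono hLHSint (hR1.add hR2) hpt
        _ = u n * (∫ ω, |astar n * Nstar n ω - Y ω| ∂μ)
            + |u n - G⁻¹| * ∫ ω, |Y ω| ∂μ := by
            rw [integral_add hR1 hR2, integral_const_mul, integral_const_mul]
    have hupper : Tendsto (fun n => u n * (∫ ω, |astar n * Nstar n ω - Y ω| ∂μ)
        + |u n - G⁻¹| * ∫ ω, |Y ω| ∂μ) atTop (nhds 0) := by
      have h1 : Tendsto (fun n => u n * (∫ ω, |astar n * Nstar n ω - Y ω| ∂μ))
          atTop (nhds (G⁻¹ * 0)) := huT.mul hc2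
      have h2 : Tendsto (fun n => |u n - G⁻¹|) atTop (nhds 0) := by
        have h3 := (huT.sub (tendsto_const_nhds (x := G⁻¹))).abs
        simpa using h3
      have h4 := h1.add (h2.mul_const (∫ ω, |Y ω| ∂μ))
      simpa using h4
    refine tendsto_of_tendsto_of_tendsto_of_le_of_le' tendsto_const_nhds hupper ?_ hbound
    filter_upwards with n
    exact integral_nonneg fun ω => abs_nonneg _
  exact ⟨Y, hYint, hc1, hc2, hc3, hc4⟩
end

section
/- As n → ∞, E[N*_n/n^{1-r}] = E[(n - N_n)/n^{1-r}] → 1/Γ(1-r). -/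
open MeasureTheory Filter

/-- Last assertion of Theorem 3.1: for the ERW with delays and full memory,
`E[N*_n / n^{1-r}] = E[(n - N_n)/n^{1-r}] → 1/Γ(1-r)` as `n → ∞`. -/
theorem expected_normalized_count_limit
    {Ω : Type*} [m0 : MeasurableSpace Ω] (μ : Measure Ω) [IsProbabilityMeasure μ]
    (𝓕 : Filtration ℕ m0) (r : ℝ) (hr0 : 0 < r) (hr1 : r < 1)
    (Istar : ℕ → Ω → ℝ)
    (h01 : ∀ n : ℕ, 1 ≤ n → ∀ ω, Istar n ω = 0 ∨ Istar n ω = 1)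
    (hadapt : ∀ n : ℕ, 1 ≤ n → StronglyMeasurable[𝓕 n] (Istar n))
    (hint : ∀ n : ℕ, 1 ≤ n → Integrable (Istar n) μ)
    (Nstar : ℕ → Ω → ℝ)
    (hN : ∀ n ω, Nstar n ω = ∑ k ∈ Finset.Icc 1 n, Istar k ω)
    (hI1 : ∫ ω, Istar 1 ω ∂μ = 1 - r)
    (hcond : ∀ n : ℕ, 1 ≤ n →
      (μ[Istar (n + 1)|𝓕 n]) =ᵐ[μ] fun ω => ((1 - r) / (n : ℝ)) * Nstar n ω)
    (N : ℕ → Ω → ℝ) (hNdef : ∀ n ω, N n ω = (n : ℝ) - Nstar n ω) :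
    Tendsto (fun n : ℕ => ∫ ω, Nstar n ω / (n : ℝ) ^ (1 - r) ∂μ) atTop
      (nhds (1 / Real.Gamma (1 - r))) ∧
    Tendsto (fun n : ℕ => ∫ ω, ((n : ℝ) - N n ω) / (n : ℝ) ^ (1 - r) ∂μ) atTop
      (nhds (1 / Real.Gamma (1 - r))) := by
  have hs : 0 < 1 - r := by linarith
  set s : ℝ := 1 - r with hs_def
  -- integrability of Nstar n
  have hNint : ∀ n : ℕ, Integrable (Nstar n) μ := by
    intro n
    have h : Integrable (fun ω => ∑ k ∈ Finset.Icc 1 n, Istar k ω) μ :=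
      integrable_finset_sum _ (fun k hk => hint k (Finset.mem_Icc.mp hk).1)
    exact h.congr (Filter.Eventually.of_forall fun ω => (hN n ω).symm)
  -- recursion for the expectations
  have hrec : ∀ n : ℕ, 1 ≤ n →
      ∫ ω, Nstar (n + 1) ω ∂μ = (((n : ℝ) + s) / n) * ∫ ω, Nstar n ω ∂μ := by
    intro n hn
    have hn0 : (n : ℝ) ≠ 0 := Nat.cast_ne_zero.mpr (by omega)
    have hIint : Integrable (Istar (n + 1)) μ := hint _ (by omega)
    have hEI : ∫ ω, Istar (n + 1) ω ∂μ = (s / n) * ∫ ω, Nstar n ω ∂μ := by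
      have h1 : ∫ ω, (μ[Istar (n + 1)|𝓕 n]) ω ∂μ = ∫ ω, Istar (n + 1) ω ∂μ :=
        integral_condExp (𝓕.le n)
      have h2 : ∫ ω, (μ[Istar (n + 1)|𝓕 n]) ω ∂μ
          = ∫ ω, (s / (n : ℝ)) * Nstar n ω ∂μ := integral_congr_ae (hcond n hn)
      rw [← h1, h2, integral_const_mul]
    have hsplit : ∀ ω, Nstar (n + 1) ω = Nstar n ω + Istar (n + 1) ω := by
      intro ω
      rw [hN, hN, Finset.sum_Icc_succ_top (by omega : 1 ≤ n + 1)]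
    have : ∫ ω, Nstar (n + 1) ω ∂μ
        = (∫ ω, Nstar n ω ∂μ) + ∫ ω, Istar (n + 1) ω ∂μ := by
      rw [← integral_add (hNint n) hIint]
      exact integral_congr_ae (Filter.Eventually.of_forall hsplit)
    rw [this, hEI]
    field_simp
  -- closed form
  have hclosed : ∀ n : ℕ,
      ∫ ω, Nstar (n + 1) ω ∂μ = (∏ j ∈ Finset.range (n + 1), (s + j)) / (Nat.factorial n : ℝ) := by
    intro n
    induction n with
    | zero =>
      have h1 : ∀ ω, Nstar 1 ω = Istar 1 ω := by
        intro ω; rw [hN]; simp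
      have : ∫ ω, Nstar 1 ω ∂μ = ∫ ω, Istar 1 ω ∂μ :=
        integral_congr_ae (Filter.Eventually.of_forall h1)
      rw [this, hI1]
      simp [hs_def]
    | succ n ih =>
      rw [hrec (n + 1) (by omega), ih]
      have hn1 : ((n : ℝ) + 1) ≠ 0 := by positivity
      have hf : (Nat.factorial n : ℝ) ≠ 0 := Nat.cast_ne_zero.mpr (Nat.factorial_ne_zero n)
      rw [Finset.prod_range_succ (fun j => s + (j : ℝ)) (n + 1), Nat.factorial_succ]
      push_cast
      field_simp
      ring
  -- the limit of the closed form, normalized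
  have hGpos : 0 < Real.Gamma s := Real.Gamma_pos_of_pos hs
  have hkey : Tendsto
      (fun n : ℕ => (∏ j ∈ Finset.range (n + 1), (s + j)) / (Nat.factorial n : ℝ) / ((n : ℝ) + 1) ^ s)
      atTop (nhds (1 / Real.Gamma s)) := by
    have hfrac : Tendsto (fun n : ℕ => ((n : ℝ) / ((n : ℝ) + 1)) ^ s) atTop (nhds 1) := by
      have h := (tendsto_natCast_div_add_atTop (1 : ℝ)).rpow_const (Or.inr hs.le)
      simpa using h
    have hdiv : Tendsto
        (fun n : ℕ => ((n : ℝ) / ((n : ℝ) + 1)) ^ s / Real.GammaSeq s n) atTop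
        (nhds (1 / Real.Gamma s)) :=
      hfrac.div (Real.GammaSeq_tendsto_Gamma s) hGpos.ne'
    refine hdiv.congr' ?_
    filter_upwards [eventually_ge_atTop 1] with n hn
    have hnpos : (0 : ℝ) < n := by exact_mod_cast hn
    have hnp : (0 : ℝ) < (n : ℝ) ^ s := Real.rpow_pos_of_pos hnpos s
    have hn1p : (0 : ℝ) < ((n : ℝ) + 1) ^ s := Real.rpow_pos_of_pos (by positivity) s
    have hf : (Nat.factorial n : ℝ) ≠ 0 := Nat.cast_ne_zero.mpr (Nat.factorial_ne_zero n)
    rw [Real.GammaSeq, Real.div_rpow hnpos.le (by positivity)]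
    field_simp
  -- conclude the first limit
  have hmain : Tendsto (fun n : ℕ => ∫ ω, Nstar n ω / (n : ℝ) ^ s ∂μ) atTop
      (nhds (1 / Real.Gamma s)) := by
    rw [← tendsto_add_atTop_iff_nat 1]
    refine hkey.congr ?_
    intro n
    rw [integral_div, hclosed n]
    push_cast
    ring_nf
  exact ⟨hmain, by
    refine hmain.congr ?_
    intro n
    refine integral_congr_ae (Filter.Eventually.of_forall fun ω => ?_)
    simp [hNdef]⟩
end
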